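/- arXiv:2406.19163 — 9 statements merged into one kernel-verified Lean document; each statement's English description precedes it below -/
import Mathlib

section
/- Let p be an odd prime and let HW(𝔽_{p²}) denote the quotient ring (HahnSeries ℚ (WittVector p (GaloisField p 2))) / (T − p), where T is the Hahn series single 1 1. Then HW(𝔽_{p²}) contains a primitive p-th root of unity: there exists ζ ∈ HW(𝔽_{p²}) with ζ^p = 1 and ζ ≠ 1. -/
set_option maxHeartbeats 1000000
set_option synthInstance.maxHeartbeats 1000000

noncomputable section

section Part1

open PowerSeries

theorem psXAdicMem {R : Type*} [CommRing R] (f : R⟦X⟧) (n : ℕ) :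
    f ∈ (Ideal.span {(X : R⟦X⟧)} ^ n • ⊤ : Ideal R⟦X⟧) ↔ ∀ d < n, coeff d f = 0 := by
  rw [← Ideal.one_eq_top, Ideal.smul_eq_mul, mul_one,
    Ideal.span_singleton_pow, Ideal.mem_span_singleton, X_pow_dvd_iff]

theorem psXAdic (R : Type*) [CommRing R] :
    IsAdicComplete (Ideal.span {(X : R⟦X⟧)}) R⟦X⟧ := by
  refine { haus' := ?_, prec' := ?_ }
  · intro f hf
    ext n
    have := hf (n + 1)
    rw [SModEq.zero, psXAdicMem] at this
    simpa using this n (by omega)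
  · intro f hf
    refine ⟨PowerSeries.mk fun n => coeff n (f (n + 1)), fun n => ?_⟩
    rw [SModEq.sub_mem, psXAdicMem]
    intro d hd
    have h1 := hf (show d + 1 ≤ n by omega)
    rw [SModEq.sub_mem, psXAdicMem] at h1
    have := h1 d (by omega)
    simp only [map_sub, coeff_mk] at this ⊢
    exact sub_eq_zero.mpr (sub_eq_zero.mp this).symm

end Part1

section Part2

open Polynomial

theorem binomIdent (p : ℕ) (hp : p.Prime) (hp3 : 3 ≤ p) :
    ∃ R : ℤ[X], (X + 1) ^ p = 1 + X ^ p + C (p : ℤ) * X + C (p : ℤ) * (X ^ 2 * R) ∧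
      R.natDegree ≤ p - 3 := by
  set F : ℤ[X] := (X + 1) ^ p - 1 - X ^ p - C (p : ℤ) * X with hF
  have hcoeff : ∀ i, F.coeff i = (p.choose i : ℤ) - (if 0 = i then 1 else 0)
      - (if p = i then 1 else 0) - (if 1 = i then (p : ℤ) else 0) := by
    intro i
    simp [hF, coeff_X_add_one_pow, coeff_one, coeff_X_pow, coeff_C_mul, coeff_X, eq_comm]
  have hdvd : C (p : ℤ) ∣ F := by
    rw [C_dvd_iff_dvd_coeff]
    intro i
    rw [hcoeff]
    rcases eq_or_ne i 0 with rfl | hi0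
    · simp [if_neg (show ¬ p = 0 by omega), if_neg (show ¬ 1 = 0 by omega)]
    rcases eq_or_ne i 1 with rfl | hi1
    · simp [Nat.choose_one_right, if_neg (show ¬ 0 = 1 by omega),
        if_neg (show ¬ p = 1 by omega)]
    rcases eq_or_ne p i with hip | hip
    · subst hip
      simp [Nat.choose_self, if_neg (show ¬ 0 = p by omega), if_neg (show ¬ 1 = p by omega)]
    rcases Nat.lt_or_ge i p with h | h
    · have hd : p ∣ p.choose i := hp.dvd_choose_self hi0 h
      simp only [if_neg (show ¬ 0 = i by omega), if_neg hip,
        if_neg (show ¬ 1 = i by omega), sub_zero]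
      exact_mod_cast hd
    · have hgt : p < i := by omega
      simp [Nat.choose_eq_zero_of_lt hgt, if_neg (show ¬ 0 = i by omega),
        if_neg hip, if_neg (show ¬ 1 = i by omega)]
  obtain ⟨F₁, hF₁⟩ := hdvd
  have hpne : (p : ℤ) ≠ 0 := by exact_mod_cast hp.ne_zero
  have hX2 : (X : ℤ[X]) ^ 2 ∣ F₁ := by
    rw [X_pow_dvd_iff]
    intro d hd
    have h0 : F.coeff d = (p : ℤ) * F₁.coeff d := by rw [hF₁, coeff_C_mul]
    have hFd : F.coeff d = 0 := by
      interval_cases d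
      · rw [hcoeff]; simp [if_neg (by omega : ¬ p = 0), if_neg (by omega : ¬ 1 = 0)]
      · rw [hcoeff]
        simp [Nat.choose_one_right, if_neg (by omega : ¬ 0 = 1), if_neg (by omega : ¬ p = 1)]
    have hz : (p : ℤ) * F₁.coeff d = 0 := by rw [← h0, hFd]
    exact (mul_eq_zero.mp hz).resolve_left hpne
  obtain ⟨R, hR⟩ := hX2
  refine ⟨R, ?_, ?_⟩
  · have : F = C (p : ℤ) * (X ^ 2 * R) := by rw [hF₁, hR]
    rw [hF] at this
    linear_combination this
  · rcases eq_or_ne R 0 with rfl | hR0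
    · simp
    · have hFdeg : F.natDegree ≤ p - 1 := by
        apply natDegree_le_iff_coeff_eq_zero.mpr
        intro m hm
        rw [hcoeff]
        rcases eq_or_ne p m with rfl | hpm
        · simp [Nat.choose_self, if_neg (by omega : ¬ 0 = p), if_neg (by omega : ¬ 1 = p)]
        · have : p < m := by omega
          simp [Nat.choose_eq_zero_of_lt this, if_neg (by omega : ¬ 0 = m),
            if_neg hpm, if_neg (by omega : ¬ 1 = m)]
      have hFeq : F = C (p : ℤ) * (X ^ 2 * R) := by rw [hF₁, hR]
      have hXR : (X : ℤ[X]) ^ 2 * R ≠ 0 := mul_ne_zero (pow_ne_zero _ X_ne_zero) hR0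
      have h1 : F.natDegree = 2 + R.natDegree := by
        rw [hFeq, natDegree_mul (by simpa using hpne) hXR, natDegree_C,
          natDegree_mul (pow_ne_zero _ X_ne_zero) hR0, natDegree_X_pow]
        omega
      omega

end Part2

section Part3

open WittVector

theorem fieldRoot (p : ℕ) [Fact p.Prime] (hp : Odd p) :
    ∃ c : GaloisField p 2, c ^ (p - 1) = -1 := by
  obtain ⟨m, hm⟩ := hp
  have hp3 : 3 ≤ p := by
    have := (Fact.out : p.Prime).two_le
    rcases Nat.lt_or_ge p 3 with h | h
    · interval_cases p <;> omega
    · exact h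
  have : Finite (GaloisField p 2) := inferInstance
  haveI : DecidableEq (GaloisField p 2) := Classical.decEq _
  haveI : Fintype (GaloisField p 2) := Fintype.ofFinite _
  have hcard : Fintype.card (GaloisField p 2) = p ^ 2 := by
    rw [← Nat.card_eq_fintype_card]; exact GaloisField.card p 2 (by omega)
  have hp2 : p ^ 2 = 4 * m ^ 2 + 4 * m + 1 := by rw [hm]; ring
  have hm1 : 1 ≤ m := by omega
  obtain ⟨g, hg⟩ := IsCyclic.exists_generator (α := (GaloisField p 2)ˣ)
  have horder : orderOf g = p ^ 2 - 1 := by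
    rw [orderOf_eq_card_of_forall_mem_zpowers hg, Nat.card_eq_fintype_card, Fintype.card_units, hcard]
  -- the element z = g ^ ((p^2-1)/2) is -1
  have hm2 : p ^ 2 - 1 = 2 * (2 * m ^ 2 + 2 * m) := by omega
  have hhalf : (g : GaloisField p 2) ^ (2 * m ^ 2 + 2 * m) = -1 := by
    set z : (GaloisField p 2)ˣ := g ^ (2 * m ^ 2 + 2 * m) with hz
    have hsq : z ^ 2 = 1 := by
      rw [hz, ← pow_mul, mul_comm, ← hm2, ← horder, pow_orderOf_eq_one]
    have hne : z ≠ 1 := by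
      intro h
      have := orderOf_dvd_of_pow_eq_one (hz ▸ h)
      rw [horder] at this
      have hle := Nat.le_of_dvd (by nlinarith) this
      omega
    have : ((z : GaloisField p 2) - 1) * ((z : GaloisField p 2) + 1) = 0 := by
      have : ((z ^ 2 : (GaloisField p 2)ˣ) : GaloisField p 2) = 1 := by rw [hsq]; simp
      push_cast at this
      ring_nf
      ring_nf at this
      linear_combination this
    rcases mul_eq_zero.mp this with h | h
    · exfalso; exact hne (Units.ext (by push_cast; linear_combination h))
    · have : (z : GaloisField p 2) = -1 := by linear_combination h
      rw [hz] at this; push_cast at this; exact this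
  refine ⟨(g : GaloisField p 2) ^ (m + 1), ?_⟩
  rw [← pow_mul]
  have : (m + 1) * (p - 1) = 2 * m ^ 2 + 2 * m := by
    have : p - 1 = 2 * m := by omega
    rw [this]; ring
  rw [this, hhalf]

theorem wittRoot (p : ℕ) [Fact p.Prime] (hp : Odd p) :
    ∃ a : WittVector p (GaloisField p 2), a ^ (p - 1) = -1 := by
  obtain ⟨c, hc⟩ := fieldRoot p hp
  refine ⟨teichmuller p c, ?_⟩
  have h1 : teichmuller p c ^ (p - 1) = teichmuller p (c ^ (p - 1)) := by
    rw [map_pow]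
  rw [h1, hc]
  -- teichmuller p (-1) = -1
  have hsq : teichmuller p (-1 : GaloisField p 2) * teichmuller p (-1 : GaloisField p 2) = 1 := by
    rw [← map_mul]; norm_num
  have hfac : (teichmuller p (-1 : GaloisField p 2) - 1) *
      (teichmuller p (-1 : GaloisField p 2) + 1) = 0 := by ring_nf; linear_combination hsq
  rcases mul_eq_zero.mp hfac with h | h
  · exfalso
    have hz : teichmuller p (-1 : GaloisField p 2) = 1 := by linear_combination h
    have hco := congrArg (fun x : WittVector p (GaloisField p 2) => x.coeff 0) hz
    simp only [teichmuller_coeff_zero, one_coeff_zero] at hco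
    have hp3 : 3 ≤ p := by
      obtain ⟨m, hm⟩ := hp
      have := (Fact.out : p.Prime).two_le
      omega
    haveI : Fact (2 < p) := ⟨by omega⟩
    exact CharP.neg_one_ne_one (GaloisField p 2) p hco
  · linear_combination h

end Part3

/-- The ideal `(T - p)` of `HahnSeries ℚ (WittVector p 𝔽_{p²})`, where `T = single 1 1`. -/
abbrev HWp2ideal (p : ℕ) [Fact p.Prime] :
    Ideal (HahnSeries ℚ (WittVector p (GaloisField p 2))) :=
  Ideal.span {HahnSeries.single (1 : ℚ) (1 : WittVector p (GaloisField p 2)) -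
    (p : HahnSeries ℚ (WittVector p (GaloisField p 2)))}

/-- The field of Hahn-Witt series `HW(𝔽_{p²})`. -/
abbrev HWp2 (p : ℕ) [Fact p.Prime] : Type :=
  HahnSeries ℚ (WittVector p (GaloisField p 2)) ⧸ HWp2ideal p

/-- For `p` an odd prime, `HW(𝔽_{p²})` contains a primitive `p`-th root of unity. -/
theorem primitive_p_th_root_of_unity_in_HWp2 (p : ℕ) [Fact p.Prime] (hp : Odd p) :
    ∃ ζ : HWp2 p, ζ ^ p = 1 ∧ ζ ≠ 1 := by
  classical
  have hprime : p.Prime := Fact.out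
  have hp3 : 3 ≤ p := by
    obtain ⟨m, hm⟩ := hp; have := hprime.two_le; omega
  set K := GaloisField p 2 with hK
  set Wk := WittVector p K with hWk
  set B := PowerSeries Wk with hB
  set e := p - 1 with he
  have hpe : p = e + 1 := by omega
  have he2 : 2 ≤ e := by omega
  -- the (p-1)-st root of -1 in the Witt vectors
  obtain ⟨a, ha⟩ := wittRoot p hp
  have haunit : IsUnit a := by
    apply IsUnit.of_mul_eq_one (-(a ^ (e - 1)))
    have : a * a ^ (e - 1) = a ^ e := by
      rw [← pow_succ']; congr 1; omega
    rw [mul_neg, this, ha]; ring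
  have ha0 : a ≠ 0 := haunit.ne_zero
  -- the binomial identity over ℤ
  obtain ⟨Rp, hRid, hRdeg⟩ := binomIdent p hprime hp3
  -- set up the power series ring and Hensel's lemma
  set u : B := PowerSeries.X with hu
  set I : Ideal B := Ideal.span {u} with hI
  haveI : IsAdicComplete I B := psXAdic Wk
  have hhens : HenselianRing B I := inferInstance
  set b : B := PowerSeries.C a * u with hb
  set QT : Polynomial B := (Rp.map (Int.castRingHom B)).comp
    (Polynomial.C b * Polynomial.X) with hQT
  set G : Polynomial B := Polynomial.X ^ p -
    (Polynomial.C b * Polynomial.X ^ 2 * QT + Polynomial.X) with hG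
  -- G is monic
  have hGmonic : G.Monic := by
    have h1 : G = Polynomial.X ^ p +
        (-(Polynomial.C b * Polynomial.X ^ 2 * QT + Polynomial.X)) := by rw [hG]; ring
    rw [h1]
    apply Polynomial.monic_X_pow_add
    have hd1 : (Polynomial.C b * Polynomial.X ^ 2 * QT).natDegree ≤ p - 1 := by
      apply le_trans (Polynomial.natDegree_mul_le)
      have h2 : (Polynomial.C b * Polynomial.X ^ 2 : Polynomial B).natDegree ≤ 2 :=
        le_trans Polynomial.natDegree_mul_le
          (by simp [Polynomial.natDegree_C, Polynomial.natDegree_X_pow])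
      have h3 : QT.natDegree ≤ p - 3 := by
        rw [hQT]
        apply le_trans (Polynomial.natDegree_comp_le)
        have : (Rp.map (Int.castRingHom B)).natDegree ≤ p - 3 :=
          le_trans Polynomial.natDegree_map_le hRdeg
        have h4 : (Polynomial.C b * Polynomial.X : Polynomial B).natDegree ≤ 1 :=
          le_trans Polynomial.natDegree_mul_le
            (by simp [Polynomial.natDegree_C, Polynomial.natDegree_X])
        calc (Rp.map (Int.castRingHom B)).natDegree *
              (Polynomial.C b * Polynomial.X : Polynomial B).natDegree
            ≤ (p - 3) * 1 := Nat.mul_le_mul this h4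
          _ = p - 3 := by omega
      omega
    have hd2 : (-(Polynomial.C b * Polynomial.X ^ 2 * QT + Polynomial.X)).natDegree ≤ p - 1 := by
      rw [Polynomial.natDegree_neg]
      apply le_trans (Polynomial.natDegree_add_le _ _)
      simp only [Polynomial.natDegree_X]
      omega
    calc (-(Polynomial.C b * Polynomial.X ^ 2 * QT + Polynomial.X)).degree
        ≤ ((-(Polynomial.C b * Polynomial.X ^ 2 * QT + Polynomial.X)).natDegree : WithBot ℕ) :=
          Polynomial.degree_le_natDegree
      _ ≤ ((p - 1 : ℕ) : WithBot ℕ) := by exact_mod_cast hd2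
      _ < (p : WithBot ℕ) := by exact_mod_cast (by omega : p - 1 < p)
  -- G has an approximate root 1 mod I
  have hGe : G.eval 1 ∈ I := by
    have : G.eval 1 = u * (-(PowerSeries.C a * (QT.eval 1))) := by
      rw [hG]; simp only [Polynomial.eval_sub, Polynomial.eval_pow, Polynomial.eval_add,
        Polynomial.eval_mul, Polynomial.eval_C, Polynomial.eval_X, one_pow, hb]
      ring
    rw [this, hI]
    exact Ideal.mem_span_singleton.mpr (Dvd.intro _ rfl)
  have hGd : IsUnit (Ideal.Quotient.mk I (G.derivative.eval 1)) := by
    have hder : G.derivative.eval 1 = ((p : B) - 1) -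
        u * (PowerSeries.C a * ((Polynomial.X ^ 2 * QT).derivative.eval 1)) := by
      rw [hG]
      have : Polynomial.C b * Polynomial.X ^ 2 * QT = Polynomial.C b * (Polynomial.X ^ 2 * QT) := by
        ring
      rw [this]
      simp only [Polynomial.derivative_sub, Polynomial.derivative_add, Polynomial.derivative_C_mul,
        Polynomial.derivative_X_pow, Polynomial.derivative_X, Polynomial.eval_sub,
        Polynomial.eval_add, Polynomial.eval_mul, Polynomial.eval_C, Polynomial.eval_one,
        Polynomial.eval_pow, Polynomial.eval_X, Polynomial.eval_natCast, one_pow, hb]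
      push_cast
      ring
    have hmk : Ideal.Quotient.mk I (G.derivative.eval 1) = Ideal.Quotient.mk I ((p : B) - 1) := by
      rw [Ideal.Quotient.mk_eq_mk_iff_sub_mem, hder]
      have : ((p : B) - 1) - u * (PowerSeries.C a *
          ((Polynomial.X ^ 2 * QT).derivative.eval 1)) - ((p : B) - 1) =
          u * (-(PowerSeries.C a * ((Polynomial.X ^ 2 * QT).derivative.eval 1))) := by ring
      rw [this, hI]
      exact Ideal.mem_span_singleton.mpr (Dvd.intro _ rfl)
    rw [hmk]
    apply RingHom.isUnit_map
    -- (p : B) - 1 is a unit in B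
    have hcc : PowerSeries.constantCoeff ((p : B) - 1) = (p : Wk) - 1 := by
      rw [map_sub, map_one]; congr 1
    rw [PowerSeries.isUnit_iff_constantCoeff, hcc]
    apply WittVector.isUnit_of_coeff_zero_ne_zero
    have : ((p : Wk) - 1).coeff 0 = -1 := by
      have h1 : (WittVector.constantCoeff : Wk →+* K) ((p : Wk) - 1) = -1 := by
        rw [map_sub, map_natCast, map_one]
        rw [hK] at *
        simp [CharP.cast_eq_zero (GaloisField p 2) p]
      simpa [WittVector.constantCoeff_apply] using h1
    rw [this]
    exact neg_ne_zero.mpr one_ne_zero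
  -- apply Hensel's lemma
  obtain ⟨t₀, ht₀root, ht₀mem⟩ := hhens.is_henselian G hGmonic 1 hGe hGd
  -- facts about t₀
  have ht₀cc : PowerSeries.constantCoeff t₀ = 1 := by
    rw [hI, Ideal.mem_span_singleton, hu, PowerSeries.X_dvd_iff, map_sub, map_one] at ht₀mem
    have := sub_eq_zero.mp ht₀mem
    simpa using this
  -- the root of the equation
  set r : B := Polynomial.eval₂ (Int.castRingHom B) (b * t₀) Rp with hr
  have hroot : t₀ ^ p = b * t₀ ^ 2 * r + t₀ := by
    have h0 := ht₀root
    rw [hG] at h0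
    simp only [Polynomial.IsRoot, Polynomial.eval_sub, Polynomial.eval_pow, Polynomial.eval_add,
      Polynomial.eval_mul, Polynomial.eval_C, Polynomial.eval_X, hQT, Polynomial.eval_comp,
      Polynomial.eval_map] at h0
    rw [sub_eq_zero] at h0
    rw [h0, ← hr]
  have hbin : (b * t₀ + 1) ^ p = 1 + (b * t₀) ^ p + (p : B) * (b * t₀)
      + (p : B) * ((b * t₀) ^ 2 * r) := by
    have hr' : (Polynomial.aeval (b * t₀)) Rp = r := by
      rw [hr, Polynomial.aeval_def]
      congr 1
      exact RingHom.ext_int _ _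
    have h := congrArg (Polynomial.aeval (b * t₀) : Polynomial ℤ →ₐ[ℤ] B) hRid
    simp only [map_pow, map_add, map_mul, map_one, Polynomial.aeval_X, Polynomial.aeval_C,
      algebraMap_int_eq, map_natCast] at h
    rw [hr'] at h
    exact h
  -- powers of b and u
  have hap : a ^ p = -a := by
    have h1 : a ^ p = a ^ e * a := by
      rw [← pow_succ]
      congr 1
      try omega
    rw [h1, ha]; ring
  have hCap : (PowerSeries.C a) ^ p = -(PowerSeries.C a) := by
    rw [← map_pow, hap, map_neg]
  have hup : u ^ p = u ^ e * u := by
    rw [← pow_succ]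
    congr 1
    try omega
  have hX : (b * t₀) ^ p = (PowerSeries.C a) ^ p * u ^ p * t₀ ^ p := by
    rw [hb, mul_pow, mul_pow]
  -- the key algebraic identity
  have key : (1 + b * t₀) ^ p - 1 =
      ((p : B) - u ^ e) * (b * t₀ + (b * t₀) ^ 2 * r) := by
    have h1 : (1 + b * t₀) ^ p = (b * t₀ + 1) ^ p := by rw [add_comm]
    rw [h1, hbin, hX, hroot, hCap, hup, hb]
    ring
  -- now push to the Hahn series ring
  set ε : ℚ := (e : ℚ)⁻¹ with hε
  have hεpos : 0 < ε := by
    rw [hε]; positivity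
  set g : ℕ →+ ℚ := AddMonoidHom.mk' (fun n => (n : ℚ) * ε) (by intros; push_cast; ring) with hg
  have hgi : Function.Injective g := by
    intro m n h
    simp only [hg, AddMonoidHom.mk'_apply] at h
    have := mul_right_cancel₀ (ne_of_gt hεpos) h
    exact_mod_cast this
  have hgmono : ∀ m n : ℕ, g m ≤ g n ↔ m ≤ n := by
    intro m n
    simp only [hg, AddMonoidHom.mk'_apply]
    rw [mul_le_mul_iff_of_pos_right hεpos]
    exact_mod_cast Iff.rfl
  set emb : HahnSeries ℕ Wk →+* HahnSeries ℚ Wk :=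
    HahnSeries.embDomainRingHom g hgi hgmono with hemb
  set ops : B →+* HahnSeries ℕ Wk := HahnSeries.ofPowerSeries ℕ Wk with hops
  set φ : B →+* HahnSeries ℚ Wk := emb.comp ops with hφ
  -- φ (u ^ e) = single 1 1
  have hge1 : g e = 1 := by
    simp only [hg, AddMonoidHom.mk'_apply, hε]
    rw [mul_inv_cancel₀]
    exact_mod_cast (by omega : e ≠ 0)
  have hφue : φ (u ^ e) = HahnSeries.single (1 : ℚ) (1 : Wk) := by
    rw [hφ, RingHom.comp_apply, hops, hu, HahnSeries.ofPowerSeries_X_pow]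
    rw [hemb, HahnSeries.embDomainRingHom_apply]
    rw [show ((e : ℕ) : ℕ) = e from rfl]
    rw [HahnSeries.embDomain_single]
    simp only [RelEmbedding.coe_mk, Function.Embedding.coeFn_mk, Nat.cast_id]
    rw [hge1]
  -- ζ
  set mk := Ideal.Quotient.mk (HWp2ideal p) with hmk
  refine ⟨mk (φ (1 + b * t₀)), ?_, ?_⟩
  · -- ζ ^ p = 1
    have h1 : mk (φ (1 + b * t₀)) ^ p - 1 = mk (φ ((1 + b * t₀) ^ p - 1)) := by
      rw [map_sub, map_pow, map_sub, map_pow, map_one, map_one]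
    have h2 : φ ((1 + b * t₀) ^ p - 1) =
        -(HahnSeries.single (1 : ℚ) (1 : Wk) - (p : HahnSeries ℚ Wk)) *
          φ (b * t₀ + (b * t₀) ^ 2 * r) := by
      rw [key, map_mul, map_sub, map_natCast, hφue]
      ring
    have h3 : mk (φ ((1 + b * t₀) ^ p - 1)) = 0 := by
      rw [h2, map_mul, map_neg]
      have : mk (HahnSeries.single (1 : ℚ) (1 : Wk) - (p : HahnSeries ℚ Wk)) = 0 := by
        rw [hmk, Ideal.Quotient.eq_zero_iff_mem]
        exact Ideal.subset_span rfl
      rw [this]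
      ring
    have := h1.trans h3
    linear_combination this
  · -- ζ ≠ 1
    intro hζ
    -- then φ (b * t₀) lies in the ideal
    have hmem : φ (b * t₀) ∈ HWp2ideal p := by
      have h1 : mk (φ (1 + b * t₀)) - 1 = mk (φ (b * t₀)) := by
        rw [map_add, map_add, map_one, map_one]
        ring
      rw [hζ, sub_self] at h1
      rw [hmk] at h1
      rw [← Ideal.Quotient.eq_zero_iff_mem, ← h1]
    obtain ⟨y, hy⟩ := Ideal.mem_span_singleton'.mp hmem
    -- basic coefficient facts about emb
    have hembc : ∀ (w : HahnSeries ℕ Wk) (n : ℕ), (emb w).coeff (g n) = w.coeff n := by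
      intro w n
      rw [hemb, HahnSeries.embDomainRingHom_apply]
      exact HahnSeries.embDomain_coeff
    have hembnz : ∀ w : HahnSeries ℕ Wk, w ≠ 0 → emb w ≠ 0 := by
      intro w hw h
      apply hw
      rw [hemb, HahnSeries.embDomainRingHom_apply] at h
      have := HahnSeries.embDomain_injective (R := Wk)
        (f := (⟨⟨⇑g, hgi⟩, hgmono _ _⟩ : ℕ ↪o ℚ))
      apply this
      rw [h, HahnSeries.embDomain_zero]
    have hembord : ∀ w : HahnSeries ℕ Wk, w ≠ 0 → (emb w).order = g w.order := by
      intro w hw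
      apply le_antisymm
      · apply HahnSeries.order_le_of_coeff_ne_zero
        rw [hembc w w.order]
        exact (HahnSeries.coeff_order_eq_zero.not.mpr hw)
      · have hne := hembnz w hw
        have h1 := (HahnSeries.coeff_order_eq_zero.not.mpr hne)
        by_contra hlt
        push_neg at hlt
        have : (emb w).coeff (emb w).order = 0 := by
          rw [hemb, HahnSeries.embDomainRingHom_apply]
          apply HahnSeries.embDomain_notin_image_support
          rintro ⟨n, hn, hgn⟩
          have hnord : w.order ≤ n := HahnSeries.order_le_of_coeff_ne_zero hn
          have hmono : g w.order ≤ g n := (hgmono _ _).mpr hnord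
          simp only [RelEmbedding.coe_mk, Function.Embedding.coeFn_mk] at hgn
          rw [hgn] at hmono
          exact absurd hmono (not_le.mpr hlt)
        exact h1 this
    -- the element w := ops (b * t₀) in HahnSeries ℕ Wk
    set s : B := PowerSeries.C a * t₀ with hs
    have hsx : b * t₀ = u * s := by rw [hb, hs]; ring
    have hscc : PowerSeries.constantCoeff s = a := by
      rw [hs, map_mul, ht₀cc, PowerSeries.constantCoeff_C, mul_one]
    have hs0 : s ≠ 0 := by
      intro h; rw [h] at hscc; simp at hscc; exact ha0 hscc.symm
    have hopsscoeff : (ops s).coeff 0 = a := by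
      rw [hops]
      have h1 := HahnSeries.ofPowerSeries_apply_coeff (Γ := ℕ) s 0
      simp only [Nat.cast_id] at h1
      rw [h1, PowerSeries.coeff_zero_eq_constantCoeff_apply]
      exact hscc
    have hopss0 : ops s ≠ 0 := by
      intro h
      have := congrArg (fun z : HahnSeries ℕ Wk => z.coeff 0) h
      simp only [HahnSeries.coeff_zero] at this
      rw [hopsscoeff] at this
      exact ha0 this
    have hopssord : (ops s).order = 0 := by
      apply Nat.eq_zero_of_le_zero
      apply HahnSeries.order_le_of_coeff_ne_zero
      rw [hopsscoeff]; exact ha0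
    set w : HahnSeries ℕ Wk := ops (b * t₀) with hw
    have hwprod : w = HahnSeries.single (1 : ℕ) (1 : Wk) * ops s := by
      rw [hw, hsx, map_mul, hops, hu, HahnSeries.ofPowerSeries_X]
    have hsingle0 : HahnSeries.single (1 : ℕ) (1 : Wk) ≠ 0 :=
      HahnSeries.single_ne_zero one_ne_zero
    have hw0 : w ≠ 0 := by
      rw [hwprod]
      exact mul_ne_zero hsingle0 hopss0
    have hword : w.order = 1 := by
      rw [hwprod, HahnSeries.order_mul hsingle0 hopss0, hopssord,
        HahnSeries.order_single one_ne_zero]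
    have hwlead : w.coeff 1 = a := by
      have h1 := HahnSeries.coeff_mul_order_add_order (HahnSeries.single (1 : ℕ) (1 : Wk)) (ops s)
      rw [HahnSeries.order_single one_ne_zero, hopssord] at h1
      rw [hwprod]
      have h2 : (1 : ℕ) + 0 = 1 := rfl
      rw [← h2]
      rw [h1]
      rw [HahnSeries.leadingCoeff_of_single]
      rw [HahnSeries.leadingCoeff_eq, hopssord, hopsscoeff, one_mul]
    -- φ (b * t₀) = emb w, its order is ε and leading coeff is a
    have hφx : φ (b * t₀) = emb w := by rw [hφ, RingHom.comp_apply, hw, hops]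
    have hφxord : (φ (b * t₀)).order = ε := by
      rw [hφx, hembord w hw0, hword]
      simp only [hg, AddMonoidHom.mk'_apply, Nat.cast_one, one_mul]
    have hφxcoeff : (φ (b * t₀)).coeff ε = a := by
      have := hembc w 1
      rw [hwlead] at this
      rw [hφx]
      have hg1 : g 1 = ε := by simp only [hg, AddMonoidHom.mk'_apply, Nat.cast_one, one_mul]
      rw [← hg1]
      exact this
    have hφx0 : φ (b * t₀) ≠ 0 := by
      intro h
      rw [h, HahnSeries.coeff_zero] at hφxcoeff
      exact ha0 hφxcoeff.symm
    -- the generator T - p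
    set z : HahnSeries ℚ Wk := HahnSeries.single (1 : ℚ) (1 : Wk) - (p : HahnSeries ℚ Wk)
      with hz
    have hpW : (p : Wk) ≠ 0 := WittVector.p_nonzero p K
    have hpcast : (p : HahnSeries ℚ Wk) = HahnSeries.single (0 : ℚ) (p : Wk) := by
      rw [← (map_natCast (HahnSeries.C : Wk →+* HahnSeries ℚ Wk) p), HahnSeries.C_apply]
    have hzc0 : z.coeff 0 = -(p : Wk) := by
      rw [hz, HahnSeries.coeff_sub, hpcast, HahnSeries.coeff_single_same,
        HahnSeries.coeff_single_of_ne (by norm_num : (0 : ℚ) ≠ 1), zero_sub]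
    have hzcq : ∀ q : ℚ, q ≠ 0 → q ≠ 1 → z.coeff q = 0 := by
      intro q h0 h1
      rw [hz, HahnSeries.coeff_sub, hpcast, HahnSeries.coeff_single_of_ne h1,
        HahnSeries.coeff_single_of_ne h0, sub_zero]
    have hz0 : z ≠ 0 := by
      intro h
      have := congrArg (fun x : HahnSeries ℚ Wk => x.coeff 0) h
      simp only [HahnSeries.coeff_zero] at this
      rw [hzc0] at this
      exact hpW (neg_eq_zero.mp this)
    have hzord : z.order = 0 := by
      have hle : z.order ≤ 0 := by
        apply HahnSeries.order_le_of_coeff_ne_zero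
        rw [hzc0]
        exact neg_ne_zero.mpr hpW
      rcases eq_or_lt_of_le hle with h | h
      · exact h
      · exfalso
        have h1 := (HahnSeries.coeff_order_eq_zero.not.mpr hz0)
        rw [hzcq z.order (by linarith) (by linarith)] at h1
        exact h1 rfl
    have hzlead : z.leadingCoeff = -(p : Wk) := by
      rw [HahnSeries.leadingCoeff_eq, hzord, hzc0]
    have hyz : y * z = φ (b * t₀) := by rw [hz]; exact hy
    -- y ≠ 0
    have hy0 : y ≠ 0 := by
      intro h
      rw [h, zero_mul] at hyz
      exact hφx0 hyz.symm
    -- order comparison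
    have hordeq : y.order + z.order = ε := by
      rw [← HahnSeries.order_mul hy0 hz0, hyz, hφxord]
    have hyord : y.order = ε := by rw [hzord, add_zero] at hordeq; exact hordeq
    have hcoeffeq := HahnSeries.coeff_mul_order_add_order y z
    rw [hordeq, hyz, hφxcoeff, hzlead] at hcoeffeq
    -- a = y.leadingCoeff * (-(p : Wk)) gives that p is a unit, contradiction
    have : IsUnit (p : Wk) := by
      have h1 : (-y.leadingCoeff) * (p : Wk) = a := by linear_combination -hcoeffeq
      exact isUnit_of_mul_isUnit_right (h1.symm ▸ haunit)
    exact (WittVector.irreducible p).not_isUnit this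

end
end

section
/- Let p be a prime, k = AlgebraicClosure (ZMod p), and let HW(k̄) denote the quotient ring (HahnSeries ℚ (WittVector p k)) / (T − p), where T is the Hahn series single 1 1. Let φ : HW(k̄) → HW(k̄) be the ring endomorphism induced by applying WittVector.map of the Frobenius x ↦ x^p of k to each Hahn-series coefficient, and let ι : (HahnSeries ℚ (WittVector p (ZMod p))) / (T − p) → HW(k̄) be the ring homomorphism induced by applying WittVector.map of the inclusion ZMod p → k to each coefficient. Then for x ∈ HW(k̄), one has φ(x) = x if and only if x lies in the image of ι; i.e., the fixed subfield of φ in HW(k̄) is exactly HW(𝔽_p). -/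
noncomputable section

/-- The algebraic closure of `𝔽_p`. -/
abbrev Kbar (p : ℕ) [Fact p.Prime] : Type := AlgebraicClosure (ZMod p)

/-- The ideal `(T - p)` of `HahnSeries ℚ (WittVector p (Kbar p))`, where `T = single 1 1`. -/
abbrev HWideal (p : ℕ) [Fact p.Prime] : Ideal (HahnSeries ℚ (WittVector p (Kbar p))) :=
  Ideal.span {HahnSeries.single (1 : ℚ) (1 : WittVector p (Kbar p)) -
    (p : HahnSeries ℚ (WittVector p (Kbar p)))}

/-- The field of Hahn-Witt series `HW(𝔽̄_p)`. -/
abbrev HW (p : ℕ) [Fact p.Prime] : Type :=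
  HahnSeries ℚ (WittVector p (Kbar p)) ⧸ HWideal p

/-- The ideal `(T - p)` of `HahnSeries ℚ (WittVector p (ZMod p))`, where `T = single 1 1`. -/
abbrev HWpideal (p : ℕ) [Fact p.Prime] : Ideal (HahnSeries ℚ (WittVector p (ZMod p))) :=
  Ideal.span {HahnSeries.single (1 : ℚ) (1 : WittVector p (ZMod p)) -
    (p : HahnSeries ℚ (WittVector p (ZMod p)))}

/-- The field of Hahn-Witt series `HW(𝔽_p)`. -/
abbrev HWp (p : ℕ) [Fact p.Prime] : Type :=
  HahnSeries ℚ (WittVector p (ZMod p)) ⧸ HWpideal p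




open Polynomial in
lemma HWaux.exists_AS_root (p : ℕ) [Fact p.Prime] (c : Kbar p) :
    ∃ t : Kbar p, t ^ p - t + c = 0 := by
  have hp1 : 1 < p := (Fact.out : p.Prime).one_lt
  have h1 : (C c - X : (Kbar p)[X]).degree < (X ^ p : (Kbar p)[X]).degree := by
    refine lt_of_le_of_lt (degree_sub_le _ _) ?_
    rw [degree_X_pow, degree_X]
    refine max_lt (degree_C_le.trans_lt ?_) ?_
    · exact_mod_cast (Fact.out : p.Prime).pos
    · exact_mod_cast hp1
  have hdeg : (X ^ p - X + C c : (Kbar p)[X]).degree ≠ 0 := by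
    have he : (X ^ p - X + C c : (Kbar p)[X]) = X ^ p + (C c - X) := by ring
    rw [he, degree_add_eq_left_of_degree_lt h1, degree_X_pow]
    exact_mod_cast (Fact.out : p.Prime).pos.ne'
  obtain ⟨t, ht⟩ := IsAlgClosed.exists_root (X ^ p - X + C c : (Kbar p)[X]) hdeg
  refine ⟨t, ?_⟩
  simpa only [IsRoot.def, eval_add, eval_sub, eval_pow, eval_X, eval_C] using ht

open Polynomial in
lemma HWaux.scalar_fixed (p : ℕ) [Fact p.Prime] (x : Kbar p) (hx : x ^ p = x) :
    ∃ a : ZMod p, algebraMap (ZMod p) (Kbar p) a = x := by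
  have hp1 : 1 < p := (Fact.out : p.Prime).one_lt
  have hcard : Fintype.card (ZMod p) = p := ZMod.card p
  have hq0 : (X ^ p - X : (ZMod p)[X]) ≠ 0 := FiniteField.X_pow_card_sub_X_ne_zero _ hp1
  have hroots : (X ^ p - X : (ZMod p)[X]).roots = Finset.univ.val := by
    have := FiniteField.roots_X_pow_card_sub_X (ZMod p)
    rwa [hcard] at this
  have hsplits : (X ^ p - X : (ZMod p)[X]).Splits := by
    rw [Polynomial.splits_iff_card_roots, hroots,
      FiniteField.X_pow_card_sub_X_natDegree_eq _ hp1]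
    simp [hcard]
  have hx' : x ∈ ((X ^ p - X : (ZMod p)[X]).map (algebraMap (ZMod p) (Kbar p))).roots := by
    rw [Polynomial.mem_roots']
    constructor
    · rw [Polynomial.map_ne_zero_iff (algebraMap (ZMod p) (Kbar p)).injective]
      exact hq0
    · simp [IsRoot.def, sub_eq_zero, hx]
  rw [Polynomial.Splits.roots_map_of_injective hsplits (algebraMap (ZMod p) (Kbar p)).injective, hroots] at hx'
  obtain ⟨a, -, ha⟩ := Multiset.mem_map.mp hx'
  exact ⟨a, ha⟩

namespace HWaux
variable {p : ℕ} [Fact p.Prime] {R : Type*} [CommRing R]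

lemma iterate_verschiebung_coeff_lt (x : WittVector p R)
    {i n : ℕ} (h : i < n) : ((WittVector.verschiebung)^[n] x).coeff i = 0 := by
  induction n generalizing i with
  | zero => omega
  | succ n ih =>
    rw [Function.iterate_succ_apply']
    cases i with
    | zero => exact WittVector.verschiebung_coeff_zero _
    | succ i => rw [WittVector.verschiebung_coeff_succ]; exact ih (by omega)

lemma iterate_verschiebung_add (x y : WittVector p R) (n : ℕ) :
    (WittVector.verschiebung)^[n] (x + y)
      = (WittVector.verschiebung)^[n] x + (WittVector.verschiebung)^[n] y := by
  induction n with
  | zero => rfl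
  | succ n ih => rw [Function.iterate_succ_apply', Function.iterate_succ_apply',
      Function.iterate_succ_apply', ih, map_add]

lemma iterate_verschiebung_map {S : Type*} [CommRing S] (f : R →+* S) (x : WittVector p R)
    (n : ℕ) : WittVector.map f ((WittVector.verschiebung)^[n] x)
      = (WittVector.verschiebung)^[n] (WittVector.map f x) := by
  induction n with
  | zero => rfl
  | succ n ih => rw [Function.iterate_succ_apply', Function.iterate_succ_apply',
      WittVector.map_verschiebung, ih]

lemma step (p : ℕ) [Fact p.Prime] (b x : WittVector p (Kbar p)) (n : ℕ)
    (hx : WittVector.truncate n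
      (WittVector.map (frobenius (Kbar p) p) x - x - b) = 0) :
    ∃ x' : WittVector p (Kbar p),
      WittVector.truncate (n + 1)
        (WittVector.map (frobenius (Kbar p) p) x' - x' - b) = 0 ∧
      WittVector.truncate n x' = WittVector.truncate n x := by
  set F : WittVector p (Kbar p) →+* WittVector p (Kbar p) :=
    WittVector.map (frobenius (Kbar p) p) with hF
  set ψ : Kbar p → WittVector p (Kbar p) :=
    fun c => (WittVector.verschiebung)^[n] (WittVector.teichmuller p c) with hψ
  have hψlt : ∀ c, ∀ i < n, (ψ c).coeff i = 0 := fun c i hi =>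
    iterate_verschiebung_coeff_lt _ hi
  have hψn : ∀ c, (ψ c).coeff n = c := by
    intro c
    have := WittVector.iterate_verschiebung_coeff (WittVector.teichmuller p c) n 0
    rw [zero_add] at this
    rw [hψ]; simpa [WittVector.teichmuller_coeff_zero] using this
  have hψtrunc : ∀ c, WittVector.truncate n (ψ c) = 0 := by
    intro c
    have := (WittVector.mem_ker_truncate n (ψ c)).mpr (hψlt c)
    exact this
  have hNF : ∀ u : WittVector p (Kbar p), (∀ i < n, u.coeff i = 0) →
      WittVector.truncate (n+1) u = WittVector.truncate (n+1) (ψ (u.coeff n)) := by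
    intro u hu
    apply TruncatedWittVector.ext
    intro i
    rw [WittVector.coeff_truncate, WittVector.coeff_truncate]
    rcases lt_or_eq_of_le (Nat.lt_succ_iff.mp i.isLt) with h | h
    · rw [hu i h, hψlt _ i h]
    · simp only [h, hψn]
  have hΨadd : ∀ a b' : Kbar p,
      WittVector.truncate (n+1) (ψ a) + WittVector.truncate (n+1) (ψ b')
        = WittVector.truncate (n+1) (ψ (a + b')) := by
    intro a b'
    rw [← map_add]
    have h1 : ψ a + ψ b' = (WittVector.verschiebung)^[n]
        (WittVector.teichmuller p a + WittVector.teichmuller p b') :=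
      (iterate_verschiebung_add _ _ n).symm
    rw [h1, hNF _ (fun i hi => iterate_verschiebung_coeff_lt _ hi)]
    congr 1
    have := WittVector.iterate_verschiebung_coeff
      (WittVector.teichmuller p a + WittVector.teichmuller p b') n 0
    rw [zero_add] at this
    rw [this, WittVector.add_coeff_zero]
    simp [WittVector.teichmuller_coeff_zero]
  have hΨzero : WittVector.truncate (n+1) (ψ (0 : Kbar p)) = 0 := by
    have : ψ (0 : Kbar p) = 0 := by
      rw [hψ]; simp only [WittVector.teichmuller_zero]
      exact Function.iterate_fixed (map_zero _) n
    rw [this, map_zero]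
  set Ψ : Kbar p →+ TruncatedWittVector p (n+1) (Kbar p) :=
    AddMonoidHom.mk' (fun c => WittVector.truncate (n+1) (ψ c))
      (fun a b' => (hΨadd a b').symm) with hΨ
  obtain ⟨ε, hε⟩ : ∃ ε : WittVector p (Kbar p), ε = F x - x - b := ⟨_, rfl⟩
  rw [← hε] at hx
  obtain ⟨c, hc⟩ := exists_AS_root p (ε.coeff n)
  have hεlt : ∀ i < n, ε.coeff i = 0 :=
    (WittVector.mem_ker_truncate n ε).mp hx
  refine ⟨x + ψ c, ?_, ?_⟩
  · have key : F (x + ψ c) - (x + ψ c) - b = ε + (F (ψ c) - ψ c) := by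
      rw [hε, map_add]; ring
    have hFψ : F (ψ c) = ψ (c ^ p) := by
      rw [hψ, hF]
      simp only [iterate_verschiebung_map, WittVector.map_teichmuller]
      rw [frobenius_def]
    rw [key, hFψ]
    have expand : WittVector.truncate (n+1) (ε + (ψ (c ^ p) - ψ c))
        = Ψ (ε.coeff n) + (Ψ (c ^ p) - Ψ c) := by
      rw [map_add, map_sub, hNF ε hεlt]
      rfl
    rw [expand, ← map_sub, ← map_add, show ε.coeff n + (c ^ p - c) = 0 by
      linear_combination hc, map_zero]
  · rw [map_add, hψtrunc, add_zero]

noncomputable def seq (p : ℕ) [Fact p.Prime] (b : WittVector p (Kbar p)) :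
    (n : ℕ) → {x : WittVector p (Kbar p) //
      WittVector.truncate n (WittVector.map (frobenius (Kbar p) p) x - x - b) = 0}
  | 0 => ⟨0, TruncatedWittVector.ext fun i => i.elim0⟩
  | n + 1 => ⟨Classical.choose (step p b (seq p b n).1 n (seq p b n).2),
      (Classical.choose_spec (step p b (seq p b n).1 n (seq p b n).2)).1⟩

lemma seq_coh (p : ℕ) [Fact p.Prime] (b : WittVector p (Kbar p)) (n : ℕ) :
    WittVector.truncate n (seq p b (n+1)).1 = WittVector.truncate n (seq p b n).1 :=
  (Classical.choose_spec (step p b (seq p b n).1 n (seq p b n).2)).2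

lemma seq_coeff (p : ℕ) [Fact p.Prime] (b : WittVector p (Kbar p)) {i n : ℕ} (h : i < n) :
    (seq p b n).1.coeff i = (seq p b (i+1)).1.coeff i := by
  induction n with
  | zero => omega
  | succ n ih =>
    rcases Nat.lt_succ_iff_lt_or_eq.mp h with h' | h'
    · have h2 := congrArg (fun z => TruncatedWittVector.coeff ⟨i, h'⟩ z) (seq_coh p b n)
      simp only [WittVector.coeff_truncate] at h2
      exact h2.trans (ih h')
    · subst h'; rfl

lemma AS_surjective (p : ℕ) [Fact p.Prime] (b : WittVector p (Kbar p)) :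
    ∃ a : WittVector p (Kbar p),
      WittVector.map (frobenius (Kbar p) p) a - a = b := by
  set F : WittVector p (Kbar p) →+* WittVector p (Kbar p) :=
    WittVector.map (frobenius (Kbar p) p) with hF
  refine ⟨WittVector.mk p (fun i => (seq p b (i+1)).1.coeff i), ?_⟩
  set A : WittVector p (Kbar p) := WittVector.mk p (fun i => (seq p b (i+1)).1.coeff i) with hA
  have hcoeff : ∀ n, ∀ i, i < n → A.coeff i = (seq p b n).1.coeff i := by
    intro n i h
    have h1 : A.coeff i = (seq p b (i+1)).1.coeff i := congrFun (WittVector.coeff_mk p _) i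
    rw [h1, ← seq_coeff p b h]
  have key : ∀ n, (F A - A - b).coeff n = 0 := by
    intro n
    have h1 : WittVector.truncate (n+1) A = WittVector.truncate (n+1) (seq p b (n+1)).1 :=
      TruncatedWittVector.ext fun i => by
        rw [WittVector.coeff_truncate, WittVector.coeff_truncate]
        exact hcoeff (n+1) i i.isLt
    have h2 : WittVector.truncate (n+1) (F A)
        = WittVector.truncate (n+1) (F (seq p b (n+1)).1) :=
      TruncatedWittVector.ext fun i => by
        rw [WittVector.coeff_truncate, WittVector.coeff_truncate, hF,
          WittVector.map_coeff, WittVector.map_coeff, hcoeff (n+1) i i.isLt]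
    have h3 : WittVector.truncate (n+1) (F A - A - b) = 0 := by
      rw [map_sub, map_sub, h1, h2, ← map_sub, ← map_sub]
      exact (seq p b (n+1)).2
    have h4 := congrArg (fun z => TruncatedWittVector.coeff ⟨n, Nat.lt_succ_self n⟩ z) h3
    simpa only [WittVector.coeff_truncate, TruncatedWittVector.coeff_zero] using h4
  have h0 : F A - A - b = 0 := WittVector.ext fun n => by rw [key]; simp
  exact sub_eq_zero.mp (by linear_combination h0)


lemma witt_fixed (p : ℕ) [Fact p.Prime] (x : WittVector p (Kbar p))
    (hx : WittVector.map (frobenius (Kbar p) p) x = x) :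
    ∃ y : WittVector p (ZMod p),
      WittVector.map (algebraMap (ZMod p) (Kbar p)) y = x := by
  have h : ∀ n, ∃ a : ZMod p, algebraMap (ZMod p) (Kbar p) a = x.coeff n := by
    intro n
    apply scalar_fixed p
    have h1 := congrArg (fun z => WittVector.coeff z n) hx
    simpa only [WittVector.map_coeff, frobenius_def] using h1
  refine ⟨WittVector.mk p fun n => Classical.choose (h n), WittVector.ext fun n => ?_⟩
  rw [WittVector.map_coeff]
  rw [congrFun (WittVector.coeff_mk p _) n]
  exact Classical.choose_spec (h n)


end HWaux

/-- The fixed subfield of the canonical Frobenius automorphism `φ` of `HW(𝔽̄_p)` is exactly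
`HW(𝔽_p)`: an element `x` satisfies `φ x = x` iff `x` lies in the image of the canonical map
`ι : HW(𝔽_p) → HW(𝔽̄_p)`. Here `φ` is induced by applying `WittVector.map` of the Frobenius of
`𝔽̄_p` to every Hahn-series coefficient, and `ι` is induced by applying `WittVector.map` of the
inclusion `𝔽_p → 𝔽̄_p` to every coefficient. -/
theorem fixed_field_of_frobenius_eq_HWp (p : ℕ) [Fact p.Prime]
    (φ : HW p →+* HW p)
    (hφ : ∀ f : HahnSeries ℚ (WittVector p (Kbar p)),
      φ (Ideal.Quotient.mk (HWideal p) f) =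
        Ideal.Quotient.mk (HWideal p)
          (f.map (WittVector.map (frobenius (Kbar p) p))))
    (ι : HWp p →+* HW p)
    (hι : ∀ f : HahnSeries ℚ (WittVector p (ZMod p)),
      ι (Ideal.Quotient.mk (HWpideal p) f) =
        Ideal.Quotient.mk (HWideal p)
          (f.map (WittVector.map (algebraMap (ZMod p) (Kbar p))))) :
    ∀ x : HW p, φ x = x ↔ x ∈ Set.range ι := by
  set Fw : WittVector p (Kbar p) →+* WittVector p (Kbar p) :=
    WittVector.map (frobenius (Kbar p) p) with hFw
  set Aw : WittVector p (ZMod p) →+* WittVector p (Kbar p) :=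
    WittVector.map (algebraMap (ZMod p) (Kbar p)) with hAw
  set T : HahnSeries ℚ (WittVector p (Kbar p)) :=
    HahnSeries.single (1 : ℚ) (1 : WittVector p (Kbar p)) with hT
  set P : HahnSeries ℚ (WittVector p (Kbar p)) :=
    (p : HahnSeries ℚ (WittVector p (Kbar p))) with hP
  -- `map Fw` fixes `T - P`
  have hTmap : (T - P).map Fw = T - P := by
    have hsub : (T - P).map Fw = T.map Fw - P.map Fw := HahnSeries.map_sub Fw.toAddMonoidHom
    have h1 : T.map Fw = T := by
      have hs : T.map Fw = HahnSeries.single (1 : ℚ) (Fw 1) :=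
        HahnSeries.map_single (ZeroHom.mk Fw (map_zero Fw))
      rw [hs, map_one, hT]
    have h2 : P.map Fw = P := by
      have hC : P = HahnSeries.C ((p : WittVector p (Kbar p))) :=
        (map_natCast (HahnSeries.C) p).symm
      rw [hC, HahnSeries.map_C, map_natCast]
    rw [hsub, h1, h2]
  intro x
  constructor
  · -- hard direction
    intro hfix
    obtain ⟨f, rfl⟩ := Ideal.Quotient.mk_surjective x
    rw [hφ f] at hfix
    have hmem : f.map Fw - f ∈ HWideal p := Ideal.Quotient.eq.mp hfix
    obtain ⟨h, hh⟩ := Ideal.mem_span_singleton.mp hmem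
    -- hh : f.map Fw - f = (T - P) * h
    have hsol : ∀ q : ℚ, ∃ a : WittVector p (Kbar p),
        Fw a - a = - h.coeff q ∧ (h.coeff q = 0 → a = 0) := by
      intro q
      by_cases h0 : h.coeff q = 0
      · exact ⟨0, by simp [h0], fun _ => rfl⟩
      · obtain ⟨a, ha⟩ := HWaux.AS_surjective p (- h.coeff q)
        exact ⟨a, ha, fun hc => absurd hc h0⟩
    have hsupp : Function.support (fun q => Classical.choose (hsol q)) ⊆ h.support := by
      intro q hq
      rw [Function.mem_support] at hq
      rw [HahnSeries.mem_support]
      intro h0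
      exact hq ((Classical.choose_spec (hsol q)).2 h0)
    set e : HahnSeries ℚ (WittVector p (Kbar p)) :=
      { coeff := fun q => Classical.choose (hsol q),
        isPWO_support' := h.isPWO_support.mono hsupp } with he
    have hecoeff : ∀ q, e.coeff q = Classical.choose (hsol q) := fun q => rfl
    have he_eq : e.map Fw - e = -h := by
      apply HahnSeries.ext
      funext q
      rw [HahnSeries.coeff_sub, HahnSeries.coeff_neg, HahnSeries.map_coeff, hecoeff]
      exact (Classical.choose_spec (hsol q)).1
    set f' : HahnSeries ℚ (WittVector p (Kbar p)) := f + (T - P) * e with hf'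
    have hf'map : f'.map Fw = f' := by
      have hadd : (f + (T - P) * e).map Fw = f.map Fw + ((T - P) * e).map Fw :=
        HahnSeries.map_add Fw.toAddMonoidHom
      have hmul : ((T - P) * e).map Fw = (T - P).map Fw * e.map Fw :=
        HahnSeries.map_mul Fw.toNonUnitalRingHom
      have h1 : f'.map Fw = f.map Fw + (T - P) * e.map Fw := by
        rw [hf', hadd, hmul, hTmap]
      rw [h1, hf']
      linear_combination hh + (T - P) * he_eq
    have hcoeff_fixed : ∀ q, Fw (f'.coeff q) = f'.coeff q := by
      intro q
      have := congrArg (fun z => HahnSeries.coeff z q) hf'map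
      simpa only [HahnSeries.map_coeff] using this
    have hsol2 : ∀ q : ℚ, ∃ y : WittVector p (ZMod p),
        Aw y = f'.coeff q ∧ (f'.coeff q = 0 → y = 0) := by
      intro q
      by_cases h0 : f'.coeff q = 0
      · exact ⟨0, by simp [h0], fun _ => rfl⟩
      · obtain ⟨y, hy⟩ := HWaux.witt_fixed p (f'.coeff q) (hcoeff_fixed q)
        exact ⟨y, hy, fun hc => absurd hc h0⟩
    have hsupp2 : Function.support (fun q => Classical.choose (hsol2 q)) ⊆ f'.support := by
      intro q hq
      rw [Function.mem_support] at hq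
      rw [HahnSeries.mem_support]
      intro h0
      exact hq ((Classical.choose_spec (hsol2 q)).2 h0)
    set g : HahnSeries ℚ (WittVector p (ZMod p)) :=
      { coeff := fun q => Classical.choose (hsol2 q),
        isPWO_support' := f'.isPWO_support.mono hsupp2 } with hg
    have hg_eq : g.map Aw = f' := by
      apply HahnSeries.ext
      funext q
      rw [HahnSeries.map_coeff]
      exact (Classical.choose_spec (hsol2 q)).1
    refine ⟨Ideal.Quotient.mk (HWpideal p) g, ?_⟩
    rw [hι g]
    rw [show (g.map (WittVector.map (algebraMap (ZMod p) (Kbar p)))) = g.map Aw from rfl, hg_eq]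
    rw [Ideal.Quotient.eq]
    have : f' - f = (T - P) * e := by rw [hf']; ring
    rw [this]
    exact Ideal.mem_span_singleton.mpr (dvd_mul_right _ _)
  · -- easy direction
    rintro ⟨y, rfl⟩
    obtain ⟨g, rfl⟩ := Ideal.Quotient.mk_surjective y
    rw [hι g, hφ]
    congr 1
    apply HahnSeries.ext
    funext q
    rw [HahnSeries.map_coeff, HahnSeries.map_coeff]
    apply WittVector.ext
    intro n
    simp only [hFw, hAw, WittVector.map_coeff]
    rw [frobenius_def, ← map_pow, ZMod.pow_card]

end
end

section
/- Let R be a commutative ring, and let r ∈ R be a non-zero-divisor such that R is r-adically complete (complete and separated for the topology defined by the ideal (r)). Call f ∈ HahnSeries ℚ R a null series if for every i ∈ ℚ and every N ∈ ℕ such that f.coeff (i + n) = 0 for all integers n < −N, one has, for every m ∈ ℕ, Σ_{n=0}^{m} f.coeff (i + (n − N)) · r^n ∈ (r^(m+1)) (equivalently, the r-adically convergent sum Σ_{n∈ℤ} f.coeff(i+n) r^n vanishes in R[r^{-1}]). Then the set of null series is exactly the principal ideal of HahnSeries ℚ R generated by the element (single 1 1) − C r, where C r is the constant Hahn series with value r.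 -/
noncomputable section

/-- `f ∈ HahnSeries ℚ R` is a *null series* with respect to `r`: for every `i ∈ ℚ` and every
`N ∈ ℕ` such that `f.coeff (i + n) = 0` for every integer `n < -N`, the partial sums
`Σ_{n=0}^{m} f.coeff (i + (n - N)) · r^n` lie in `(r^(m+1))` for all `m`; equivalently, the
`r`-adically convergent sum `Σ_{n ∈ ℤ} f.coeff (i + n) r^n` vanishes in `R[r⁻¹]`. -/
def IsNullSeries {R : Type*} [CommRing R] (r : R) (f : HahnSeries ℚ R) : Prop :=
  ∀ (i : ℚ) (N : ℕ), (∀ n : ℤ, n < -(N : ℤ) → f.coeff (i + (n : ℚ)) = 0) →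
    ∀ m : ℕ,
      (∑ n ∈ Finset.range (m + 1), f.coeff (i + (((n : ℤ) - (N : ℤ) : ℤ) : ℚ)) * r ^ n) ∈
        Ideal.span {r ^ (m + 1)}

lemma smul_top_span {R : Type*} [CommRing R] (r : R) (m : ℕ) :
    ((Ideal.span {r}) ^ m • ⊤ : Submodule R R) = Ideal.span {r ^ m} := by
  rw [Ideal.smul_eq_mul, Ideal.mul_top, Ideal.span_singleton_pow]

lemma coeff_d_mul {R : Type*} [CommRing R] (r : R) (g : HahnSeries ℚ R) (x : ℚ) :
    ((HahnSeries.single (1 : ℚ) (1 : R) - HahnSeries.C r) * g).coeff x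
      = g.coeff (x - 1) - r * g.coeff x := by
  rw [sub_mul, HahnSeries.coeff_sub]
  congr 1
  · have h := HahnSeries.coeff_single_mul_add (r := (1:R)) (x := g) (a := x - 1) (b := 1)
    rw [sub_add_cancel] at h
    rw [h, one_mul]
  · rw [HahnSeries.C_mul_eq_smul, HahnSeries.coeff_smul]
    rfl

lemma natcast_pwo : (Set.range ((↑) : ℕ → ℚ)).IsPWO := by
  rw [← Set.image_univ]
  exact Set.IsPWO.image_of_monotone ((Set.isWF_univ_iff.2 (inferInstance : WellFoundedLT ℕ)).isPWO) Nat.mono_cast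

/-- Forward direction: multiples of `single 1 1 - C r` are null series. -/
lemma isNullSeries_of_mul {R : Type*} [CommRing R] (r : R) (hr : r ∈ nonZeroDivisors R)
    (g : HahnSeries ℚ R) :
    IsNullSeries r ((HahnSeries.single (1 : ℚ) (1 : R) - HahnSeries.C r) * g) := by
  intro i N h m
  set f := (HahnSeries.single (1 : ℚ) (1 : R) - HahnSeries.C r) * g with hf
  -- step 1: iterate the recursion downward
  have key : ∀ k : ℕ, g.coeff (i + ((-(N : ℤ) - 1 - (k : ℤ) : ℤ) : ℚ))
      = r ^ k * g.coeff (i + ((-(N : ℤ) - 1 : ℤ) : ℚ)) := by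
    intro k
    induction k with
    | zero => simp
    | succ k ih =>
      have h0 : f.coeff (i + ((-(N : ℤ) - 1 - (k : ℤ) : ℤ) : ℚ)) = 0 :=
        h _ (by omega)
      rw [coeff_d_mul] at h0
      have hx : i + ((-(N : ℤ) - 1 - (k : ℤ) : ℤ) : ℚ) - 1
          = i + ((-(N : ℤ) - 1 - ((k : ℤ) + 1) : ℤ) : ℚ) := by push_cast; ring
      rw [hx] at h0
      have : g.coeff (i + ((-(N : ℤ) - 1 - ((k : ℤ) + 1) : ℤ) : ℚ))
          = r * g.coeff (i + ((-(N : ℤ) - 1 - (k : ℤ) : ℤ) : ℚ)) := by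
        linear_combination h0
      have hz : (((k+1 : ℕ)) : ℤ) = (k : ℤ) + 1 := by push_cast; ring
      rw [hz, this, ih, pow_succ]
      ring
  -- step 2: bottom coefficient vanishes
  have hbot : g.coeff (i + ((-(N : ℤ) - 1 : ℤ) : ℚ)) = 0 := by
    by_contra hc
    by_cases hK : ∃ K : ℕ, g.coeff (i + ((-(N : ℤ) - 1 - (K : ℤ) : ℤ) : ℚ)) = 0
    · obtain ⟨K, hK⟩ := hK
      rw [key K] at hK
      exact hc ((pow_mem hr K).2 _ (by rwa [mul_comm] at hK))
    · push_neg at hK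
      have := Set.isWF_iff_no_descending_seq.1 g.isWF_support
        (fun k => i + ((-(N : ℤ) - 1 - (k : ℤ) : ℤ) : ℚ))
        (by
          intro a b hab
          push_cast
          have : (a : ℚ) < (b : ℚ) := by exact_mod_cast hab
          linarith)
      exact this (fun k => hK k)
  -- step 3: telescope
  set c : ℕ → R := fun n => g.coeff (i + (((n : ℤ) - (N : ℤ) - 1 : ℤ) : ℚ)) * r ^ n with hc
  have hterm : ∀ n : ℕ, f.coeff (i + (((n : ℤ) - (N : ℤ) : ℤ) : ℚ)) * r ^ n
      = c n - c (n + 1) := by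
    intro n
    rw [coeff_d_mul]
    have hx : i + (((n : ℤ) - (N : ℤ) : ℤ) : ℚ) - 1
        = i + (((n : ℤ) - (N : ℤ) - 1 : ℤ) : ℚ) := by push_cast; ring
    rw [hx]
    simp only [hc]
    have hy : ((((n : ℕ) + 1 : ℕ) : ℤ) - (N : ℤ) - 1 : ℤ) = ((n : ℤ) - (N : ℤ) : ℤ) := by
      push_cast; ring
    rw [hy, pow_succ]
    ring
  have hsum : (∑ n ∈ Finset.range (m + 1), f.coeff (i + (((n : ℤ) - (N : ℤ) : ℤ) : ℚ)) * r ^ n)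
      = c 0 - c (m + 1) := by
    rw [← Finset.sum_range_sub' c (m + 1)]
    exact Finset.sum_congr rfl fun n _ => hterm n
  have hc0 : c 0 = 0 := by
    simp only [hc, pow_zero, mul_one]
    convert hbot using 3
    push_cast; ring
  rw [hsum, hc0, zero_sub]
  exact neg_mem (Ideal.mem_span_singleton'.2 ⟨_, rfl⟩)

open Pointwise in
lemma mem_span_of_isNullSeries {R : Type*} [CommRing R] (r : R)
    (hcomplete : IsAdicComplete (Ideal.span {r}) R) (f : HahnSeries ℚ R)
    (hf : IsNullSeries r f) :
    f ∈ Ideal.span {HahnSeries.single (1 : ℚ) (1 : R) - HahnSeries.C r} := by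
  set I := Ideal.span {r} with hI
  set S : ℚ → ℕ → R :=
    fun x m => ∑ n ∈ Finset.range m, f.coeff (x + (((n : ℤ) + 1 : ℤ) : ℚ)) * r ^ n with hS
  have comp : ∀ x : ℚ, ∀ {m n : ℕ}, m ≤ n → S x m ≡ S x n [SMOD (I ^ m • ⊤ : Submodule R R)] := by
    intro x m n hmn
    rw [SModEq.sub_mem, smul_top_span]
    have hd : S x m - S x n
        = -∑ k ∈ Finset.Ico m n, f.coeff (x + (((k : ℤ) + 1 : ℤ) : ℚ)) * r ^ k := by
      rw [Finset.sum_Ico_eq_sub _ hmn]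
      ring
    rw [hd]
    refine neg_mem (Ideal.sum_mem _ fun k hk => ?_)
    rw [Ideal.mem_span_singleton]
    exact dvd_mul_of_dvd_right (pow_dvd_pow r (Finset.mem_Ico.1 hk).1) _
  have hgL : ∀ x : ℚ, ∃ L : R, ∀ m : ℕ, S x m ≡ L [SMOD (I ^ m • ⊤ : Submodule R R)] :=
    fun x => hcomplete.toIsPrecomplete.prec (comp x)
  set gco : ℚ → R := fun x => (hgL x).choose with hgco
  have hg : ∀ (x : ℚ) (m : ℕ), gco x - S x m ∈ Ideal.span {r ^ m} := by
    intro x m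
    have h := (hgL x).choose_spec m
    rw [SModEq.sub_mem, smul_top_span] at h
    have h2 := neg_mem h
    rw [neg_sub] at h2
    exact h2
  -- claim 1: vanishing below support
  have claim1 : ∀ x : ℚ, (∀ k : ℤ, k ≤ 0 → f.coeff (x + (k : ℚ)) = 0) → gco x = 0 := by
    intro x hx
    apply hcomplete.toIsHausdorff.haus
    intro m
    rw [SModEq.zero, smul_top_span]
    have hSm : S x m ∈ Ideal.span {r ^ m} := by
      cases m with
      | zero => simp [hS]
      | succ m' =>
        have hnull := hf (x + 1) 0 (by
          intro n hn
          have hxx : x + 1 + (n : ℚ) = x + (((n + 1 : ℤ) : ℤ) : ℚ) := by push_cast; ring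
          rw [hxx]
          exact hx (n + 1) (by omega)) m'
        have heq : S x (m' + 1)
            = ∑ n ∈ Finset.range (m' + 1),
                f.coeff (x + 1 + (((n : ℤ) - ((0 : ℕ) : ℤ) : ℤ) : ℚ)) * r ^ n := by
          refine Finset.sum_congr rfl fun n _ => ?_
          congr 2
          push_cast; ring
        rw [heq]
        exact hnull
    have hdecomp : gco x = (gco x - S x m) + S x m := by ring
    rw [hdecomp]
    exact add_mem (hg x m) hSm
  -- claim 2 : g is a Hahn series
  have hsupp : Function.support gco ⊆ f.support + Set.range ((↑) : ℕ → ℚ) := by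
    intro x hx
    by_contra hmem
    apply hx
    apply claim1
    intro k hk
    by_contra hfk
    apply hmem
    refine ⟨x + (k : ℚ), hfk, ((-k).toNat : ℚ), ⟨(-k).toNat, rfl⟩, ?_⟩
    have h5 : (((-k).toNat : ℕ) : ℤ) = -k := Int.toNat_of_nonneg (by omega)
    have h6 : (((-k).toNat : ℕ) : ℚ) = -(k : ℚ) := by exact_mod_cast h5
    rw [h6]; ring
  set g : HahnSeries ℚ R := ⟨gco, (f.isPWO_support.add natcast_pwo).mono hsupp⟩ with hgdef
  -- claim 3: the equation
  have claim3 : ∀ x : ℚ, gco (x - 1) - r * gco x = f.coeff x := by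
    intro x
    have key : ∀ m : ℕ, gco (x - 1) - r * gco x - f.coeff x ∈ Ideal.span {r ^ m} := by
      intro m
      cases m with
      | zero => simp
      | succ m' =>
        have h1 : gco (x - 1) - S (x - 1) (m' + 1) ∈ Ideal.span {r ^ (m' + 1)} := hg _ _
        have h2 : r * gco x - r * S x m' ∈ Ideal.span {r ^ (m' + 1)} := by
          have hgx := hg x m'
          rw [Ideal.mem_span_singleton] at hgx ⊢
          obtain ⟨c, hc⟩ := hgx
          exact ⟨c, by linear_combination r * hc⟩
        have h3 : S (x - 1) (m' + 1) = r * S x m' + f.coeff x := by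
          rw [hS]
          simp only
          rw [Finset.sum_range_succ', Finset.mul_sum]
          congr 1
          · refine Finset.sum_congr rfl fun n _ => ?_
            have hxx : x - 1 + ((((n + 1 : ℕ) : ℤ) + 1 : ℤ) : ℚ)
                = x + (((n : ℤ) + 1 : ℤ) : ℚ) := by push_cast; ring
            rw [hxx, pow_succ]
            ring
          · have hxx : x - 1 + ((((0 : ℕ) : ℤ) + 1 : ℤ) : ℚ) = x := by push_cast; ring
            rw [hxx]
            ring
        have h4 : gco (x - 1) - r * gco x - f.coeff x
            = (gco (x - 1) - S (x - 1) (m' + 1)) - (r * gco x - r * S x m') := by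
          linear_combination h3
        rw [h4]
        exact sub_mem h1 h2
    have h0 := hcomplete.toIsHausdorff.haus (gco (x - 1) - r * gco x - f.coeff x) (fun m => by
      rw [SModEq.zero, smul_top_span]
      exact key m)
    linear_combination h0
  rw [Ideal.mem_span_singleton]
  refine ⟨g, ?_⟩
  ext x
  rw [coeff_d_mul]
  exact (claim3 x).symm


/-- For `r` a non-zero-divisor in an `r`-adically complete commutative ring `R`, the set of
null series in `HahnSeries ℚ R` is exactly the principal ideal generated by
`(single 1 1) - C r`. -/
theorem isNullSeries_iff_mem_span {R : Type*} [CommRing R] (r : R)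
    (hr : r ∈ nonZeroDivisors R) (hcomplete : IsAdicComplete (Ideal.span {r}) R) :
    {f : HahnSeries ℚ R | IsNullSeries r f} =
      ↑(Ideal.span {HahnSeries.single (1 : ℚ) (1 : R) - HahnSeries.C r} :
        Ideal (HahnSeries ℚ R)) := by
  ext f
  simp only [Set.mem_setOf_eq, SetLike.mem_coe]
  constructor
  · exact fun h => mem_span_of_isNullSeries r hcomplete f h
  · intro h
    rw [Ideal.mem_span_singleton] at h
    obtain ⟨g, hg⟩ := h
    rw [hg]
    exact isNullSeries_of_mul r hr g

end
end

section
/- Let R be a commutative ring, let r ∈ R be a non-zero-divisor such that R is r-adically complete, and let s : R/(r) → R be a set-theoretic section of the quotient map R → R/(r) with s(0) = 0. Then every element of the quotient ring (HahnSeries ℚ R) / ((single 1 1) − C r) has a unique representative f ∈ HahnSeries ℚ R all of whose coefficients lie in the image of s: for every x in the quotient there exists a unique f ∈ HahnSeries ℚ R with f.coeff i ∈ Set.range s for all i ∈ ℚ and with class of f equal to x. -/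
noncomputable section

open HahnSeries

namespace HahnRepAux
open Pointwise

variable {R : Type*} [CommRing R] (r : R) (s : R ⧸ Ideal.span {r} → R)

open scoped Classical in
/-- divide by r (choice-based) -/
def divr (a : R) : R := if h : ∃ b, r * b = a then h.choose else 0

lemma mul_divr {a : R} (h : ∃ b, r * b = a) : r * divr r a = a := by
  rw [divr, dif_pos h]; exact h.choose_spec

/-- the carry step -/
def step (a : R) : R := divr r (a - s (Ideal.Quotient.mk _ a))

lemma mul_step (hs : ∀ a : R ⧸ Ideal.span {r}, Ideal.Quotient.mk (Ideal.span {r}) (s a) = a)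
    (a : R) : r * step r s a = a - s (Ideal.Quotient.mk _ a) := by
  apply mul_divr
  have : a - s (Ideal.Quotient.mk (Ideal.span {r}) a) ∈ Ideal.span {r} := by
    rw [← Ideal.Quotient.eq_zero_iff_mem, map_sub, hs, sub_self]
  obtain ⟨c, hc⟩ := Ideal.mem_span_singleton'.mp this
  exact ⟨c, by rw [mul_comm]; exact hc⟩

variable (hr : r ∈ nonZeroDivisors R)
variable (hs0 : s 0 = 0)
variable (hs : ∀ a : R ⧸ Ideal.span {r}, Ideal.Quotient.mk (Ideal.span {r}) (s a) = a)

include hr in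
lemma cancel_r {a b : R} (h : r * a = r * b) : a = b := by
  have h2 : (a - b) * r = 0 := by rw [sub_mul, mul_comm a r, mul_comm b r, h, sub_self]
  have := mem_nonZeroDivisors_iff_right.mp hr _ h2
  rwa [sub_eq_zero] at this

include hr hs0 hs in
lemma step_zero : step r s 0 = 0 := by
  have h := mul_step r s hs 0
  rw [map_zero, hs0, sub_zero] at h
  have : r * step r s 0 = r * 0 := by rw [h, mul_zero]
  exact cancel_r r hr this

variable (g : HahnSeries ℚ R)

/-- carries, computed with fuel -/
def aux : ℕ → ℚ → R
  | 0, _ => 0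
  | (k+1), i => step r s (g.coeff (i-1) + aux k (i-1))

include hr hs0 hs in
lemma aux_stable {i : ℚ} {k : ℕ} (H : ∀ n : ℕ, k ≤ n → g.coeff (i - (n+1)) = 0) :
    aux r s g (k+1) i = aux r s g k i := by
  induction k generalizing i with
  | zero =>
    have h0 : g.coeff (i - 1) = 0 := by simpa using H 0 le_rfl
    show step r s (g.coeff (i-1) + aux r s g 0 (i-1)) = 0
    rw [h0, aux, add_zero]
    exact step_zero r s hr hs0 hs
  | succ k ih =>
    show step r s (g.coeff (i-1) + aux r s g (k+1) (i-1))
      = step r s (g.coeff (i-1) + aux r s g k (i-1))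
    rw [ih (fun n hn => by
      have := H (n+1) (by omega)
      convert this using 2
      push_cast; ring)]

include hr hs0 hs in
lemma aux_stable' {i : ℚ} {k k' : ℕ} (hkk : k ≤ k')
    (H : ∀ n : ℕ, k ≤ n → g.coeff (i - (n+1)) = 0) :
    aux r s g k' i = aux r s g k i := by
  induction k' with
  | zero =>
    have : k = 0 := by omega
    subst this; rfl
  | succ k' ih =>
    rcases eq_or_lt_of_le hkk with h | h
    · rw [h]
    · have hk : k ≤ k' := by omega
      rw [← ih hk]
      exact aux_stable r s hr hs0 hs g (fun n hn => H n (le_trans hk hn))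

lemma exists_bound (i : ℚ) : ∃ k : ℕ, ∀ n : ℕ, k ≤ n → g.coeff (i - (n+1)) = 0 := by
  by_cases hA : (∃ n : ℕ, i - (n+1) ∈ g.support)
  · set A : Set ℚ := {q | q ∈ g.support ∧ ∃ n : ℕ, i - (n+1) = q} with hAdef
    have hWF : A.IsWF := g.isWF_support.mono (fun q hq => hq.1)
    have hne : A.Nonempty := by
      obtain ⟨n, hn⟩ := hA
      exact ⟨i - (n+1), hn, n, rfl⟩
    obtain ⟨hmem, n0, hn0⟩ := hWF.min_mem hne
    refine ⟨n0 + 1, fun n hn => ?_⟩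
    by_contra hc
    have hqA : (i - (n+1)) ∈ A := ⟨hc, n, rfl⟩
    have := hWF.min_le hne hqA
    rw [← hn0] at this
    have : (n0 : ℚ) + 1 ≥ (n : ℚ) + 1 := by linarith
    have : (n : ℕ) ≤ n0 := by exact_mod_cast (by linarith : (n:ℚ) ≤ n0)
    omega
  · exact ⟨0, fun n _ => by
      by_contra hc
      exact hA ⟨n, hc⟩⟩

/-- the carry function -/
def c (i : ℚ) : R := aux r s g (exists_bound g i).choose i

include hr hs0 hs in
lemma c_eq {i : ℚ} {k : ℕ} (H : ∀ n : ℕ, k ≤ n → g.coeff (i - (n+1)) = 0) :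
    c r s g i = aux r s g k i := by
  set K := (exists_bound g i).choose with hK
  have HK := (exists_bound g i).choose_spec
  rcases le_total k K with h | h
  · exact aux_stable' r s hr hs0 hs g h H
  · exact (aux_stable' r s hr hs0 hs g h HK).symm

include hr hs0 hs in
lemma c_zero {i : ℚ} (H : ∀ n : ℕ, g.coeff (i - (n+1)) = 0) : c r s g i = 0 :=
  c_eq r s hr hs0 hs g (k := 0) (fun n _ => H n)

include hr hs0 hs in
lemma c_rec (i : ℚ) : c r s g (i+1) = step r s (g.coeff i + c r s g i) := by
  obtain ⟨k1, h1⟩ := exists_bound g (i+1)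
  obtain ⟨k2, h2⟩ := exists_bound g i
  set k := max k1 k2 with hk
  have hb1 : ∀ n : ℕ, (k+1) ≤ n → g.coeff ((i+1) - (n+1)) = 0 :=
    fun n hn => h1 n (by omega)
  have hb2 : ∀ n : ℕ, k ≤ n → g.coeff (i - (n+1)) = 0 :=
    fun n hn => h2 n (by omega)
  rw [c_eq r s hr hs0 hs g hb1, c_eq r s hr hs0 hs g hb2]
  show step r s (g.coeff (i+1-1) + aux r s g k (i+1-1)) = _
  norm_num

include hr hs0 hs in
lemma key (i : ℚ) :
    r * c r s g (i+1) = (g.coeff i + c r s g i)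
      - s (Ideal.Quotient.mk _ (g.coeff i + c r s g i)) := by
  rw [c_rec r s hr hs0 hs g i, mul_step r s hs]

lemma NQ_isPWO : (Set.range ((↑·) : ℕ → ℚ)).IsPWO := by
  have h1 : (Set.univ : Set ℕ).IsPWO := (Set.isWF_univ_iff.2 (inferInstance : WellFoundedLT ℕ)).isPWO
  have h2 := h1.image_of_monotone (f := ((↑·) : ℕ → ℚ)) (fun a b h => Nat.cast_le.mpr h)
  rwa [Set.image_univ] at h2

lemma S_isPWO : (g.support + Set.range ((↑·) : ℕ → ℚ)).IsPWO :=
  g.isPWO_support.add NQ_isPWO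

include hr hs0 hs in
lemma c_ne_zero {i : ℚ} (h : c r s g i ≠ 0) :
    i ∈ g.support + Set.range ((↑·) : ℕ → ℚ) := by
  by_contra hmem
  apply h
  apply c_zero r s hr hs0 hs g
  intro n
  by_contra hc
  apply hmem
  have : i = (i - (n+1)) + ((n+1 : ℕ) : ℚ) := by push_cast; ring
  rw [this]
  exact Set.add_mem_add hc ⟨n+1, rfl⟩

/-- the representative -/
def fsol : HahnSeries ℚ R where
  coeff i := s (Ideal.Quotient.mk _ (g.coeff i + c r s g i))
  isPWO_support' := by
    apply (S_isPWO g).mono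
    intro i hi
    simp only [Function.mem_support] at hi
    by_cases hg : g.coeff i = 0
    · by_cases hc : c r s g i = 0
      · exfalso; apply hi; rw [hg, hc, add_zero, map_zero, hs0]
      · exact c_ne_zero r s hr hs0 hs g hc
    · have : i = i + ((0 : ℕ) : ℚ) := by norm_num
      rw [this]
      exact Set.add_mem_add hg ⟨0, rfl⟩

/-- the cofactor -/
def hsol : HahnSeries ℚ R where
  coeff i := c r s g (i+1)
  isPWO_support' := by
    apply (S_isPWO g).mono
    intro i hi
    simp only [Function.mem_support] at hi
    have h2 : ¬ ∀ n : ℕ, g.coeff ((i+1) - (n+1)) = 0 := by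
      intro H
      exact hi (c_zero r s hr hs0 hs g H)
    push_neg at h2
    obtain ⟨n, hn⟩ := h2
    have hmem : i - n ∈ g.support := by
      have : (i+1) - ((n:ℚ)+1) = i - n := by ring
      rwa [this] at hn
    have : i = (i - n) + ((n:ℕ):ℚ) := by push_cast; ring
    rw [this]
    exact Set.add_mem_add hmem ⟨n, rfl⟩

include hr hs0 hs in
lemma main_eq :
    fsol r s hr hs0 hs g - g
      = (HahnSeries.single (1:ℚ) (1:R) - HahnSeries.C r) * hsol r s hr hs0 hs g := by
  ext i
  rw [HahnSeries.coeff_sub, sub_mul, HahnSeries.coeff_sub]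
  have hT : ((HahnSeries.single (1:ℚ) (1:R)) * hsol r s hr hs0 hs g).coeff i
      = (hsol r s hr hs0 hs g).coeff (i - 1) := by
    have h1 : ((HahnSeries.single (1:ℚ) (1:R)) * hsol r s hr hs0 hs g).coeff ((i-1)+1)
        = 1 * (hsol r s hr hs0 hs g).coeff (i-1) := HahnSeries.coeff_single_mul_add
    rw [show (i-1)+1 = i from by ring] at h1
    rw [h1, one_mul]
  have hC : ((HahnSeries.C r) * hsol r s hr hs0 hs g).coeff i
      = r * (hsol r s hr hs0 hs g).coeff i := by
    rw [HahnSeries.C_mul_eq_smul, HahnSeries.coeff_smul, smul_eq_mul]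
  rw [hT, hC]
  show s (Ideal.Quotient.mk _ (g.coeff i + c r s g i)) - g.coeff i
    = c r s g (i - 1 + 1) - r * c r s g (i + 1)
  have hk := key r s hr hs0 hs g i
  have : s (Ideal.Quotient.mk (Ideal.span {r}) (g.coeff i + c r s g i))
      = (g.coeff i + c r s g i) - r * c r s g (i+1) := by
    rw [hk]; ring
  rw [this]
  norm_num
  ring

include hr hs0 hs in
lemma unique_rep (f1 f2 : HahnSeries ℚ R)
    (h1 : ∀ i : ℚ, f1.coeff i ∈ Set.range s) (h2 : ∀ i : ℚ, f2.coeff i ∈ Set.range s)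
    (hmk : Ideal.Quotient.mk (Ideal.span {HahnSeries.single (1:ℚ) (1:R) - HahnSeries.C r}) f1
      = Ideal.Quotient.mk (Ideal.span {HahnSeries.single (1:ℚ) (1:R) - HahnSeries.C r}) f2) :
    f1 = f2 := by
  have hmem := Ideal.Quotient.eq.mp hmk
  obtain ⟨a, ha⟩ := Ideal.mem_span_singleton'.mp hmem
  by_contra hne
  have ha0 : a ≠ 0 := by
    rintro rfl
    rw [zero_mul] at ha
    exact hne (sub_eq_zero.mp ha.symm)
  have hne' := HahnSeries.support_nonempty_iff.2 ha0
  set i0 := a.isWF_support.min hne' with hi0def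
  have hi0 : i0 ∈ a.support := a.isWF_support.min_mem hne'
  have hlow : a.coeff (i0 - 1) = 0 := by
    by_contra hc
    have := a.isWF_support.min_le hne' hc
    rw [← hi0def] at this
    linarith
  have hcoeff : (f1 - f2).coeff i0 = - (r * a.coeff i0) := by
    rw [← ha, mul_sub]
    rw [HahnSeries.coeff_sub]
    have hT : (a * (HahnSeries.single (1:ℚ) (1:R))).coeff i0 = a.coeff (i0 - 1) := by
      have h1 : (a * (HahnSeries.single (1:ℚ) (1:R))).coeff ((i0-1)+1)
          = a.coeff (i0-1) * 1 := HahnSeries.coeff_mul_single_add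
      rw [show (i0-1)+1 = i0 from by ring] at h1
      rw [h1, mul_one]
    have hC : (a * (HahnSeries.C r)).coeff i0 = r * a.coeff i0 := by
      rw [mul_comm, HahnSeries.C_mul_eq_smul, HahnSeries.coeff_smul, smul_eq_mul]
    rw [hT, hC, hlow]
    ring
  obtain ⟨u, hu⟩ := h1 i0
  obtain ⟨v, hv⟩ := h2 i0
  have hr0 : Ideal.Quotient.mk (Ideal.span {r}) r = 0 :=
    Ideal.Quotient.eq_zero_iff_mem.mpr (Ideal.mem_span_singleton_self r)
  have hquot : (Ideal.Quotient.mk (Ideal.span {r})) ((f1 - f2).coeff i0) = 0 := by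
    rw [hcoeff, map_neg, map_mul, hr0, zero_mul, neg_zero]
  rw [HahnSeries.coeff_sub, ← hu, ← hv, map_sub, hs, hs] at hquot
  have huv : u = v := by rwa [sub_eq_zero] at hquot
  have hzero : f1.coeff i0 - f2.coeff i0 = 0 := by rw [← hu, ← hv, huv, sub_self]
  have hz : - (r * a.coeff i0) = 0 := by
    rw [← hcoeff, HahnSeries.coeff_sub, hzero]
  have hz2 : r * a.coeff i0 = r * 0 := by rw [mul_zero]; exact neg_eq_zero.mp hz
  exact (HahnSeries.mem_support _ _).mp hi0 (cancel_r r hr hz2)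

end HahnRepAux

/-- Let `r` be a non-zero-divisor in an `r`-adically complete commutative ring `R`, and let
`s : R/(r) → R` be a set-theoretic section of the quotient map with `s 0 = 0`. Then every
element of `(HahnSeries ℚ R) / ((single 1 1) - C r)` has a unique representative Hahn series
all of whose coefficients lie in the image of `s`. -/
theorem exists_unique_representative_with_coeffs_in_section {R : Type*} [CommRing R] (r : R)
    (hr : r ∈ nonZeroDivisors R) (hcomplete : IsAdicComplete (Ideal.span {r}) R)
    (s : R ⧸ Ideal.span {r} → R)
    (hs0 : s 0 = 0)
    (hs : ∀ a : R ⧸ Ideal.span {r}, Ideal.Quotient.mk (Ideal.span {r}) (s a) = a)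
    (x : HahnSeries ℚ R ⧸
      Ideal.span {HahnSeries.single (1 : ℚ) (1 : R) - HahnSeries.C r}) :
    ∃! f : HahnSeries ℚ R,
      (∀ i : ℚ, f.coeff i ∈ Set.range s) ∧
      Ideal.Quotient.mk
        (Ideal.span {HahnSeries.single (1 : ℚ) (1 : R) - HahnSeries.C r}) f = x := by
  obtain ⟨g, rfl⟩ := Ideal.Quotient.mk_surjective x
  have hrange : ∀ i : ℚ, (HahnRepAux.fsol r s hr hs0 hs g).coeff i ∈ Set.range s :=
    fun i => ⟨_, rfl⟩
  have hmkf : Ideal.Quotient.mk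
      (Ideal.span {HahnSeries.single (1 : ℚ) (1 : R) - HahnSeries.C r})
      (HahnRepAux.fsol r s hr hs0 hs g) = Ideal.Quotient.mk _ g := by
    rw [Ideal.Quotient.eq, HahnRepAux.main_eq r s hr hs0 hs g]
    exact Ideal.mem_span_singleton'.mpr ⟨HahnRepAux.hsol r s hr hs0 hs g, mul_comm _ _⟩
  refine ⟨HahnRepAux.fsol r s hr hs0 hs g, ⟨hrange, hmkf⟩, ?_⟩
  rintro f ⟨hf1, hf2⟩
  exact HahnRepAux.unique_rep r s hr hs0 hs f _ hf1 hrange (hf2.trans hmkf.symm)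

end
end

section
/- Let R be a commutative ring, let r ∈ R be a non-zero-divisor such that R is r-adically complete, and let n be a positive integer. Let R' = R[X]/(X^n − r) and let θ ∈ R' denote the class of X. Consider the ring homomorphism Φ : HahnSeries ℚ R → HahnSeries ℚ R' which sends a Hahn series Σ a_i T^i to Σ (a_i image in R') T^{n·i} (i.e., the composition of the coefficientwise map induced by R → R' with the exponent-rescaling embedding along multiplication by n on ℚ). Then Φ maps the ideal generated by (single 1 1) − C r into the ideal generated by (single 1 1) − C θ, and the induced ring homomorphism (HahnSeries ℚ R)/((single 1 1) − C r) → (HahnSeries ℚ R')/((single 1 1) − C θ) is an isomorphism. -/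
noncomputable section

/-- The ring homomorphism between Hahn series rings induced by applying a ring homomorphism to
every coefficient. -/
def HahnSeries.mapRingHom {Γ R S : Type*} [AddCommMonoid Γ] [LinearOrder Γ] [IsOrderedCancelAddMonoid Γ]
    [CommRing R] [CommRing S] (f : R →+* S) : HahnSeries Γ R →+* HahnSeries Γ S where
  toFun x := x.map f
  map_zero' := by ext; simp
  map_one' := by ext g; by_cases h : g = 0 <;> simp [h]
  map_add' x y := HahnSeries.map_add (f : R →+ S)
  map_mul' x y := HahnSeries.map_mul (f : R →ₙ+* S)

/-- The exponent-rescaling ring embedding of `HahnSeries ℚ R`, sending `Σ a_i T^i` to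
`Σ a_i T^(n·i)`, for a positive integer `n`. -/
def HahnSeries.expRescale (R : Type*) [CommRing R] (n : ℕ) (hn : 0 < n) :
    HahnSeries ℚ R →+* HahnSeries ℚ R :=
  HahnSeries.embDomainRingHom (AddMonoidHom.mulLeft (n : ℚ))
    (mul_right_injective₀ (by exact_mod_cast hn.ne'))
    (fun g g' => by
      have hn' : (0 : ℚ) < n := by exact_mod_cast hn
      show (n : ℚ) * g ≤ n * g' ↔ g ≤ g'
      exact ⟨fun h => le_of_mul_le_mul_left h hn', fun h => mul_le_mul_of_nonneg_left h hn'.le⟩)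

namespace HahnAux

open HahnSeries

variable {R S : Type*} [CommRing R] [CommRing S]

lemma mapRingHom_coeff (f : R →+* S) (x : HahnSeries ℚ R) (q : ℚ) :
    (HahnSeries.mapRingHom f x).coeff q = f (x.coeff q) := rfl

lemma mapRingHom_single (f : R →+* S) (q : ℚ) (a : R) :
    HahnSeries.mapRingHom f (HahnSeries.single q a) = HahnSeries.single q (f a) := by
  ext g
  rw [mapRingHom_coeff]
  by_cases h : g = q <;> simp [HahnSeries.coeff_single, h]

lemma coeff_sum {α : Type*} (s : Finset α) (f : α → HahnSeries ℚ R) (q : ℚ) :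
    (∑ i ∈ s, f i).coeff q = ∑ i ∈ s, (f i).coeff q := by
  classical
  induction s using Finset.induction with
  | empty => simp
  | insert _ _ h ih => simp [Finset.sum_insert h, ih]

variable (n : ℕ)

/-- inverse of `expRescale` -/
def tauRescale (R : Type*) [CommRing R] (n : ℕ) (hn : 0 < n) :
    HahnSeries ℚ R →+* HahnSeries ℚ R :=
  HahnSeries.embDomainRingHom (AddMonoidHom.mulLeft ((n : ℚ)⁻¹))
    (mul_right_injective₀ (by
      have : (n : ℚ) ≠ 0 := by exact_mod_cast hn.ne'
      exact inv_ne_zero this))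
    (fun g g' => by
      have hn' : (0 : ℚ) < (n : ℚ)⁻¹ := by
        have : (0:ℚ) < n := by exact_mod_cast hn
        exact inv_pos.mpr this
      exact mul_le_mul_iff_right₀ hn')

lemma expRescale_coeff (hn : 0 < n) (x : HahnSeries ℚ R) (q : ℚ) :
    (HahnSeries.expRescale R n hn x).coeff ((n : ℚ) * q) = x.coeff q :=
  HahnSeries.embDomain_coeff (a := q)

lemma tauRescale_coeff (hn : 0 < n) (x : HahnSeries ℚ R) (q : ℚ) :
    (tauRescale R n hn x).coeff ((n : ℚ)⁻¹ * q) = x.coeff q :=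
  HahnSeries.embDomain_coeff (a := q)

lemma nq (hn : 0 < n) : ∀ q : ℚ, (n:ℚ) * ((n:ℚ)⁻¹ * q) = q := by
  intro q
  have : (n : ℚ) ≠ 0 := by exact_mod_cast hn.ne'
  field_simp

lemma qn (hn : 0 < n) : ∀ q : ℚ, (n:ℚ)⁻¹ * ((n:ℚ) * q) = q := by
  intro q
  have : (n : ℚ) ≠ 0 := by exact_mod_cast hn.ne'
  field_simp

lemma tau_exp (hn : 0 < n) (x : HahnSeries ℚ R) :
    tauRescale R n hn (HahnSeries.expRescale R n hn x) = x := by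
  ext q
  conv_lhs => rw [show q = (n:ℚ)⁻¹ * ((n:ℚ) * q) from (qn n hn q).symm]
  rw [tauRescale_coeff, expRescale_coeff]

lemma exp_tau (hn : 0 < n) (x : HahnSeries ℚ R) :
    HahnSeries.expRescale R n hn (tauRescale R n hn x) = x := by
  ext q
  conv_lhs => rw [show q = (n:ℚ) * ((n:ℚ)⁻¹ * q) from (nq n hn q).symm]
  rw [expRescale_coeff, tauRescale_coeff]

lemma tauRescale_single (hn : 0 < n) (q : ℚ) (a : R) :
    tauRescale R n hn (HahnSeries.single q a) = HahnSeries.single ((n:ℚ)⁻¹ * q) a :=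
  HahnSeries.embDomain_single

lemma expRescale_single (hn : 0 < n) (q : ℚ) (a : R) :
    HahnSeries.expRescale R n hn (HahnSeries.single q a) = HahnSeries.single ((n:ℚ) * q) a :=
  HahnSeries.embDomain_single

lemma map_tau (hn : 0 < n) (f : R →+* S) (x : HahnSeries ℚ R) :
    HahnSeries.mapRingHom f (tauRescale R n hn x)
      = tauRescale S n hn (HahnSeries.mapRingHom f x) := by
  ext q
  conv_lhs => rw [show q = (n:ℚ)⁻¹ * ((n:ℚ) * q) from (qn n hn q).symm]
  conv_rhs => rw [show q = (n:ℚ)⁻¹ * ((n:ℚ) * q) from (qn n hn q).symm]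
  rw [mapRingHom_coeff, tauRescale_coeff, tauRescale_coeff, mapRingHom_coeff]

end HahnAux

section Decomp
open Polynomial

variable {R : Type*} [CommRing R]

lemma decomp_exists [Nontrivial R] (r : R) (n : ℕ) (hn : 0 < n)
    (x : HahnSeries ℚ (AdjoinRoot (X ^ n - Polynomial.C r))) :
    ∃ v : ℕ → HahnSeries ℚ R,
      x = ∑ i ∈ Finset.range n,
        (HahnSeries.C (AdjoinRoot.root (X ^ n - Polynomial.C r))) ^ i *
          HahnSeries.mapRingHom (AdjoinRoot.of (X ^ n - Polynomial.C r)) (v i) := by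
  have hmon : (X ^ n - Polynomial.C r).Monic := monic_X_pow_sub_C r hn.ne'
  set pb := AdjoinRoot.powerBasis' hmon with hpb
  have hdim : pb.dim = n := natDegree_X_pow_sub_C
  set b := pb.basis with hb
  refine ⟨fun i => if h : i < pb.dim then x.map (b.coord ⟨i, h⟩) else 0, ?_⟩
  ext q
  rw [HahnAux.coeff_sum]
  have hbi : ∀ i : Fin pb.dim,
      b i = (AdjoinRoot.root (X ^ n - Polynomial.C r)) ^ (i : ℕ) := fun i => by
    rw [hb, pb.basis_eq_pow i]
    rfl
  have key : x.coeff q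
      = ∑ i ∈ Finset.range n, ((HahnSeries.C (AdjoinRoot.root (X ^ n - Polynomial.C r))) ^ i *
          HahnSeries.mapRingHom (AdjoinRoot.of (X ^ n - Polynomial.C r))
            (if h : i < pb.dim then x.map (b.coord ⟨i, h⟩) else 0)).coeff q := by
    rw [Finset.sum_range fun i => _]
    calc x.coeff q
        = ∑ i : Fin pb.dim, b.repr (x.coeff q) i • b i := (b.sum_repr (x.coeff q)).symm
      _ = _ := by
          refine Fintype.sum_equiv (finCongr hdim) _ _ fun i => ?_
          have hlt : (((finCongr hdim i : Fin n)) : ℕ) < pb.dim := by simpa using i.isLt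
          rw [dif_pos hlt]
          have hfin : (⟨(((finCongr hdim i : Fin n)) : ℕ), hlt⟩ : Fin pb.dim) = i := by
            ext; simp
          rw [hfin, ← map_pow, HahnSeries.C_apply, HahnSeries.coeff_single_zero_mul,
            HahnAux.mapRingHom_coeff, HahnSeries.map_coeff, Module.Basis.coord_apply,
            hbi i, Algebra.smul_def, AdjoinRoot.algebraMap_eq]
          simp [mul_comm]
  exact key

lemma decomp_zero [Nontrivial R] (r : R) (n : ℕ) (hn : 0 < n) (v : ℕ → HahnSeries ℚ R)
    (h : ∑ i ∈ Finset.range n,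
        (HahnSeries.C (AdjoinRoot.root (X ^ n - Polynomial.C r))) ^ i *
          HahnSeries.mapRingHom (AdjoinRoot.of (X ^ n - Polynomial.C r)) (v i) = 0) :
    ∀ i < n, v i = 0 := by
  have hmon : (X ^ n - Polynomial.C r).Monic := monic_X_pow_sub_C r hn.ne'
  set pb := AdjoinRoot.powerBasis' hmon with hpb
  have hdim : pb.dim = n := natDegree_X_pow_sub_C
  set b := pb.basis with hb
  have hbi : ∀ i : Fin pb.dim,
      b i = (AdjoinRoot.root (X ^ n - Polynomial.C r)) ^ (i : ℕ) := fun i => by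
    rw [hb, pb.basis_eq_pow i]
    rfl
  intro i hi
  ext q
  rw [HahnSeries.coeff_zero]
  have hq := congrArg (fun y => HahnSeries.coeff y q) h
  simp only [HahnAux.coeff_sum, HahnSeries.coeff_zero] at hq
  have hsum : ∑ j : Fin pb.dim,
      (fun j : Fin pb.dim => (v (j : ℕ)).coeff q) j • b j = 0 := by
    rw [← hq, Finset.sum_range fun j => _]
    refine Fintype.sum_equiv (finCongr hdim) _ _ fun j => ?_
    simp only [finCongr_apply, Fin.coe_cast]
    rw [hbi j, Algebra.smul_def, AdjoinRoot.algebraMap_eq, ← map_pow, HahnSeries.C_apply,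
      HahnSeries.coeff_single_zero_mul, HahnAux.mapRingHom_coeff]
    exact mul_comm _ _
  have := Fintype.linearIndependent_iff.mp b.linearIndependent _ hsum
    ⟨i, by rw [hdim]; exact hi⟩
  exact this

end Decomp

namespace HahnAux

lemma shift_sum {A : Type*} [CommRing A] (m : ℕ) (T c : A) (hc : T ^ (m+1) = c)
    (u : ℕ → A) :
    ∑ i ∈ Finset.range (m+1), T ^ (i+1) * u i
      = ∑ i ∈ Finset.range (m+1), T ^ i * (if i = 0 then c * u m else u (i-1)) := by
  rw [Finset.sum_range_succ, Finset.sum_range_succ']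
  simp [hc, mul_comm]

end HahnAux

set_option maxHeartbeats 2000000 in
open HahnAux in
/-- Let `r` be a non-zero-divisor in an `r`-adically complete commutative ring `R`, let `n > 0`,
let `R' = R[X]/(Xⁿ - r)` with `θ` the class of `X`, and let `Φ : HahnSeries ℚ R → HahnSeries ℚ R'`
send `Σ a_i T^i` to `Σ a_i T^(n·i)` (coefficients mapped along `R → R'`). Then `Φ` maps the ideal
`(single 1 1 - C r)` into the ideal `(single 1 1 - C θ)`, and the induced map on quotients is a
ring isomorphism. -/
theorem quotient_iso_of_adjoin_nth_root {R : Type*} [CommRing R] (r : R)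
    (hr : r ∈ nonZeroDivisors R) (hcomplete : IsAdicComplete (Ideal.span {r}) R)
    (n : ℕ) (hn : 0 < n)
    (Φ : HahnSeries ℚ R →+* HahnSeries ℚ (AdjoinRoot (Polynomial.X ^ n - Polynomial.C r)))
    (hΦ : Φ = (HahnSeries.expRescale (AdjoinRoot (Polynomial.X ^ n - Polynomial.C r)) n hn).comp
      (HahnSeries.mapRingHom (AdjoinRoot.of (Polynomial.X ^ n - Polynomial.C r)))) :
    ∃ h : Ideal.span {HahnSeries.single (1 : ℚ) (1 : R) - HahnSeries.C r} ≤
        Ideal.comap Φ (Ideal.span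
          {HahnSeries.single (1 : ℚ) (1 : AdjoinRoot (Polynomial.X ^ n - Polynomial.C r)) -
            HahnSeries.C (AdjoinRoot.root (Polynomial.X ^ n - Polynomial.C r))}),
      Function.Bijective
        (Ideal.quotientMap
          (Ideal.span
            {HahnSeries.single (1 : ℚ) (1 : AdjoinRoot (Polynomial.X ^ n - Polynomial.C r)) -
              HahnSeries.C (AdjoinRoot.root (Polynomial.X ^ n - Polynomial.C r))})
          Φ h) := by
  classical
  rcases subsingleton_or_nontrivial R with htriv | hnontriv
  · -- trivial ring case
    haveI : Subsingleton (AdjoinRoot (Polynomial.X ^ n - Polynomial.C r)) := Module.subsingleton R (AdjoinRoot (Polynomial.X ^ n - Polynomial.C r))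
    haveI : Subsingleton (HahnSeries ℚ (AdjoinRoot (Polynomial.X ^ n - Polynomial.C r))) := Module.subsingleton (AdjoinRoot (Polynomial.X ^ n - Polynomial.C r)) _
    haveI : Subsingleton (HahnSeries ℚ (AdjoinRoot (Polynomial.X ^ n - Polynomial.C r)) ⧸ (Ideal.span {HahnSeries.single (1 : ℚ) (1 : AdjoinRoot (Polynomial.X ^ n - Polynomial.C r)) - HahnSeries.C (AdjoinRoot.root (Polynomial.X ^ n - Polynomial.C r))})) := Quotient.instSubsingletonQuotient _
    haveI : Subsingleton (HahnSeries ℚ R) := Module.subsingleton R _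
    haveI : Subsingleton (HahnSeries ℚ R ⧸ (Ideal.span {HahnSeries.single (1 : ℚ) (1 : R) - HahnSeries.C r})) := Quotient.instSubsingletonQuotient _
    refine ⟨fun x _ => ?_, fun a b _ => Subsingleton.elim a b,
      fun y => ⟨Ideal.Quotient.mk (Ideal.span {HahnSeries.single (1 : ℚ) (1 : R) - HahnSeries.C r}) 0, Subsingleton.elim _ _⟩⟩
    simp only [Ideal.mem_comap]
    rw [Subsingleton.elim (Φ x) 0]
    exact zero_mem _
  · -- nontrivial case
    have hθn : (AdjoinRoot.root (Polynomial.X ^ n - Polynomial.C r)) ^ n = AdjoinRoot.of (Polynomial.X ^ n - Polynomial.C r) r := by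
      have h0 : AdjoinRoot.mk (Polynomial.X ^ n - Polynomial.C r) (Polynomial.X ^ n - Polynomial.C r) = 0 := AdjoinRoot.mk_self
      have h1 := AdjoinRoot.aeval_eq (f := (Polynomial.X ^ n - Polynomial.C r)) (Polynomial.X ^ n - Polynomial.C r)
      rw [h0] at h1
      simp only [map_sub, map_pow, Polynomial.aeval_X, Polynomial.aeval_C] at h1
      rw [sub_eq_zero] at h1
      rw [h1, AdjoinRoot.algebraMap_eq]
    have hnQ : (n : ℚ) ≠ 0 := by exact_mod_cast hn.ne'
    have hΦf : Φ (HahnSeries.single (1 : ℚ) (1 : R) - HahnSeries.C r)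
        = (HahnSeries.single (1 : ℚ) (1 : (AdjoinRoot (Polynomial.X ^ n - Polynomial.C r)))) ^ n - (HahnSeries.C (AdjoinRoot.root (Polynomial.X ^ n - Polynomial.C r))) ^ n := by
      rw [hΦ, RingHom.comp_apply, map_sub, map_sub]
      congr 1
      · rw [mapRingHom_single, map_one, expRescale_single, mul_one,
          HahnSeries.single_pow, one_pow, nsmul_eq_mul, mul_one]
      · rw [HahnSeries.C_apply, mapRingHom_single, expRescale_single, mul_zero,
          ← HahnSeries.C_apply, ← map_pow, hθn]
    have h : (Ideal.span {HahnSeries.single (1 : ℚ) (1 : R) - HahnSeries.C r}) ≤ Ideal.comap Φ (Ideal.span {HahnSeries.single (1 : ℚ) (1 : AdjoinRoot (Polynomial.X ^ n - Polynomial.C r)) - HahnSeries.C (AdjoinRoot.root (Polynomial.X ^ n - Polynomial.C r))}) := by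
      rw [Ideal.span_le, Set.singleton_subset_iff]
      simp only [SetLike.mem_coe, Ideal.mem_comap]
      rw [hΦf]
      exact Ideal.mem_span_singleton.mpr
        (sub_dvd_pow_sub_pow (HahnSeries.single (1 : ℚ) (1 : (AdjoinRoot (Polynomial.X ^ n - Polynomial.C r)))) (HahnSeries.C (AdjoinRoot.root (Polynomial.X ^ n - Polynomial.C r))) n)
    refine ⟨h, ?_, ?_⟩
    · -- injectivity
      refine Ideal.quotientMap_injective' (fun y hy => ?_)
      rw [Ideal.mem_comap] at hy
      obtain ⟨z, hz⟩ := Ideal.mem_span_singleton.mp hy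
      have h1 : (HahnSeries.mapRingHom (AdjoinRoot.of (Polynomial.X ^ n - Polynomial.C r))) y = (HahnSeries.single ((n:ℚ)⁻¹) (1 : (AdjoinRoot (Polynomial.X ^ n - Polynomial.C r))) - HahnSeries.C (AdjoinRoot.root (Polynomial.X ^ n - Polynomial.C r)))
          * tauRescale (AdjoinRoot (Polynomial.X ^ n - Polynomial.C r)) n hn z := by
        have h2 := congrArg (tauRescale (AdjoinRoot (Polynomial.X ^ n - Polynomial.C r)) n hn) hz
        rw [hΦ, RingHom.comp_apply, tau_exp n hn, map_mul, map_sub] at h2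
        rw [h2, tauRescale_single, HahnSeries.C_apply, tauRescale_single, mul_one, mul_zero,
          ← HahnSeries.C_apply]
      obtain ⟨v, hv⟩ := decomp_exists r n hn (tauRescale (AdjoinRoot (Polynomial.X ^ n - Polynomial.C r)) n hn z)
      obtain ⟨m, hm⟩ : ∃ m, n = m + 1 := ⟨n - 1, (Nat.succ_pred_eq_of_pos hn).symm⟩
      set s : HahnSeries ℚ R := HahnSeries.single ((n:ℚ)⁻¹) 1 with hs
      have hes : (HahnSeries.mapRingHom (AdjoinRoot.of (Polynomial.X ^ n - Polynomial.C r))) s = HahnSeries.single ((n:ℚ)⁻¹) (1 : (AdjoinRoot (Polynomial.X ^ n - Polynomial.C r))) := by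
        rw [hs, mapRingHom_single, map_one]
      have hA : HahnSeries.single ((n:ℚ)⁻¹) (1 : (AdjoinRoot (Polynomial.X ^ n - Polynomial.C r))) *
          ∑ i ∈ Finset.range n, (HahnSeries.C (AdjoinRoot.root (Polynomial.X ^ n - Polynomial.C r))) ^ i * (HahnSeries.mapRingHom (AdjoinRoot.of (Polynomial.X ^ n - Polynomial.C r))) (v i)
          = ∑ i ∈ Finset.range n, (HahnSeries.C (AdjoinRoot.root (Polynomial.X ^ n - Polynomial.C r))) ^ i * (HahnSeries.mapRingHom (AdjoinRoot.of (Polynomial.X ^ n - Polynomial.C r))) (s * v i) := by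
        rw [Finset.mul_sum]
        refine Finset.sum_congr rfl fun i _ => ?_
        rw [map_mul, hes]
        ring
      have hB : HahnSeries.C (AdjoinRoot.root (Polynomial.X ^ n - Polynomial.C r)) * ∑ i ∈ Finset.range n, (HahnSeries.C (AdjoinRoot.root (Polynomial.X ^ n - Polynomial.C r))) ^ i * (HahnSeries.mapRingHom (AdjoinRoot.of (Polynomial.X ^ n - Polynomial.C r))) (v i)
          = ∑ i ∈ Finset.range n, (HahnSeries.C (AdjoinRoot.root (Polynomial.X ^ n - Polynomial.C r))) ^ (i+1) * (HahnSeries.mapRingHom (AdjoinRoot.of (Polynomial.X ^ n - Polynomial.C r))) (v i) := by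
        rw [Finset.mul_sum]
        refine Finset.sum_congr rfl fun i _ => ?_
        rw [pow_succ]
        ring
      have hCθn : (HahnSeries.C (AdjoinRoot.root (Polynomial.X ^ n - Polynomial.C r))) ^ (m+1) = (HahnSeries.mapRingHom (AdjoinRoot.of (Polynomial.X ^ n - Polynomial.C r))) (HahnSeries.C r : HahnSeries ℚ R) := by
        rw [← hm, ← map_pow, hθn, HahnSeries.C_apply, HahnSeries.C_apply, mapRingHom_single]
      set w : ℕ → HahnSeries ℚ R :=
        fun i => if i = 0 then HahnSeries.C r * v m else v (i-1) with hw
      have hC : ∑ i ∈ Finset.range n, (HahnSeries.C (AdjoinRoot.root (Polynomial.X ^ n - Polynomial.C r))) ^ (i+1) * (HahnSeries.mapRingHom (AdjoinRoot.of (Polynomial.X ^ n - Polynomial.C r))) (v i)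
          = ∑ i ∈ Finset.range n, (HahnSeries.C (AdjoinRoot.root (Polynomial.X ^ n - Polynomial.C r))) ^ i * (HahnSeries.mapRingHom (AdjoinRoot.of (Polynomial.X ^ n - Polynomial.C r))) (w i) := by
        rw [show Finset.range n = Finset.range (m+1) from by rw [hm], shift_sum m _ _ hCθn]
        refine Finset.sum_congr rfl fun i _ => ?_
        congr 1
        simp only [hw]
        split_ifs with h0
        · exact (RingHom.map_mul _ _ _).symm
        · rfl
      have hE : ∑ i ∈ Finset.range n, (HahnSeries.C (AdjoinRoot.root (Polynomial.X ^ n - Polynomial.C r))) ^ i * (HahnSeries.mapRingHom (AdjoinRoot.of (Polynomial.X ^ n - Polynomial.C r))) (s * v i)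
          - ∑ i ∈ Finset.range n, (HahnSeries.C (AdjoinRoot.root (Polynomial.X ^ n - Polynomial.C r))) ^ i * (HahnSeries.mapRingHom (AdjoinRoot.of (Polynomial.X ^ n - Polynomial.C r))) (w i) = (HahnSeries.mapRingHom (AdjoinRoot.of (Polynomial.X ^ n - Polynomial.C r))) y := by
        rw [← hC, ← hA, ← hB, ← sub_mul, ← hv, h1]
      set u0 : ℕ → HahnSeries ℚ R := fun i => if i = 0 then y else 0 with hu0
      have hD : (HahnSeries.mapRingHom (AdjoinRoot.of (Polynomial.X ^ n - Polynomial.C r))) y = ∑ i ∈ Finset.range n, (HahnSeries.C (AdjoinRoot.root (Polynomial.X ^ n - Polynomial.C r))) ^ i * (HahnSeries.mapRingHom (AdjoinRoot.of (Polynomial.X ^ n - Polynomial.C r))) (u0 i) := by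
        rw [show Finset.range n = Finset.range (m+1) from by rw [hm], Finset.sum_range_succ']
        simp [hu0]
      have hzero := decomp_zero r n hn (fun i => u0 i - (s * v i - w i)) (by
        simp only [map_sub, mul_sub, Finset.sum_sub_distrib]
        rw [hE, ← hD]
        exact sub_self _)
      have hkey : ∀ i < n, u0 i = s * v i - w i := by
        intro i hi
        have := hzero i hi
        rwa [sub_eq_zero] at this
      have hrel : ∀ j, j + 1 < n → v j = s * v (j+1) := by
        intro j hj
        have h5 := hkey (j+1) hj
        rw [hu0, hw] at h5
        simp only [Nat.succ_ne_zero, if_neg, Nat.add_sub_cancel, ite_false] at h5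
        rw [eq_comm, sub_eq_zero] at h5
        exact h5.symm
      have hvk : ∀ j, j ≤ m → v (m - j) = s ^ j * v m := by
        intro j
        induction j with
        | zero => intro _; simp
        | succ k ih =>
          intro hj
          have hk : k ≤ m := Nat.le_of_succ_le hj
          have h3 : m - (k+1) + 1 = m - k := by omega
          have h4 := hrel (m - (k+1)) (by omega)
          rw [h3, ih hk] at h4
          rw [h4, pow_succ]
          ring
      have hv0 : v 0 = s ^ m * v m := by
        have h6 := hvk m le_rfl
        rwa [Nat.sub_self] at h6
      have hy0 : y = s * v 0 - HahnSeries.C r * v m := by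
        have h7 := hkey 0 hn
        rw [hu0, hw] at h7
        simpa using h7
      have hsn : s ^ (m+1) = HahnSeries.single (1:ℚ) (1:R) := by
        rw [hs, HahnSeries.single_pow, one_pow, ← hm, nsmul_eq_mul, mul_inv_cancel₀ hnQ]
      have hyf : y = (HahnSeries.single (1:ℚ) (1:R) - HahnSeries.C r) * v m := by
        rw [hy0, hv0, ← hsn]
        ring
      exact Ideal.mem_span_singleton.mpr ⟨v m, hyf⟩
    · -- surjectivity
      intro c
      obtain ⟨x, rfl⟩ := Ideal.Quotient.mk_surjective c
      obtain ⟨v, hv⟩ := decomp_exists r n hn x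
      set V : HahnSeries ℚ R :=
        ∑ i ∈ Finset.range n, (HahnSeries.single (1:ℚ) (1:R)) ^ i * v i with hV
      have hEV : (HahnSeries.mapRingHom (AdjoinRoot.of (Polynomial.X ^ n - Polynomial.C r))) V = ∑ i ∈ Finset.range n,
          (HahnSeries.single (1:ℚ) (1:(AdjoinRoot (Polynomial.X ^ n - Polynomial.C r)))) ^ i * (HahnSeries.mapRingHom (AdjoinRoot.of (Polynomial.X ^ n - Polynomial.C r))) (v i) := by
        rw [hV, map_sum]
        refine Finset.sum_congr rfl fun i _ => ?_
        rw [map_mul, map_pow, mapRingHom_single, map_one]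
      have hxV : (HahnSeries.mapRingHom (AdjoinRoot.of (Polynomial.X ^ n - Polynomial.C r))) V - x ∈ (Ideal.span {HahnSeries.single (1 : ℚ) (1 : AdjoinRoot (Polynomial.X ^ n - Polynomial.C r)) - HahnSeries.C (AdjoinRoot.root (Polynomial.X ^ n - Polynomial.C r))}) := by
        rw [hv, hEV, ← Finset.sum_sub_distrib]
        refine Ideal.sum_mem _ fun i _ => ?_
        rw [← sub_mul]
        refine Ideal.mul_mem_right _ _ (Ideal.mem_span_singleton.mpr ?_)
        exact sub_dvd_pow_sub_pow _ _ i
      refine ⟨Ideal.Quotient.mk (Ideal.span {HahnSeries.single (1 : ℚ) (1 : R) - HahnSeries.C r}) (tauRescale R n hn V), ?_⟩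
      rw [Ideal.quotientMap_mk, hΦ, RingHom.comp_apply, map_tau n hn, exp_tau n hn]
      exact Ideal.Quotient.eq.mpr hxV


end
end

section
/- Let p be a prime and let E be a perfect field of characteristic p. Then the quotient ring (HahnSeries ℚ (WittVector p E)) / (T − p), where T is the Hahn series single 1 1 and the quotient is by the ideal generated by T − p, is a field. -/
noncomputable section
set_option linter.unusedSectionVars false
namespace HWAux

variable (p : ℕ) [hp : Fact p.Prime] (E : Type*) [Field E] [CharP E p] [PerfectRing E p]

local notation "W" => WittVector p E

lemma coeff0_ghost (x : W) : WittVector.ghostComponent 0 x = x.coeff 0 := by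
  rw [WittVector.ghostComponent_apply, wittPolynomial_zero]
  simp

lemma coeff0_sub (x y : W) : (x - y).coeff 0 = x.coeff 0 - y.coeff 0 := by
  rw [← coeff0_ghost, ← coeff0_ghost, ← coeff0_ghost, map_sub]

lemma dvd_p_iff (a : W) : (p : W) ∣ a ↔ a.coeff 0 = 0 := by
  constructor
  · rintro ⟨b, rfl⟩
    rw [WittVector.mul_coeff_zero, WittVector.coeff_p_zero, zero_mul]
  · intro h
    rcases eq_or_ne a 0 with rfl | ha
    · exact dvd_zero _
    · obtain ⟨m, b, hb0, rfl⟩ := WittVector.exists_eq_pow_p_mul a ha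
      cases m with
      | zero => rw [pow_zero, one_mul] at h ⊢; exact absurd h hb0
      | succ m => exact ⟨(p : W) ^ m * b, by ring⟩

open scoped Classical in
/-- divide by p -/
def sdiv (a : W) : W := if h : (p : W) ∣ a then h.choose else 0

lemma sdiv_spec {a : W} (h : a.coeff 0 = 0) : a = p * sdiv p E a := by
  have h' : (p : W) ∣ a := (dvd_p_iff p E a).mpr h
  rw [sdiv, dif_pos h']
  exact h'.choose_spec

/-- iterated tails of the Teichmüller expansion -/
def tail : ℕ → W → W
  | 0, a => a
  | n + 1, a => sdiv p E (tail n a - WittVector.teichmuller p ((tail n a).coeff 0))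

/-- Teichmüller digits -/
def digit (n : ℕ) (a : W) : W := WittVector.teichmuller p ((tail p E n a).coeff 0)

lemma tail_succ (n : ℕ) (a : W) :
    tail p E n a = digit p E n a + p * tail p E (n + 1) a := by
  have h : (tail p E n a - WittVector.teichmuller p ((tail p E n a).coeff 0)).coeff 0 = 0 := by
    rw [coeff0_sub, WittVector.teichmuller_coeff_zero, sub_self]
  have := sdiv_spec p E h
  rw [tail, ← this, digit]
  ring

lemma digit_zero_zero : digit p E 0 (0 : W) = 0 := by
  rw [digit, tail]
  simp [WittVector.teichmuller_zero]

lemma isUnit_digit {n : ℕ} {a : W} (h : digit p E n a ≠ 0) : IsUnit (digit p E n a) := by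
  apply WittVector.isUnit_of_coeff_zero_ne_zero
  rw [digit, WittVector.teichmuller_coeff_zero]
  intro hc
  exact h (by rw [digit, hc, WittVector.teichmuller_zero])


open Pointwise

/-- the set of natural numbers inside ℚ -/
def NN : Set ℚ := Set.range ((↑) : ℕ → ℚ)

lemma NN_isPWO : NN.IsPWO := by
  have h : ((Set.univ : Set ℕ)).IsPWO := by
    apply Set.IsWF.isPWO
    exact (Set.isWF_univ_iff).mpr inferInstance
  have := h.image_of_monotone (f := ((↑) : ℕ → ℚ)) (fun a b hab => Nat.cast_le.mpr hab)
  simpa [Set.image_univ, NN] using this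

lemma zero_mem_NN : (0 : ℚ) ∈ NN := ⟨0, by simp⟩

/-- descending sequences are impossible in a PWO set -/
lemma no_desc {S : Set ℚ} (hS : S.IsPWO) (g : ℕ → ℚ) (hg : StrictAnti g)
    (hmem : ∀ n, g n ∈ S) : False := by
  rw [Set.isPWO_iff_isWF] at hS
  rw [Set.isWF_iff_no_descending_seq] at hS
  exact hS g hg hmem

/-- finiteness of backwards-nat fibers -/
lemma fin_fiber {S : Set ℚ} (hS : S.IsPWO) (z : ℚ) : {j : ℕ | z - (j : ℚ) ∈ S}.Finite := by
  by_contra h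
  have hinf : {j : ℕ | z - (j : ℚ) ∈ S}.Infinite := h
  haveI := hinf.to_subtype
  set e := Nat.Subtype.orderIsoOfNat {j : ℕ | z - (j : ℚ) ∈ S} with he
  have hanti : StrictAnti (fun n => z - ((e n : ℕ) : ℚ)) := by
    intro a b hab
    simp only
    have h1 : ((e a : ℕ) : ℚ) < ((e b : ℕ) : ℚ) := by
      exact_mod_cast Subtype.coe_lt_coe.mpr (e.strictMono hab)
    exact sub_lt_sub_left h1 z
  exact no_desc hS _ hanti (fun n => (e n).2)


section Construction

open scoped Classical

variable (f : HahnSeries ℚ (WittVector p E))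

/-- the support of `f` fattened by natural number shifts -/
def Splus : Set ℚ := f.support + NN

lemma Splus_isPWO : (Splus p E f).IsPWO := f.isPWO_support.add NN_isPWO

lemma support_subset_Splus : f.support ⊆ Splus p E f := by
  intro x hx
  have := Set.add_mem_add hx zero_mem_NN
  simpa [Splus] using this

lemma Splus_add_nat {z : ℚ} (hz : z ∈ Splus p E f) (n : ℕ) : z + (n : ℚ) ∈ Splus p E f := by
  obtain ⟨x, hx, m, ⟨k, rfl⟩, rfl⟩ := hz
  have hmem : ((k + n : ℕ) : ℚ) ∈ NN := ⟨k + n, rfl⟩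
  have h2 := Set.add_mem_add hx hmem
  have h3 : x + (k : ℚ) + (n : ℚ) = x + ((k + n : ℕ) : ℚ) := by push_cast; ring
  rw [h3]
  exact h2

lemma mem_Splus_of_sub {z : ℚ} {j : ℕ} (hj : z - (j : ℚ) ∈ Splus p E f) : z ∈ Splus p E f := by
  have := Splus_add_nat p E f hj j
  simpa using this

/-- indices of fattened support below `z` -/
def Jfin (z : ℚ) : Finset ℕ := (fin_fiber (Splus_isPWO p E f) z).toFinset

lemma mem_Jfin {z : ℚ} {j : ℕ} : j ∈ Jfin p E f z ↔ z - (j : ℚ) ∈ Splus p E f := by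
  rw [Jfin, Set.Finite.mem_toFinset]; rfl

lemma zero_mem_Jfin {z : ℚ} (hz : z ∈ Splus p E f) : 0 ∈ Jfin p E f z := by
  rw [mem_Jfin]; simpa using hz

/-- recursion depth at `z` -/
def depth (z : ℚ) : ℕ := (Jfin p E f z).card

lemma depth_pos {z : ℚ} (hz : z ∈ Splus p E f) : 0 < depth p E f z :=
  Finset.card_pos.mpr ⟨0, zero_mem_Jfin p E f hz⟩

lemma depth_lt {z : ℚ} (hz : z ∈ Splus p E f) {j : ℕ} (hj : j ∈ Jfin p E f z) (hj0 : j ≠ 0) :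
    depth p E f (z - (j : ℚ)) < depth p E f z := by
  have hle : (Jfin p E f (z - (j : ℚ))).card ≤ ((Jfin p E f z).erase 0).card := by
    apply Finset.card_le_card_of_injOn (fun i => i + j)
    · intro i hi
      simp only [Finset.mem_coe] at hi ⊢
      rw [mem_Jfin] at hi
      have hcast : z - ((i + j : ℕ) : ℚ) = z - (j : ℚ) - (i : ℚ) := by push_cast; ring
      rw [Finset.mem_erase, mem_Jfin, hcast]
      exact ⟨by omega, hi⟩
    · intro a _ b _ hab
      simpa using hab
  rw [Finset.card_erase_of_mem (zero_mem_Jfin p E f hz)] at hle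
  have hpos := depth_pos p E f hz
  have hgoal : (Jfin p E f (z - (j : ℚ))).card < (Jfin p E f z).card := by
    have hpos' : 0 < (Jfin p E f z).card := hpos
    omega
  exact hgoal

/-- approximants to the digit-carrying value function -/
def Vaux : ℕ → ℚ → WittVector p E
  | 0, _ => 0
  | k + 1, z =>
    if z ∈ Splus p E f then
      f.coeff z + ∑ j ∈ (Jfin p E f z).erase 0, digit p E j (Vaux k (z - (j : ℚ)))
    else 0

lemma Vaux_succ (k : ℕ) (z : ℚ) :
    Vaux p E f (k + 1) z =
      if z ∈ Splus p E f then
        f.coeff z + ∑ j ∈ (Jfin p E f z).erase 0, digit p E j (Vaux p E f k (z - (j : ℚ)))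
      else 0 := by
  rfl

lemma Vaux_stable : ∀ (k : ℕ) (z : ℚ), depth p E f z ≤ k → Vaux p E f (k + 1) z = Vaux p E f k z := by
  intro k
  induction k with
  | zero =>
    intro z hz
    have hz' : z ∉ Splus p E f := fun h => by
      have := depth_pos p E f h; omega
    rw [Vaux_succ, if_neg hz']
    rfl
  | succ k ih =>
    intro z hz
    by_cases hmem : z ∈ Splus p E f
    · rw [Vaux_succ, if_pos hmem, Vaux_succ, if_pos hmem]
      congr 1
      apply Finset.sum_congr rfl
      intro j hj
      rw [Finset.mem_erase] at hj
      have hd : depth p E f (z - (j : ℚ)) ≤ k := by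
        have := depth_lt p E f hmem hj.2 hj.1
        omega
      rw [ih _ hd]
    · rw [Vaux_succ, if_neg hmem, Vaux_succ, if_neg hmem]

/-- the value function: original coefficients plus accumulated incoming digit carries -/
def V (z : ℚ) : WittVector p E := Vaux p E f (depth p E f z + 1) z

lemma Vaux_eq_V : ∀ (k : ℕ) (z : ℚ), depth p E f z < k → Vaux p E f k z = V p E f z := by
  intro k
  induction k with
  | zero => intro z h; omega
  | succ k ih =>
    intro z h
    rcases eq_or_lt_of_le (Nat.lt_succ_iff.mp h) with he | hlt
    · rw [V, ← he]
    · rw [Vaux_stable p E f k z (le_of_lt hlt)]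
      exact ih z hlt

lemma V_spec (z : ℚ) :
    V p E f z =
      if z ∈ Splus p E f then
        f.coeff z + ∑ j ∈ (Jfin p E f z).erase 0, digit p E j (V p E f (z - (j : ℚ)))
      else 0 := by
  rw [V, Vaux_succ]
  by_cases hmem : z ∈ Splus p E f
  · rw [if_pos hmem, if_pos hmem]
    congr 1
    apply Finset.sum_congr rfl
    intro j hj
    rw [Finset.mem_erase] at hj
    rw [Vaux_eq_V p E f _ _ (depth_lt p E f hmem hj.2 hj.1)]
  · rw [if_neg hmem, if_neg hmem]

lemma V_eq_zero {z : ℚ} (hz : z ∉ Splus p E f) : V p E f z = 0 := by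
  rw [V_spec, if_neg hz]

end Construction

section Reduction

open scoped Classical

variable (f : HahnSeries ℚ (WittVector p E))

lemma tail_zero (a : WittVector p E) : tail p E 0 a = a := rfl

lemma ptail_sub (j : ℕ) (a : WittVector p E) :
    (p : WittVector p E) * tail p E (j + 1) a = tail p E j a - digit p E j a := by
  rw [tail_succ p E j a]
  ring

/-- the Teichmüller-reduced series -/
def gred : HahnSeries ℚ (WittVector p E) :=
  ⟨fun z => digit p E 0 (V p E f z), by
    apply ((Splus_isPWO p E f).mono)
    intro z hz
    rw [Function.mem_support] at hz
    by_contra h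
    exact hz (by rw [V_eq_zero p E f h, digit_zero_zero])⟩

lemma gred_coeff (z : ℚ) : (gred p E f).coeff z = digit p E 0 (V p E f z) := rfl

/-- the witness series for the congruence -/
def Hser : HahnSeries ℚ (WittVector p E) :=
  ⟨fun z => ∑ j ∈ Jfin p E f z, tail p E (j + 1) (V p E f (z - (j : ℚ))), by
    apply (((Splus_isPWO p E f).add NN_isPWO).mono)
    intro z hz
    rw [Function.mem_support] at hz
    have hne : (Jfin p E f z).Nonempty := by
      by_contra h
      rw [Finset.not_nonempty_iff_eq_empty] at h
      rw [h, Finset.sum_empty] at hz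
      exact hz rfl
    obtain ⟨j, hj⟩ := hne
    rw [mem_Jfin] at hj
    have : ((j : ℚ)) ∈ NN := ⟨j, rfl⟩
    have h2 := Set.add_mem_add hj this
    simpa using h2⟩

lemma Hser_coeff (z : ℚ) :
    (Hser p E f).coeff z = ∑ j ∈ Jfin p E f z, tail p E (j + 1) (V p E f (z - (j : ℚ))) := rfl

lemma Jfin_empty {z : ℚ} (hz : z ∉ Splus p E f) : Jfin p E f z = ∅ := by
  rw [Finset.eq_empty_iff_forall_notMem]
  intro j hj
  rw [mem_Jfin] at hj
  exact hz (mem_Splus_of_sub p E f hj)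

lemma Jfin_sub_one_empty {z : ℚ} (hz : z ∉ Splus p E f) : Jfin p E f (z - 1) = ∅ := by
  rw [Finset.eq_empty_iff_forall_notMem]
  intro j hj
  rw [mem_Jfin] at hj
  have : z - ((j + 1 : ℕ) : ℚ) ∈ Splus p E f := by
    push_cast
    convert hj using 1
    ring
  exact hz (mem_Splus_of_sub p E f this)

lemma key_coeff (z : ℚ) :
    (p : WittVector p E) * (Hser p E f).coeff z - (Hser p E f).coeff (z - 1) =
      f.coeff z - (gred p E f).coeff z := by
  by_cases hmem : z ∈ Splus p E f
  · -- reindex the shifted coefficient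
    have hA : (Hser p E f).coeff (z - 1) =
        ∑ i ∈ (Jfin p E f z).erase 0, tail p E i (V p E f (z - (i : ℚ))) := by
      rw [Hser_coeff]
      refine Finset.sum_bij' (i := fun a _ => a + 1) (j := fun b _ => b - 1) ?_ ?_ ?_ ?_ ?_
      case refine_1 =>
        intro a ha
        show a + 1 ∈ (Jfin p E f z).erase 0
        rw [mem_Jfin] at ha
        rw [Finset.mem_erase, mem_Jfin]
        refine ⟨by omega, ?_⟩
        have hc : z - ((a + 1 : ℕ) : ℚ) = z - 1 - (a : ℚ) := by push_cast; ring
        rw [hc]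
        exact ha
      case refine_2 =>
        intro b hb
        show b - 1 ∈ Jfin p E f (z - 1)
        rw [Finset.mem_erase, mem_Jfin] at hb
        rw [mem_Jfin]
        have hb1 : 1 ≤ b := Nat.one_le_iff_ne_zero.mpr hb.1
        have hc : z - 1 - ((b - 1 : ℕ) : ℚ) = z - (b : ℚ) := by
          push_cast [hb1]
          ring
        rw [hc]
        exact hb.2
      case refine_3 => intro a _; show a + 1 - 1 = a; omega
      case refine_4 =>
        intro b hb
        show b - 1 + 1 = b
        rw [Finset.mem_erase] at hb
        have : 1 ≤ b := Nat.one_le_iff_ne_zero.mpr hb.1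
        omega
      case refine_5 =>
        intro a _
        show tail p E (a + 1) (V p E f (z - 1 - (a : ℚ))) = tail p E (a + 1) (V p E f (z - ((a + 1 : ℕ) : ℚ)))
        have hc : z - 1 - (a : ℚ) = z - ((a + 1 : ℕ) : ℚ) := by push_cast; ring
        rw [hc]
    have hsplit : (p : WittVector p E) * (Hser p E f).coeff z =
        (∑ j ∈ (Jfin p E f z).erase 0, (p : WittVector p E) * tail p E (j + 1) (V p E f (z - (j : ℚ))))
          + (p : WittVector p E) * tail p E 1 (V p E f z) := by
      rw [Hser_coeff, Finset.mul_sum, ← Finset.sum_erase_add _ _ (zero_mem_Jfin p E f hmem)]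
      norm_num
    have hterm : ∀ j ∈ (Jfin p E f z).erase 0,
        (p : WittVector p E) * tail p E (j + 1) (V p E f (z - (j : ℚ)))
          - tail p E j (V p E f (z - (j : ℚ))) = - digit p E j (V p E f (z - (j : ℚ))) := by
      intro j _
      rw [ptail_sub]
      ring
    have hVs : ∑ j ∈ (Jfin p E f z).erase 0, digit p E j (V p E f (z - (j : ℚ)))
        = V p E f z - f.coeff z := by
      have h := V_spec p E f z
      rw [if_pos hmem] at h
      rw [h]
      ring
    have h0 : (p : WittVector p E) * tail p E 1 (V p E f z)
        = V p E f z - digit p E 0 (V p E f z) := by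
      rw [ptail_sub, tail_zero]
    rw [hA, hsplit, gred_coeff]
    rw [add_sub_right_comm, ← Finset.sum_sub_distrib, Finset.sum_congr rfl hterm,
      Finset.sum_neg_distrib, hVs, h0]
    ring
  · have h1 : (Hser p E f).coeff z = 0 := by
      rw [Hser_coeff, Jfin_empty p E f hmem, Finset.sum_empty]
    have h2 : (Hser p E f).coeff (z - 1) = 0 := by
      rw [Hser_coeff, Jfin_sub_one_empty p E f hmem, Finset.sum_empty]
    have h3 : f.coeff z = 0 := by
      by_contra h
      exact hmem (support_subset_Splus p E f h)
    have h4 : (gred p E f).coeff z = 0 := by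
      rw [gred_coeff, V_eq_zero p E f hmem, digit_zero_zero]
    rw [h1, h2, h3, h4]
    ring

/-- the key congruence: `f` is congruent to its Teichmüller reduction mod `T - p`. -/
lemma key : f - gred p E f =
    ((p : HahnSeries ℚ (WittVector p E)) - HahnSeries.single (1 : ℚ) 1) * Hser p E f := by
  ext z : 2
  rw [HahnSeries.coeff_sub, sub_mul, HahnSeries.coeff_sub]
  have h1 : ((p : HahnSeries ℚ (WittVector p E)) * Hser p E f).coeff z
      = (p : WittVector p E) * (Hser p E f).coeff z := by
    rw [← map_natCast (HahnSeries.C : WittVector p E →+* HahnSeries ℚ (WittVector p E)) p]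
    exact HahnSeries.coeff_single_zero_mul
  have h2 : ((HahnSeries.single (1 : ℚ) (1 : WittVector p E)) * Hser p E f).coeff z
      = (Hser p E f).coeff (z - 1) := by
    have h := HahnSeries.coeff_single_mul_add (r := (1 : WittVector p E)) (x := Hser p E f)
      (a := z - 1) (b := 1)
    rw [sub_add_cancel] at h
    rw [h, one_mul]
  rw [h1, h2, key_coeff]

end Reduction

section Units

open scoped Classical

variable (f : HahnSeries ℚ (WittVector p E))

lemma isUnit_gred (hg : gred p E f ≠ 0) : IsUnit (gred p E f) := by
  classical
  set g := gred p E f with hgdef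
  have hu0 : g.coeff g.order ≠ 0 := mt HahnSeries.coeff_order_eq_zero.mp hg
  have hu : IsUnit (g.coeff g.order) := by
    have hh : g.coeff g.order = digit p E 0 (V p E f g.order) := rfl
    rw [hh] at hu0 ⊢
    exact isUnit_digit p E hu0
  set u : (WittVector p E)ˣ := hu.unit with hudef
  have huspec : (u : WittVector p E) = g.coeff g.order := hu.unit_spec
  set s : HahnSeries ℚ (WittVector p E) :=
    HahnSeries.single (-g.order) ((u⁻¹ : (WittVector p E)ˣ) : WittVector p E) with hs
  have hsmul : ∀ y : ℚ, (s * g).coeff y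
      = ((u⁻¹ : (WittVector p E)ˣ) : WittVector p E) * g.coeff (y + g.order) := by
    intro y
    have h := HahnSeries.coeff_single_mul_add
      (r := ((u⁻¹ : (WittVector p E)ˣ) : WittVector p E)) (x := g)
      (a := y + g.order) (b := -g.order)
    have hc : y + g.order + -g.order = y := by ring
    rw [hc] at h
    exact h
  set x : HahnSeries ℚ (WittVector p E) := 1 - s * g with hx
  have hcoeffx : ∀ y : ℚ, y ≤ 0 → x.coeff y = 0 := by
    intro y hy
    rcases lt_or_eq_of_le hy with hlt | heq
    · rw [hx, HahnSeries.coeff_sub, hsmul, HahnSeries.coeff_one, if_neg (ne_of_lt hlt)]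
      have hgz : g.coeff (y + g.order) = 0 :=
        HahnSeries.coeff_eq_zero_of_lt_order (by linarith)
      rw [hgz, mul_zero, sub_zero]
    · subst heq
      rw [hx, HahnSeries.coeff_sub, hsmul, zero_add, HahnSeries.coeff_one, if_pos rfl,
        ← huspec, Units.inv_mul, sub_self]
  have hxo : 0 < x.orderTop := by
    rcases eq_or_ne x 0 with h0 | hne
    · rw [h0, HahnSeries.orderTop_zero]
      exact WithTop.coe_lt_top 0
    · have hop : 0 < x.order := by
        by_contra hnp
        push_neg at hnp
        exact hne (HahnSeries.coeff_order_eq_zero.mp (hcoeffx _ hnp))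
      exact HahnSeries.zero_lt_orderTop_of_order hop
  have hone : (1 - x) * (HahnSeries.SummableFamily.powers x).hsum = 1 :=
    HahnSeries.SummableFamily.one_sub_self_mul_hsum_powers hxo
  have h1x : 1 - x = s * g := by rw [hx]; ring
  rw [h1x] at hone
  exact IsUnit.of_mul_eq_one _
    (show g * (s * (HahnSeries.SummableFamily.powers x).hsum) = 1 by rw [← hone]; ring)

end Units

section Proper

lemma coeff_p_mul (x : HahnSeries ℚ (WittVector p E)) (z : ℚ) :
    ((p : HahnSeries ℚ (WittVector p E)) * x).coeff z = (p : WittVector p E) * x.coeff z := by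
  rw [← map_natCast (HahnSeries.C : WittVector p E →+* HahnSeries ℚ (WittVector p E)) p]
  exact HahnSeries.coeff_single_zero_mul

lemma coeff_T_mul (x : HahnSeries ℚ (WittVector p E)) (z : ℚ) :
    ((HahnSeries.single (1 : ℚ) (1 : WittVector p E)) * x).coeff z = x.coeff (z - 1) := by
  have h := HahnSeries.coeff_single_mul_add (r := (1 : WittVector p E)) (x := x)
    (a := z - 1) (b := 1)
  rw [sub_add_cancel] at h
  rw [h, one_mul]

lemma not_dvd_one :
    ¬ (HahnSeries.single (1 : ℚ) (1 : WittVector p E) - (p : HahnSeries ℚ (WittVector p E))) ∣ 1 := by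
  rintro ⟨gg, hgg⟩
  have hrec : ∀ z : ℚ,
      gg.coeff (z - 1) - (p : WittVector p E) * gg.coeff z
        = (1 : HahnSeries ℚ (WittVector p E)).coeff z := by
    intro z
    have h := congrArg (fun h : HahnSeries ℚ (WittVector p E) => h.coeff z) hgg
    rw [sub_mul, HahnSeries.coeff_sub, coeff_T_mul, coeff_p_mul] at h
    exact h.symm
  have hrec0 : gg.coeff (0 - 1) - (p : WittVector p E) * gg.coeff 0 = 1 := by
    rw [hrec]
    simp
  have hrecne : ∀ z : ℚ, z ≠ 0 →
      gg.coeff (z - 1) - (p : WittVector p E) * gg.coeff z = 0 := by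
    intro z hz
    rw [hrec, HahnSeries.coeff_one, if_neg hz]
  have step1 : ∀ z : ℚ, 0 ≤ z → ∀ k : ℕ, gg.coeff z = (p : WittVector p E) ^ k * gg.coeff (z + k) := by
    intro z hz k
    induction k with
    | zero => simp
    | succ k ih =>
      have hzk : z + (k : ℚ) + 1 ≠ 0 := by positivity
      have h := hrecne (z + k + 1) hzk
      have h2 : gg.coeff (z + k) = (p : WittVector p E) * gg.coeff (z + k + 1) := by
        have hc : z + (k : ℚ) + 1 - 1 = z + k := by ring
        rw [hc] at h
        linear_combination h
      have hc2 : z + ((k : ℚ) + 1) = z + k + 1 := by ring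
      rw [ih, h2]
      push_cast
      rw [hc2]
      ring
  have step2 : ∀ z : ℚ, 0 ≤ z → gg.coeff z = 0 := by
    intro z hz
    by_contra h
    obtain ⟨m, b, hb0, hbm⟩ := WittVector.exists_eq_pow_p_mul (gg.coeff z) h
    have h1 := step1 z hz (m + 1)
    rw [hbm] at h1
    have hpm : (p : WittVector p E) ^ m ≠ 0 := pow_ne_zero m (WittVector.p_nonzero p E)
    have h2 : b = (p : WittVector p E) * gg.coeff (z + (m + 1 : ℕ)) := by
      apply mul_left_cancel₀ hpm
      rw [h1]
      ring
    have : b.coeff 0 = 0 := (dvd_p_iff p E b).mp ⟨_, h2⟩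
    exact hb0 this
  have step3 : gg.coeff (-1) = 1 := by
    have h := hrec0
    rw [step2 0 le_rfl, mul_zero, sub_zero] at h
    simpa using h
  have step4 : ∀ k : ℕ, gg.coeff (-1 - k) = (p : WittVector p E) ^ k := by
    intro k
    induction k with
    | zero => simpa using step3
    | succ k ih =>
      have hzk : (-1 - (k : ℚ)) ≠ 0 := by
        have : (0 : ℚ) ≤ k := Nat.cast_nonneg k
        intro hcon
        linarith [hcon]
      have h := hrecne (-1 - k) hzk
      have hc : (-1 - ((k : ℕ) + 1 : ℕ) : ℚ) = -1 - (k : ℚ) - 1 := by push_cast; ring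
      rw [hc]
      rw [ih] at h
      linear_combination h
  apply no_desc gg.isPWO_support (fun n => -1 - (n : ℚ))
  · intro a b hab
    have : (a : ℚ) < b := by exact_mod_cast hab
    simp only
    linarith
  · intro n
    rw [HahnSeries.mem_support, step4 n]
    exact pow_ne_zero n (WittVector.p_nonzero p E)

end Proper

end HWAux

/-- Let `p` be a prime and `E` a perfect field of characteristic `p`. Then the ring of
Hahn-Witt series `HW(E) = (HahnSeries ℚ (WittVector p E)) / (T - p)`, where `T = single 1 1`,
is a field. -/
theorem hahnWitt_isField (p : ℕ) [Fact p.Prime] (E : Type*) [Field E] [CharP E p]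
    [PerfectRing E p] :
    IsField (HahnSeries ℚ (WittVector p E) ⧸
      Ideal.span {HahnSeries.single (1 : ℚ) (1 : WittVector p E) -
        (p : HahnSeries ℚ (WittVector p E))}) := by
  classical
  set I : Ideal (HahnSeries ℚ (WittVector p E)) :=
    Ideal.span {HahnSeries.single (1 : ℚ) (1 : WittVector p E) -
      (p : HahnSeries ℚ (WittVector p E))} with hI
  have hproper : (1 : HahnSeries ℚ (WittVector p E)) ∉ I := by
    rw [hI, Ideal.mem_span_singleton]
    exact HWAux.not_dvd_one p E
  refine ⟨⟨Ideal.Quotient.mk I 1, Ideal.Quotient.mk I 0, ?_⟩, fun x y => mul_comm x y, ?_⟩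
  · intro h
    rw [Ideal.Quotient.eq] at h
    rw [sub_zero] at h
    exact hproper h
  · intro a ha
    obtain ⟨fa, rfl⟩ := Ideal.Quotient.mk_surjective a
    have hcong : Ideal.Quotient.mk I fa = Ideal.Quotient.mk I (HWAux.gred p E fa) := by
      rw [Ideal.Quotient.eq, HWAux.key p E fa, hI, Ideal.mem_span_singleton]
      exact ⟨-HWAux.Hser p E fa, by ring⟩
    rcases eq_or_ne (HWAux.gred p E fa) 0 with h0 | hne
    · exact absurd (by rw [hcong, h0, map_zero]) ha
    · have hu := (HWAux.isUnit_gred p E fa hne).map (Ideal.Quotient.mk I)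
      rw [← hcong] at hu
      exact hu.exists_right_inv

end
end

section
/- Let E be a perfect field of characteristic p, let F = HahnSeries ℚ E with its canonical additive valuation v : F → WithTop ℚ given by v(f) = the least element of the support of f (and v(0) = ⊤). Then F is maximally complete: for any field F' equipped with an additive valuation w : F' → WithTop ℚ satisfying w(x) = ⊤ only for x = 0, and any ring homomorphism ι : F → F' such that (i) w(ι f) = v(f) for all f ∈ F, and (ii) for every x ∈ F' with w(x) ≥ 0 there exists a ∈ E with w(x − ι(single 0 a)) > 0 (same residue field), the map ι is surjective. (Note that the value group condition is automatic since v is already surjective onto ℚ ∪ {⊤}.) -/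
noncomputable section

/-- Let `E` be a perfect field of characteristic `p`, and let `F = HahnSeries ℚ E` with its
canonical additive valuation `v f = f.orderTop` (the least element of the support, `⊤` for `0`).
Then `F` is maximally complete: for any field `F'` with an additive valuation
`w : F' → WithTop ℚ` (with `w x = ⊤` only for `x = 0`) and any ring homomorphism `ι : F → F'`
preserving the valuation and inducing a surjection on residue fields, `ι` is surjective. -/
theorem hahnSeries_maximally_complete (p : ℕ) [Fact p.Prime] (E : Type*) [Field E] [CharP E p]
    [PerfectRing E p]
    (F' : Type*) [Field F'] (w : F' → WithTop ℚ)
    (hw_top : ∀ x : F', w x = ⊤ → x = 0)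
    (hw_mul : ∀ x y : F', w (x * y) = w x + w y)
    (hw_add : ∀ x y : F', min (w x) (w y) ≤ w (x + y))
    (ι : HahnSeries ℚ E →+* F')
    (h_val : ∀ f : HahnSeries ℚ E, w (ι f) = f.orderTop)
    (h_res : ∀ x : F', 0 ≤ w x →
      ∃ a : E, 0 < w (x - ι (HahnSeries.single (0 : ℚ) a))) :
    Function.Surjective ι := by
  classical
  -- basic facts about w
  have hw1 : w 1 = 0 := by
    have h := hw_mul 1 1
    rw [one_mul] at h
    cases hc : w 1 with
    | top => exact absurd (hw_top 1 hc) one_ne_zero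
    | coe a =>
      rw [hc] at h
      have : a = a + a := by exact_mod_cast h
      have : a = 0 := by linarith
      simp [this]
  have hwneg : ∀ z : F', w (-z) = w z := by
    intro z
    have hm1 : w (-1 : F') = 0 := by
      have h := hw_mul (-1 : F') (-1)
      rw [neg_mul_neg, one_mul, hw1] at h
      cases hc : w (-1 : F') with
      | top => exact absurd (hw_top _ hc) (by norm_num)
      | coe a =>
        rw [hc, ← WithTop.coe_add] at h
        have h2 : (0:ℚ) = a + a := by exact_mod_cast h
        have : a = 0 := by linarith
        simp [this]
    calc w (-z) = w ((-1) * z) := by rw [neg_one_mul]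
    _ = w z := by rw [hw_mul, hm1, zero_add]
  have hwsub : ∀ z z' : F', min (w z) (w z') ≤ w (z - z') := by
    intro z z'
    have := hw_add z (-z')
    rwa [hwneg z', ← sub_eq_add_neg] at this
  -- the improvement step
  have himp : ∀ (x : F') (γ : ℚ), w x = (γ : WithTop ℚ) →
      ∃ a : E, (γ : WithTop ℚ) < w (x - ι (HahnSeries.single γ a)) := by
    intro x γ hx
    set u : F' := ι (HahnSeries.single γ (1 : E)) with hu
    have hwu : w u = (γ : WithTop ℚ) := by
      rw [hu, h_val, HahnSeries.orderTop_single one_ne_zero]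
    have hune : u ≠ 0 := fun h =>
      HahnSeries.single_ne_zero (one_ne_zero (α := E))
        (ι.injective (show ι (HahnSeries.single γ (1:E)) = ι 0 by rw [map_zero]; exact h))
    have hwuinv : w u⁻¹ = ((-γ : ℚ) : WithTop ℚ) := by
      have h := hw_mul u u⁻¹
      rw [mul_inv_cancel₀ hune, hw1, hwu] at h
      cases hc : w u⁻¹ with
      | top => rw [hc] at h; simp at h
      | coe b =>
        rw [hc] at h
        have : (0:ℚ) = γ + b := by exact_mod_cast h
        have : b = -γ := by linarith
        rw [this]
    have h0 : w (x * u⁻¹) = 0 := by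
      rw [hw_mul, hx, hwuinv, ← WithTop.coe_add]
      norm_num
    obtain ⟨a, ha⟩ := h_res (x * u⁻¹) (le_of_eq h0.symm)
    refine ⟨a, ?_⟩
    have key : x - ι (HahnSeries.single γ a) = (x * u⁻¹ - ι (HahnSeries.single (0:ℚ) a)) * u := by
      rw [sub_mul, mul_assoc, inv_mul_cancel₀ hune, mul_one, hu, ← map_mul,
        HahnSeries.single_mul_single, zero_add, mul_one]
    rw [key, hw_mul, hwu]
    calc (γ : WithTop ℚ) = 0 + γ := by rw [zero_add]
    _ < w (x * u⁻¹ - ι (HahnSeries.single (0:ℚ) a)) + γ := by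
        exact WithTop.add_lt_add_right WithTop.coe_ne_top ha
  -- main argument
  intro x
  set P : ℚ → Prop := fun δ => ∃ f : HahnSeries ℚ E, (δ : WithTop ℚ) < w (x - ι f) with hP
  set c : ℚ → E := fun δ => if h : P δ then h.choose.coeff δ else 0 with hc
  have hckey : ∀ (δ : ℚ) (f : HahnSeries ℚ E), (δ : WithTop ℚ) < w (x - ι f) →
      c δ = f.coeff δ := by
    intro δ f hf
    have hPd : P δ := ⟨f, hf⟩
    have hf' : (δ : WithTop ℚ) < w (x - ι hPd.choose) := hPd.choose_spec
    rw [hc]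
    simp only [dif_pos hPd]
    -- show hPd.choose.coeff δ = f.coeff δ
    have hsub : (δ : WithTop ℚ) < w (ι (hPd.choose - f)) := by
      have : ι (hPd.choose - f) = (x - ι f) - (x - ι hPd.choose) := by
        rw [map_sub]; ring
      rw [this]
      exact lt_of_lt_of_le (lt_min hf hf') (hwsub _ _)
    rw [h_val] at hsub
    have hcoeff : (hPd.choose - f).coeff δ = 0 :=
      HahnSeries.coeff_eq_zero_of_lt_orderTop hsub
    rw [HahnSeries.coeff_sub] at hcoeff
    exact sub_eq_zero.mp hcoeff
  -- the support of c is well-ordered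
  have hwf : (Function.support c).IsPWO := by
    apply Set.IsWF.isPWO
    rw [Set.isWF_iff_no_descending_seq]
    intro s hs hmem
    have h0 : c (s 0) ≠ 0 := hmem 0
    have hP0 : P (s 0) := by
      by_contra h
      rw [hc] at h0
      simp only [dif_neg h] at h0
      exact h0 rfl
    obtain ⟨f, hf⟩ := hP0
    have hsub : ∀ n, s n ∈ f.support := by
      intro n
      have hkey := hckey (s n) f
        (lt_of_le_of_lt (WithTop.coe_le_coe.mpr (hs.antitone (Nat.zero_le n))) hf)
      exact fun h => (hmem n) (hkey.trans h)
    exact Set.isWF_iff_no_descending_seq.mp f.isWF_support s hs hsub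
  set g : HahnSeries ℚ E := ⟨c, hwf⟩ with hg
  refine ⟨g, ?_⟩
  have htop : w (x - ι g) = ⊤ := by
    cases hq : w (x - ι g) with
    | top => rfl
    | coe γ =>
      exfalso
      by_cases hPg : ∃ f : HahnSeries ℚ E, (γ : WithTop ℚ) < w (x - ι f)
      · obtain ⟨f, hf⟩ := hPg
        have hd : ∀ δ : ℚ, δ ≤ γ → (f - g).coeff δ = 0 := by
          intro δ hδ
          rw [HahnSeries.coeff_sub, sub_eq_zero]
          exact (hckey δ f (lt_of_le_of_lt (WithTop.coe_le_coe.mpr hδ) hf)).symm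
        have hdo : (γ : WithTop ℚ) < (f - g).orderTop := by
          by_cases hfg : f - g = 0
          · rw [hfg, HahnSeries.orderTop_zero]
            exact WithTop.coe_lt_top γ
          · rw [← HahnSeries.order_eq_orderTop_of_ne_zero hfg, WithTop.coe_lt_coe]
            by_contra hle
            push_neg at hle
            exact hfg (HahnSeries.coeff_order_eq_zero.mp (hd _ hle))
        have hlt : (γ : WithTop ℚ) < w (x - ι g) := by
          have heq : x - ι g = (x - ι f) + ι (f - g) := by rw [map_sub]; ring
          rw [heq]
          refine lt_of_lt_of_le (lt_min hf ?_) (hw_add _ _)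
          rw [h_val]
          exact hdo
        rw [hq] at hlt
        exact lt_irrefl _ hlt
      · obtain ⟨a, ha⟩ := himp (x - ι g) γ hq
        exact hPg ⟨g + HahnSeries.single γ a, by
          rw [map_add]
          convert ha using 2
          ring⟩
  exact (sub_eq_zero.mp (hw_top _ htop)).symm

end
end

section
/- Let E be an algebraically closed field of characteristic p. Then the field HahnSeries ℚ E of Hahn series over E with exponents in ℚ is algebraically closed. -/
noncomputable section
open Polynomial HahnSeries

set_option linter.unusedSectionVars false
namespace HahnAlgClosed

variable {E : Type*} [Field E] [IsAlgClosed E]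

def B (f : Polynomial (HahnSeries ℚ E)) (a : HahnSeries ℚ E) (i : ℕ) : HahnSeries ℚ E :=
  (Polynomial.taylor a f).coeff i

open Classical in
def cand (f : Polynomial (HahnSeries ℚ E)) (a : HahnSeries ℚ E) : Finset ℚ :=
  ((Finset.Icc 1 f.natDegree).filter (fun i => B f a i ≠ 0)).image
    (fun i => ((f.eval a).order - (B f a i).order) / (i : ℚ))

open Classical in
def slope (f : Polynomial (HahnSeries ℚ E)) (a : HahnSeries ℚ E) : ℚ :=
  if h : (cand f a).Nonempty then (cand f a).max' h else 0

open Classical in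
def phi (f : Polynomial (HahnSeries ℚ E)) (a : HahnSeries ℚ E) : Polynomial E :=
  ∑ i ∈ Finset.range (f.natDegree + 1),
    if B f a i ≠ 0 ∧ (B f a i).order + (i : ℚ) * slope f a = (f.eval a).order then
      Polynomial.C (B f a i).leadingCoeff * Polynomial.X ^ i
    else 0

open Classical in
def root (f : Polynomial (HahnSeries ℚ E)) (a : HahnSeries ℚ E) : E :=
  if h : (phi f a).degree ≠ 0 then Classical.choose (IsAlgClosed.exists_root _ h) else 0

variable {f : Polynomial (HahnSeries ℚ E)} {a : HahnSeries ℚ E}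

lemma B_zero : B f a 0 = f.eval a := by rw [B, taylor_coeff_zero]

lemma B_eq_zero_of_gt {i : ℕ} (h : f.natDegree < i) : B f a i = 0 := by
  rw [B, Polynomial.coeff_eq_zero_of_natDegree_lt]
  rwa [natDegree_taylor]

lemma taylor_monic (hf : f.Monic) : (Polynomial.taylor a f).Monic := by
  rw [taylor_apply]; exact hf.comp_X_add_C a

lemma B_natDegree (hf : f.Monic) : B f a f.natDegree = 1 := by
  have h := (taylor_monic (a := a) hf)
  have : (Polynomial.taylor a f).coeff ((Polynomial.taylor a f).natDegree) = 1 := h.coeff_natDegree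
  rwa [natDegree_taylor] at this

lemma cand_nonempty (hf : f.Monic) (hn : 1 ≤ f.natDegree) : (cand f a).Nonempty := by
  classical
  refine ⟨((f.eval a).order - (B f a f.natDegree).order) / (f.natDegree : ℚ), ?_⟩
  rw [cand]
  apply Finset.mem_image_of_mem
  simp only [Finset.mem_filter, Finset.mem_Icc]
  refine ⟨⟨hn, le_refl _⟩, ?_⟩
  rw [B_natDegree hf]
  exact one_ne_zero

lemma slope_mem (hf : f.Monic) (hn : 1 ≤ f.natDegree) : slope f a ∈ cand f a := by
  rw [slope, dif_pos (cand_nonempty hf hn)]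
  exact Finset.max'_mem _ _

lemma le_slope {q : ℚ} (hf : f.Monic) (hn : 1 ≤ f.natDegree) (hq : q ∈ cand f a) :
    q ≤ slope f a := by
  rw [slope, dif_pos (cand_nonempty hf hn)]
  exact Finset.le_max' _ _ hq

/-- L1 : the key slope inequality. -/
lemma order_le_of_B_ne (hf : f.Monic) (hn : 1 ≤ f.natDegree) {i : ℕ} (hi : 1 ≤ i)
    (hB : B f a i ≠ 0) :
    (f.eval a).order ≤ (B f a i).order + (i : ℚ) * slope f a := by
  classical
  have hile : i ≤ f.natDegree := by
    by_contra hc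
    exact hB (B_eq_zero_of_gt (not_le.1 hc))
  have hmem : ((f.eval a).order - (B f a i).order) / (i : ℚ) ∈ cand f a := by
    rw [cand]
    apply Finset.mem_image_of_mem
    simp only [Finset.mem_filter, Finset.mem_Icc]
    exact ⟨⟨hi, hile⟩, hB⟩
  have := le_slope hf hn hmem
  have hipos : (0 : ℚ) < (i : ℚ) := by exact_mod_cast hi
  rw [div_le_iff₀ hipos] at this
  linarith

/-- L2 : the slope is attained. -/
lemma slope_attained (hf : f.Monic) (hn : 1 ≤ f.natDegree) :
    ∃ i, 1 ≤ i ∧ B f a i ≠ 0 ∧ (B f a i).order + (i : ℚ) * slope f a = (f.eval a).order := by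
  classical
  have := slope_mem (a := a) hf hn
  rw [cand, Finset.mem_image] at this
  obtain ⟨i, hi, heq⟩ := this
  simp only [Finset.mem_filter, Finset.mem_Icc] at hi
  refine ⟨i, hi.1.1, hi.2, ?_⟩
  have hipos : (0 : ℚ) < (i : ℚ) := by exact_mod_cast hi.1.1
  field_simp at heq
  linarith

lemma phi_coeff_zero : (phi f a).coeff 0 = (f.eval a).leadingCoeff := by
  classical
  rw [phi, Polynomial.finset_sum_coeff]
  rw [Finset.sum_eq_single 0]
  · have hB0 : B f a 0 = f.eval a := B_zero
    by_cases ha : f.eval a = 0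
    · rw [if_neg (by simp [hB0, ha]), ha, HahnSeries.leadingCoeff_zero, Polynomial.coeff_zero]
    · rw [if_pos ⟨by simp [hB0, ha], by simp [hB0]⟩, pow_zero, mul_one, Polynomial.coeff_C, if_pos rfl,
        hB0]
  · intro i _ hi
    split
    · rw [Polynomial.coeff_C_mul, Polynomial.coeff_X_pow, if_neg (Ne.symm hi), mul_zero]
    · simp
  · intro h
    exact absurd (Finset.mem_range.2 (Nat.succ_pos _)) h

lemma phi_degree_ne (hf : f.Monic) (hn : 1 ≤ f.natDegree) : (phi f a).degree ≠ 0 := by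
  classical
  obtain ⟨i, hi1, hBi, heq⟩ := slope_attained (a := a) hf hn
  have hile : i ≤ f.natDegree := by
    by_contra hc
    exact hBi (B_eq_zero_of_gt (not_le.1 hc))
  have hcoeff : (phi f a).coeff i = (B f a i).leadingCoeff := by
    rw [phi, Polynomial.finset_sum_coeff]
    rw [Finset.sum_eq_single i]
    · rw [if_pos ⟨hBi, heq⟩, Polynomial.coeff_C_mul, Polynomial.coeff_X_pow, if_pos rfl, mul_one]
    · intro j _ hj
      split
      · rw [Polynomial.coeff_C_mul, Polynomial.coeff_X_pow, if_neg (Ne.symm hj), mul_zero]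
      · simp
    · intro h
      exact absurd (Finset.mem_range.2 (Nat.lt_succ_of_le hile)) h
  have hne : (phi f a).coeff i ≠ 0 := by
    rw [hcoeff]; exact leadingCoeff_ne_zero.2 hBi
  have hdeg : (i : WithBot ℕ) ≤ (phi f a).degree := Polynomial.le_degree_of_ne_zero hne
  intro hc
  rw [hc] at hdeg
  have : i = 0 := by exact_mod_cast le_antisymm (by exact_mod_cast hdeg) (Nat.zero_le i)
  omega

lemma root_spec (hf : f.Monic) (hn : 1 ≤ f.natDegree) : (phi f a).eval (root f a) = 0 := by
  rw [root, dif_pos (phi_degree_ne hf hn)]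
  exact Classical.choose_spec (IsAlgClosed.exists_root _ (phi_degree_ne hf hn))


lemma le_orderTop_of_forall {x : HahnSeries ℚ E} {r : ℚ}
    (h : ∀ q ∈ x.support, r ≤ q) : (r : WithTop ℚ) ≤ x.orderTop := by
  by_cases hx : x = 0
  · simp [hx]
  · rw [orderTop_of_ne_zero hx, WithTop.coe_le_coe]
    exact h _ ((x.isWF_support.min_mem (support_nonempty_iff.2 hx)))

lemma lt_orderTop_of_forall {x : HahnSeries ℚ E} {r : ℚ}
    (h : ∀ q ∈ x.support, r < q) : (r : WithTop ℚ) < x.orderTop := by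
  by_cases hx : x = 0
  · simp [hx]
  · rw [orderTop_of_ne_zero hx, WithTop.coe_lt_coe]
    exact h _ ((x.isWF_support.min_mem (support_nonempty_iff.2 hx)))

lemma le_orderTop_sum {ι : Type*} {s : Finset ι} {F : ι → HahnSeries ℚ E} {c : WithTop ℚ}
    (h : ∀ i ∈ s, c ≤ (F i).orderTop) : c ≤ (∑ i ∈ s, F i).orderTop := by
  classical
  induction s using Finset.induction_on with
  | empty => simp
  | insert a s hns ih =>
    rw [Finset.sum_insert hns]
    refine le_trans ?_ min_orderTop_le_orderTop_add
    exact le_min (h a (Finset.mem_insert_self a s))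
      (ih fun i hi => h i (Finset.mem_insert_of_mem hi))

lemma lt_orderTop_sum {ι : Type*} {s : Finset ι} {F : ι → HahnSeries ℚ E} {c : ℚ}
    (h : ∀ i ∈ s, (c : WithTop ℚ) < (F i).orderTop) :
    (c : WithTop ℚ) < (∑ i ∈ s, F i).orderTop := by
  classical
  induction s using Finset.induction_on with
  | empty => simp
  | insert a s hns ih =>
    rw [Finset.sum_insert hns]
    refine lt_of_lt_of_le ?_ min_orderTop_le_orderTop_add
    exact lt_min (h a (Finset.mem_insert_self a s))
      (ih fun i hi => h i (Finset.mem_insert_of_mem hi))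

lemma le_orderTop_pow {x : HahnSeries ℚ E} {r : ℚ} (h : (r : WithTop ℚ) ≤ x.orderTop) (i : ℕ) :
    (((i : ℚ) * r : ℚ) : WithTop ℚ) ≤ (x ^ i).orderTop := by
  induction i with
  | zero => simp [orderTop_one]
  | succ i ih =>
    rw [pow_succ]
    refine le_trans ?_ orderTop_add_le_mul
    have : (((i : ℚ) + 1) * r : ℚ) = (i : ℚ) * r + r := by ring
    push_cast [this]
    exact add_le_add ih h

lemma coeff_sum {ι : Type*} {s : Finset ι} {F : ι → HahnSeries ℚ E} {q : ℚ} :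
    (∑ i ∈ s, F i).coeff q = ∑ i ∈ s, (F i).coeff q :=
  map_sum (coeff.addMonoidHom q) F s

lemma lt_order_of_coeff_eq_zero {x : HahnSeries ℚ E} {r : ℚ} (hx : x ≠ 0)
    (h : ∀ q ≤ r, x.coeff q = 0) : r < x.order := by
  by_contra hc
  exact hx (coeff_order_eq_zero.1 (h _ (not_lt.1 hc)))

/-- Remainder bound: `(single γ c + e) ^ i` agrees with `(single γ c) ^ i` up to
terms of order `> i γ`, provided `e` is supported above `γ`. -/
lemma pow_sub_single_pow {γ : ℚ} {c : E} {e : HahnSeries ℚ E}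
    (he : ∀ q ∈ e.support, γ < q) (i : ℕ) :
    (((i : ℚ) * γ : ℚ) : WithTop ℚ) <
      ((single γ c + e) ^ i - (single γ c) ^ i).orderTop := by
  set s : HahnSeries ℚ E := single γ c with hs
  set d : HahnSeries ℚ E := s + e with hd
  have hsT : (γ : WithTop ℚ) ≤ s.orderTop := orderTop_single_le
  have heT : (γ : WithTop ℚ) < e.orderTop := lt_orderTop_of_forall he
  have hdT : (γ : WithTop ℚ) ≤ d.orderTop :=
    le_trans (le_min hsT heT.le) min_orderTop_le_orderTop_add
  induction i with
  | zero => simp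
  | succ i ih =>
    have hiden : d ^ (i+1) - s ^ (i+1) = (d ^ i - s ^ i) * s + d ^ i * e := by
      have : d ^ (i+1) = d ^ i * s + d ^ i * e := by rw [pow_succ, hd]; ring
      rw [this, pow_succ]; ring
    rw [hiden, show (((i+1 : ℕ) : ℚ) * γ : ℚ) = (i : ℚ) * γ + γ from by push_cast; ring,
      WithTop.coe_add]
    refine lt_of_lt_of_le ?_ min_orderTop_le_orderTop_add
    refine lt_min ?_ ?_
    · refine lt_of_lt_of_le ?_ orderTop_add_le_mul
      calc ((((i : ℚ) * γ : ℚ) : WithTop ℚ)) + (γ : WithTop ℚ)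
          < (d ^ i - s ^ i).orderTop + (γ : WithTop ℚ) :=
            WithTop.add_lt_add_right (WithTop.coe_ne_top) ih
        _ ≤ (d ^ i - s ^ i).orderTop + s.orderTop := add_le_add_right hsT _
    · refine lt_of_lt_of_le ?_ orderTop_add_le_mul
      calc ((((i : ℚ) * γ : ℚ) : WithTop ℚ)) + (γ : WithTop ℚ)
          < ((((i : ℚ) * γ : ℚ) : WithTop ℚ)) + e.orderTop :=
            WithTop.add_lt_add_left (WithTop.coe_ne_top) heT
        _ ≤ (d ^ i).orderTop + e.orderTop := add_le_add_left (le_orderTop_pow hdT i) _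

/-- KEY 1: after one Newton step (plus any perturbation supported strictly above the
slope), all coefficients of `f.eval` up to the old order vanish. -/
lemma key1 (hf : f.Monic) (hn : 1 ≤ f.natDegree) {e : HahnSeries ℚ E}
    (he : ∀ q ∈ e.support, slope f a < q) {q : ℚ} (hq : q ≤ (f.eval a).order) :
    (f.eval (a + single (slope f a) (root f a) + e)).coeff q = 0 := by
  classical
  set γ := slope f a with hγ
  set c := root f a with hc
  set d : HahnSeries ℚ E := single γ c + e with hd
  set n := f.natDegree with hnn
  set v0 := (f.eval a).order with hv0
  have hdT : (γ : WithTop ℚ) ≤ d.orderTop :=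
    le_trans (le_min orderTop_single_le (lt_orderTop_of_forall he).le)
      min_orderTop_le_orderTop_add
  have hexp : f.eval (a + single γ c + e) = ∑ i ∈ Finset.range (n+1), B f a i * d ^ i := by
    have h1 : a + single γ c + e = d + a := by rw [hd]; ring
    rw [h1, ← taylor_eval, Polynomial.eval_eq_sum_range, natDegree_taylor]
    rfl
  have hterm : ∀ i ∈ Finset.range (n+1), (B f a i * d ^ i).coeff q =
      if B f a i ≠ 0 ∧ (B f a i).order + (i : ℚ) * γ = v0 ∧ q = v0 then
        (B f a i).leadingCoeff * c ^ i
      else 0 := by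
    intro i _
    by_cases hB : B f a i = 0
    · rw [if_neg (by tauto), hB, zero_mul, HahnSeries.coeff_zero]
    set vi := (B f a i).order with hvi
    have hviq : v0 ≤ vi + (i : ℚ) * γ := by
      rcases Nat.eq_zero_or_pos i with h0 | h1
      · subst h0
        have : B f a 0 = f.eval a := B_zero
        simp [hvi, this, hv0]
      · exact order_le_of_B_ne hf hn h1 hB
    have htermT : ((vi + (i : ℚ) * γ : ℚ) : WithTop ℚ) ≤ (B f a i * d ^ i).orderTop := by
      refine le_trans ?_ orderTop_add_le_mul
      rw [← order_eq_orderTop_of_ne_zero hB, ← hvi]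
      push_cast
      exact add_le_add_right (le_orderTop_pow hdT i) _
    rcases lt_or_eq_of_le (le_trans hq hviq) with hlt | heq
    · rw [if_neg, coeff_eq_zero_of_lt_orderTop (lt_of_lt_of_le (WithTop.coe_lt_coe.2 hlt) htermT)]
      rintro ⟨-, h2, h3⟩
      rw [h3, ← h2] at hlt
      exact lt_irrefl _ hlt
    · -- q = vi + i γ, hence q = v0 and the condition holds
      have hqv0 : q = v0 := le_antisymm hq (heq ▸ hviq)
      have hcond : (B f a i).order + (i : ℚ) * γ = v0 := by rw [← hvi, ← heq, hqv0]
      rw [if_pos ⟨hB, hcond, hqv0⟩]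
      have hsplit : d ^ i = single ((i : ℚ) * γ) (c ^ i) + (d ^ i - (single γ c) ^ i) := by
        rw [single_pow]
        have : (i : ℚ) * γ = i • γ := by rw [nsmul_eq_mul]
        rw [this]; ring
      rw [heq, hsplit, mul_add, HahnSeries.coeff_add]
      have h2nd : (B f a i * (d ^ i - (single γ c) ^ i)).coeff (vi + (i : ℚ) * γ) = 0 := by
        apply coeff_eq_zero_of_lt_orderTop
        refine lt_of_lt_of_le ?_ orderTop_add_le_mul
        rw [← order_eq_orderTop_of_ne_zero hB, ← hvi]
        calc ((vi + (i : ℚ) * γ : ℚ) : WithTop ℚ)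
            = (vi : WithTop ℚ) + (((i : ℚ) * γ : ℚ) : WithTop ℚ) := by push_cast; rfl
          _ < (vi : WithTop ℚ) + (d ^ i - (single γ c) ^ i).orderTop := by
              exact WithTop.add_lt_add_left (WithTop.coe_ne_top) (pow_sub_single_pow he i)
      rw [h2nd, add_zero, coeff_mul_single_add, ← leadingCoeff_eq]
  rw [hexp, coeff_sum, Finset.sum_congr rfl hterm]
  by_cases hqv : q = v0
  · have : ∑ i ∈ Finset.range (n+1),
        (if B f a i ≠ 0 ∧ (B f a i).order + (i : ℚ) * γ = v0 ∧ q = v0 then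
          (B f a i).leadingCoeff * c ^ i else 0) = (phi f a).eval c := by
      rw [phi, Polynomial.eval_finset_sum]
      refine Finset.sum_congr rfl fun i _ => ?_
      by_cases hcnd : B f a i ≠ 0 ∧ (B f a i).order + (i : ℚ) * γ = v0
      · rw [if_pos ⟨hcnd.1, hcnd.2, hqv⟩, if_pos hcnd]
        simp
      · rw [if_neg (by tauto), if_neg hcnd]
        simp
    rw [this, root_spec hf hn]
  · refine Finset.sum_eq_zero fun i _ => ?_
    rw [if_neg (by tauto)]

/-- KEY 2: if the evaluation order strictly increased along a perturbation supported
(weakly) above the slope, then the slope strictly increased. -/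
lemma key2 (hf : f.Monic) (hn : 1 ≤ f.natDegree) {a' : HahnSeries ℚ E}
    (ha : f.eval a ≠ 0) (ha' : f.eval a' ≠ 0)
    (h1 : ∀ q ∈ (a' - a).support, slope f a ≤ q)
    (h2 : (f.eval a).order < (f.eval a').order) : slope f a < slope f a' := by
  classical
  by_contra hcon
  push_neg at hcon
  set γ := slope f a with hγ
  set n := f.natDegree with hnn
  set v0 := (f.eval a).order with hv0
  set v0' := (f.eval a').order with hv0'
  have hdsupp : ∀ q ∈ (a - a').support, γ ≤ q := by
    intro q hqs
    apply h1
    rw [← HahnSeries.support_neg, neg_sub]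
    exact hqs
  have hdT : (γ : WithTop ℚ) ≤ (a - a').orderTop := le_orderTop_of_forall hdsupp
  have hexp : f.eval a = ∑ m ∈ Finset.range (n+1), B f a' m * (a - a') ^ m := by
    have h0 : f.eval a = f.eval ((a - a') + a') := by ring_nf
    rw [h0, ← taylor_eval, Polynomial.eval_eq_sum_range, natDegree_taylor]
    rfl
  have hterms : ∀ m ∈ Finset.range (n+1),
      (v0 : WithTop ℚ) < (B f a' m * (a - a') ^ m).orderTop := by
    intro m _
    by_cases hB : B f a' m = 0
    · rw [hB, zero_mul, orderTop_zero]; exact WithTop.coe_lt_top _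
    rcases Nat.eq_zero_or_pos m with h0 | h1
    · subst h0
      have hB0 : B f a' 0 = f.eval a' := B_zero
      rw [pow_zero, mul_one, hB0, ← order_eq_orderTop_of_ne_zero ha', ← hv0']
      exact WithTop.coe_lt_coe.2 h2
    · -- candidate slope at a' is ≤ γ
      have hile : m ≤ n := by
        by_contra hcm
        exact hB (B_eq_zero_of_gt (not_le.1 hcm))
      have hmem : (v0' - (B f a' m).order) / (m : ℚ) ∈ cand f a' := by
        rw [cand]
        apply Finset.mem_image_of_mem
        simp only [Finset.mem_filter, Finset.mem_Icc]
        exact ⟨⟨h1, hile⟩, hB⟩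
      have hle : (v0' - (B f a' m).order) / (m : ℚ) ≤ γ :=
        le_trans (le_slope hf hn hmem) hcon
      have hmpos : (0 : ℚ) < (m : ℚ) := by exact_mod_cast h1
      rw [div_le_iff₀ hmpos] at hle
      have hkey : v0 < (B f a' m).order + (m : ℚ) * γ := by linarith
      refine lt_of_lt_of_le ?_ orderTop_add_le_mul
      rw [← order_eq_orderTop_of_ne_zero hB]
      calc (v0 : WithTop ℚ) < (((B f a' m).order + (m : ℚ) * γ : ℚ) : WithTop ℚ) :=
            WithTop.coe_lt_coe.2 hkey
        _ = ((B f a' m).order : WithTop ℚ) + (((m : ℚ) * γ : ℚ) : WithTop ℚ) := by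
            push_cast; rfl
        _ ≤ ((B f a' m).order : WithTop ℚ) + ((a - a') ^ m).orderTop :=
            add_le_add_right (le_orderTop_pow hdT m) _
  have : (v0 : WithTop ℚ) < (f.eval a).orderTop := by
    rw [hexp]; exact lt_orderTop_sum hterms
  rw [← order_eq_orderTop_of_ne_zero ha, ← hv0] at this
  exact lt_irrefl _ (WithTop.coe_lt_coe.1 this)


/-! ### Transfinite recursion machinery -/

def pick (g : Ordinal.{0} → ℚ × E) (α : Ordinal.{0}) (q : ℚ) : Ordinal.{0} :=
  sInf {β | β < α ∧ (g β).1 = q}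

open Classical in
def coeffFn (g : Ordinal.{0} → ℚ × E) (α : Ordinal.{0}) (q : ℚ) : E :=
  if pick g α q < α ∧ (g (pick g α q)).1 = q then (g (pick g α q)).2 else 0

open Classical in
def assemble (g : Ordinal.{0} → ℚ × E) (α : Ordinal.{0}) : HahnSeries ℚ E :=
  if hw : (Function.support (coeffFn g α)).IsPWO then ⟨coeffFn g α, hw⟩ else 0

lemma coeffFn_congr {g g' : Ordinal.{0} → ℚ × E} {α : Ordinal.{0}}
    (hgg' : ∀ β < α, g β = g' β) : coeffFn g α = coeffFn g' α := by
  funext q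
  have hset : {β | β < α ∧ (g β).1 = q} = {β | β < α ∧ (g' β).1 = q} := by
    ext β
    constructor <;> rintro ⟨h1, h2⟩ <;> refine ⟨h1, ?_⟩
    · rw [← hgg' β h1]; exact h2
    · rw [hgg' β h1]; exact h2
  have hpick : pick g α q = pick g' α q := by rw [pick, pick, hset]
  rw [coeffFn, coeffFn, hpick]
  by_cases hlt : pick g' α q < α
  · rw [hgg' _ hlt]
  · rw [if_neg (by tauto), if_neg (by tauto)]

lemma assemble_congr {g g' : Ordinal.{0} → ℚ × E} {α : Ordinal.{0}}
    (hgg' : ∀ β < α, g β = g' β) : assemble g α = assemble g' α := by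
  have h := coeffFn_congr hgg'
  rw [assemble, assemble, h]

section Mono

variable {g : Ordinal.{0} → ℚ × E} {α : Ordinal.{0}}
  (Hm : ∀ β δ : Ordinal.{0}, β < δ → δ < α → (g β).1 < (g δ).1)

include Hm

lemma g_inj {β δ : Ordinal.{0}} (hβ : β < α) (hδ : δ < α) (h : (g β).1 = (g δ).1) : β = δ := by
  rcases lt_trichotomy β δ with hc | hc | hc
  · exact absurd h (ne_of_lt (Hm _ _ hc hδ))
  · exact hc
  · exact absurd h.symm (ne_of_lt (Hm _ _ hc hβ))

lemma coeffFn_apply {β : Ordinal.{0}} (hβ : β < α) : coeffFn g α ((g β).1) = (g β).2 := by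
  have hne : {δ | δ < α ∧ (g δ).1 = (g β).1}.Nonempty := ⟨β, hβ, rfl⟩
  have hmem := csInf_mem hne
  have hp : pick g α ((g β).1) < α ∧ (g (pick g α ((g β).1))).1 = (g β).1 := hmem
  have hpe : pick g α ((g β).1) = β := g_inj Hm hp.1 hβ hp.2
  rw [coeffFn, if_pos hp, hpe]

lemma coeffFn_eq_zero {q : ℚ} (h : ∀ β < α, (g β).1 ≠ q) : coeffFn g α q = 0 := by
  rw [coeffFn, if_neg]
  rintro ⟨h1, h2⟩
  exact h _ h1 h2

lemma support_coeffFn_isPWO : (Function.support (coeffFn g α)).IsPWO := by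
  apply Set.IsWF.isPWO
  have hsub : Function.support (coeffFn g α) ⊆ (fun β => (g β).1) '' (Set.Iio α) := by
    intro q hq
    rw [Function.mem_support, coeffFn] at hq
    split at hq
    · rename_i hcond
      exact ⟨pick g α q, hcond.1, hcond.2⟩
    · exact absurd rfl hq
  refine Set.IsWF.mono ?_ hsub
  rw [Set.isWF_iff_no_descending_seq]
  intro h hanti hmem
  -- extract a descending sequence of ordinals
  have hex : ∀ n : ℕ, ∃ β < α, (g β).1 = h n := by
    intro n
    obtain ⟨β, hβ, hq⟩ := hmem n
    exact ⟨β, hβ, hq⟩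
  choose β hβlt hβeq using hex
  have hdesc : ∀ n, β (n + 1) < β n := by
    intro n
    have hlt : h (n + 1) < h n := hanti (Nat.lt_succ_self n)
    rw [← hβeq (n + 1), ← hβeq n] at hlt
    rcases lt_trichotomy (β (n + 1)) (β n) with hc | hc | hc
    · exact hc
    · rw [hc] at hlt; exact absurd hlt (lt_irrefl _)
    · exact absurd (Hm _ _ hc (hβlt (n + 1))) (not_lt.2 hlt.le)
  -- a strictly descending sequence of ordinals is impossible
  obtain ⟨m, hm⟩ := Ordinal.lt_wf.has_min (Set.range β) ⟨β 0, 0, rfl⟩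
  obtain ⟨k, rfl⟩ := hm.1
  exact hm.2 (β (k + 1)) ⟨k + 1, rfl⟩ (hdesc k)

lemma assemble_coeff : (assemble g α).coeff = coeffFn g α := by
  rw [assemble, dif_pos (support_coeffFn_isPWO Hm)]

end Mono

variable (f : Polynomial (HahnSeries ℚ E))

def seq : Ordinal.{0} → ℚ × E :=
  Ordinal.lt_wf.fix fun α IH =>
    (fun a => (slope f a, root f a)) (assemble (fun β => if h : β < α then IH β h else (0, 1)) α)

def approx (α : Ordinal.{0}) : HahnSeries ℚ E := assemble (seq f) α

lemma seq_eq (α : Ordinal.{0}) :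
    seq f α = (slope f (approx f α), root f (approx f α)) := by
  conv_lhs => rw [seq, WellFounded.fix_eq]
  show (fun a => (slope f a, root f a))
      (assemble (fun β => if h : β < α then seq f β else (0, 1)) α) = _
  rw [assemble_congr (g' := seq f) (fun β hβ => by rw [dif_pos hβ])]
  rfl

lemma seq_fst (α : Ordinal.{0}) : (seq f α).1 = slope f (approx f α) := by rw [seq_eq]

lemma seq_snd (α : Ordinal.{0}) : (seq f α).2 = root f (approx f α) := by rw [seq_eq]

theorem exists_eval_zero (hf : f.Monic) (hn : 1 ≤ f.natDegree) :
    ∃ x : HahnSeries ℚ E, f.eval x = 0 := by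
  by_contra hno
  push_neg at hno
  have main : ∀ α : Ordinal.{0}, ∀ β < α, (seq f β).1 < (seq f α).1 ∧
      (f.eval (approx f β)).order < (f.eval (approx f α)).order := by
    intro α
    induction α using Ordinal.induction with
    | h α IH =>
    have Hm : ∀ β δ : Ordinal.{0}, β < δ → δ < α → (seq f β).1 < (seq f δ).1 :=
      fun β δ h1 h2 => (IH δ h2 β h1).1
    intro β hβ
    have Hmβ : ∀ β' δ' : Ordinal.{0}, β' < δ' → δ' < β → (seq f β').1 < (seq f δ').1 :=
      fun β' δ' h1 h2 => Hm β' δ' h1 (h2.trans hβ)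
    have hcα : (approx f α).coeff = coeffFn (seq f) α := assemble_coeff Hm
    have hcβ : (approx f β).coeff = coeffFn (seq f) β := assemble_coeff Hmβ
    set sγ := (seq f β).1 with hsγ
    set scc := (seq f β).2 with hscc
    set e : HahnSeries ℚ E := approx f α - approx f β - single sγ scc with he_def
    have he : ∀ q ∈ e.support, sγ < q := by
      intro q hq
      rw [mem_support] at hq
      by_contra hcon
      apply hq
      have hcoeffe : e.coeff q =
          (approx f α).coeff q - (approx f β).coeff q - (single sγ scc).coeff q := by
        rw [he_def, HahnSeries.coeff_sub, HahnSeries.coeff_sub]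
      by_cases hex : ∃ δ, δ < α ∧ (seq f δ).1 = q
      · obtain ⟨δ, hδα, hδq⟩ := hex
        have hcoef1 : (approx f α).coeff q = (seq f δ).2 := by
          rw [hcα, ← hδq, coeffFn_apply Hm hδα]
        rcases lt_trichotomy δ β with hc | hc | hc
        · have hcoef2 : (approx f β).coeff q = (seq f δ).2 := by
            rw [hcβ, ← hδq, coeffFn_apply Hmβ hc]
          have hne : q ≠ sγ := by
            rw [← hδq, hsγ]
            exact ne_of_lt (Hm _ _ hc hβ)
          rw [hcoeffe, hcoef1, hcoef2, coeff_single_of_ne hne, sub_self, sub_zero]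
        · have hcoef2 : (approx f β).coeff q = 0 := by
            rw [hcβ]
            apply coeffFn_eq_zero Hmβ
            intro δ' hδ'
            rw [← hδq, hc]
            exact ne_of_lt (Hm _ _ hδ' hβ)
          have hqs : q = sγ := by rw [← hδq, hc]
          rw [hcoeffe, hcoef1, hcoef2, hqs, coeff_single_same, sub_zero, hscc, hc, sub_self]
        · exfalso
          apply hcon
          rw [← hδq, hsγ]
          exact Hm _ _ hc hδα
      · push_neg at hex
        have hcoef1 : (approx f α).coeff q = 0 := by
          rw [hcα]; exact coeffFn_eq_zero Hm (fun δ hδ => hex δ hδ)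
        have hcoef2 : (approx f β).coeff q = 0 := by
          rw [hcβ]; exact coeffFn_eq_zero Hmβ (fun δ hδ => hex δ (hδ.trans hβ))
        have hne : q ≠ sγ := fun hcq => hex β hβ (by rw [hcq])
        rw [hcoeffe, hcoef1, hcoef2, coeff_single_of_ne hne, sub_zero, sub_zero]
    have hid : approx f α = approx f β + single sγ scc + e := by
      rw [he_def]; ring
    have hsl : sγ = slope f (approx f β) := by rw [hsγ, seq_fst]
    have hrt : scc = root f (approx f β) := by rw [hscc, seq_snd]
    have hordlt : (f.eval (approx f β)).order < (f.eval (approx f α)).order := by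
      apply lt_order_of_coeff_eq_zero (hno _)
      intro q hq
      rw [hid, hsl, hrt]
      apply key1 hf hn _ hq
      rw [← hsl]
      exact he
    have hsupset : ∀ q ∈ (approx f α - approx f β).support, slope f (approx f β) ≤ q := by
      intro q hq
      have : approx f α - approx f β = single sγ scc + e := by rw [he_def]; ring
      rw [this] at hq
      rcases support_add_subset _ _ hq with hq1 | hq1
      · rw [eq_of_mem_support_single hq1, ← hsl]
      · rw [← hsl]; exact (he q hq1).le
    have hslope : slope f (approx f β) < slope f (approx f α) :=
      key2 hf hn (hno _) (hno _) hsupset hordlt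
    refine ⟨?_, hordlt⟩
    show (seq f β).1 < (seq f α).1
    rw [seq_fst f β, seq_fst f α]
    exact hslope
  have hsm : StrictMono (fun α : Ordinal.{0} => (seq f α).1) :=
    fun β α h => (main α β h).1
  have : Small.{0} Ordinal.{0} := small_of_injective hsm.injective
  exact not_small_ordinal this

end HahnAlgClosed

/-- Let `E` be an algebraically closed field of characteristic `p`. Then the field
`HahnSeries ℚ E` of Hahn series over `E` with exponents in `ℚ` is algebraically closed. -/
theorem hahnSeries_isAlgClosed (p : ℕ) [Fact p.Prime] (E : Type*) [Field E] [CharP E p]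
    [IsAlgClosed E] :
    IsAlgClosed (HahnSeries ℚ E) := by
  apply IsAlgClosed.of_exists_root
  intro q hq hirr
  have hdeg : 1 ≤ q.natDegree := by
    by_contra hc
    push_neg at hc
    have h0 : q.natDegree = 0 := by omega
    rw [hq.natDegree_eq_zero] at h0
    exact hirr.not_isUnit (h0 ▸ isUnit_one)
  exact HahnAlgClosed.exists_eval_zero q hq hdeg
end
end

section
/- Let F be a field of characteristic p and let q = p^e with e ≥ 1. For each integer n ≥ 1, let A_n ⊆ ℚ be the set of rationals of the form 1/(q−1) − q^{−k_1} − ⋯ − q^{−k_{n−1}} where 0 < k_1 < ⋯ < k_{n−1} are integers (so A_1 = {1/(q−1)}). Then: (a) A_n is a well-ordered subset of ℚ, so that the Hahn series y_n ∈ HahnSeries ℚ F with coefficient 1 at each element of A_n and 0 elsewhere is well defined; (b) y_1^q = (single 1 1) · y_1; and (c) for every n ≥ 2, y_n^q − (single 1 1) · y_n = y_{n−1}. -/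
noncomputable section

/-- The set `A_n ⊆ ℚ` of rationals of the form `1/(q-1) - q^{-k_1} - ⋯ - q^{-k_{n-1}}`
with `0 < k_1 < ⋯ < k_{n-1}` integers (so `A_1 = {1/(q-1)}`). -/
def lubinTateExpSet (q n : ℕ) : Set ℚ :=
  {x | ∃ κ : Fin (n - 1) → ℕ, StrictMono κ ∧ (∀ j, 0 < κ j) ∧
    x = 1 / ((q : ℚ) - 1) - ∑ j, (q : ℚ) ^ (-(κ j : ℤ))}

namespace LubinTateAux
open HahnSeries Pointwise
variable {q : ℕ}




/-- Geometric bound: a strictly increasing sum of powers `q^{-κ j}` with all `κ j > c`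
is less than `q^{-c}/(q-1)`. -/
lemma geom_bound (hq : 2 ≤ q) : ∀ {m : ℕ} (κ : Fin m → ℕ), StrictMono κ → ∀ (c : ℕ),
    (∀ j, c < κ j) → ∑ j, (q : ℚ) ^ (-(κ j : ℤ)) < (q : ℚ) ^ (-(c : ℤ)) / ((q : ℚ) - 1) := by
  have hq1 : (1 : ℚ) < (q : ℚ) := by exact_mod_cast hq
  have hq0 : (0 : ℚ) < (q : ℚ) := by linarith
  have hqm1 : (0 : ℚ) < (q : ℚ) - 1 := by linarith
  intro m
  induction m with
  | zero =>
    intro κ _ c _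
    simp only [Finset.univ_eq_empty, Finset.sum_empty]
    positivity
  | succ m ih =>
    intro κ hκ c hc
    rw [Fin.sum_univ_succ]
    have htail : ∑ j : Fin m, (q : ℚ) ^ (-((κ j.succ : ℕ) : ℤ)) <
        (q : ℚ) ^ (-((κ 0 : ℕ) : ℤ)) / ((q : ℚ) - 1) := by
      refine ih (fun j => κ j.succ) (fun a b h => hκ (by simpa using h)) (κ 0)
        (fun j => hκ (Fin.succ_pos j))
    have hstep : (q : ℚ) ^ (-((κ 0 : ℕ) : ℤ)) + (q : ℚ) ^ (-((κ 0 : ℕ) : ℤ)) / ((q : ℚ) - 1)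
        ≤ (q : ℚ) ^ (-(c : ℤ)) / ((q : ℚ) - 1) := by
      have h1 : (q : ℚ) ^ (-((κ 0 : ℕ) : ℤ)) * (q : ℚ) = (q : ℚ) ^ (-((κ 0 : ℕ) : ℤ) + 1) := by
        rw [zpow_add_one₀ (ne_of_gt hq0)]
      have h2 : (q : ℚ) ^ (-((κ 0 : ℕ) : ℤ) + 1) ≤ (q : ℚ) ^ (-(c : ℤ)) := by
        apply zpow_le_zpow_right₀ (le_of_lt hq1)
        have := hc 0
        omega
      have key : (q : ℚ) ^ (-((κ 0 : ℕ) : ℤ)) + (q : ℚ) ^ (-((κ 0 : ℕ) : ℤ)) / ((q : ℚ) - 1)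
          = (q : ℚ) ^ (-((κ 0 : ℕ) : ℤ)) * (q : ℚ) / ((q : ℚ) - 1) := by
        field_simp
        ring
      rw [key, h1]
      gcongr
    linarith



/-- There is no sequence of strictly increasing tuples whose power sums strictly increase. -/
lemma no_strictMono_sum (hq : 2 ≤ q) : ∀ m : ℕ, ¬ ∃ κ : ℕ → Fin m → ℕ,
    (∀ i, StrictMono (κ i)) ∧ StrictMono (fun i => ∑ j, (q : ℚ) ^ (-(κ i j : ℤ))) := by
  have hq1 : (1 : ℚ) < (q : ℚ) := by exact_mod_cast hq
  have hq0 : (0 : ℚ) < (q : ℚ) := by linarith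
  have hq2 : (2 : ℚ) ≤ (q : ℚ) := by exact_mod_cast hq
  have hqm1 : (1 : ℚ) ≤ (q : ℚ) - 1 := by linarith
  intro m
  induction m with
  | zero =>
    rintro ⟨κ, -, hs⟩
    have := hs (Nat.lt_succ_self 0)
    simp at this
  | succ m ih =>
    rintro ⟨κ, hmono, hs⟩
    -- the first entries are antitone
    have hanti : ∀ i, κ (i + 1) 0 ≤ κ i 0 := by
      intro i
      by_contra hlt
      push_neg at hlt
      have h1 : ∑ j, (q : ℚ) ^ (-(κ (i+1) j : ℤ)) < (q : ℚ) ^ (-(κ i 0 : ℤ)) / ((q:ℚ) - 1) :=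
        geom_bound hq _ (hmono (i+1)) (κ i 0) (fun j => lt_of_lt_of_le hlt
          ((hmono (i+1)).monotone (Fin.zero_le j)))
      have h2 : (q : ℚ) ^ (-(κ i 0 : ℤ)) / ((q:ℚ) - 1) ≤ (q : ℚ) ^ (-(κ i 0 : ℤ)) := by
        rw [div_le_iff₀ (by linarith)]
        nlinarith [zpow_pos hq0 (-(κ i 0 : ℤ))]
      have h3 : (q : ℚ) ^ (-(κ i 0 : ℤ)) ≤ ∑ j, (q : ℚ) ^ (-(κ i j : ℤ)) := by
        rw [Fin.sum_univ_succ]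
        have : (0:ℚ) ≤ ∑ j : Fin m, (q : ℚ) ^ (-(κ i j.succ : ℤ)) :=
          Finset.sum_nonneg fun j _ => le_of_lt (zpow_pos hq0 _)
        linarith
      have := hs (Nat.lt_succ_self i)
      simp only at this
      linarith
    have hanti' : Antitone fun i => κ i 0 := antitone_nat_of_succ_le hanti
    -- stabilizes
    obtain ⟨N, hN⟩ : ∃ N, ∀ i, N ≤ i → κ i 0 = κ N 0 := by
      obtain ⟨N, hN⟩ := Nat.sInf_mem (Set.range_nonempty (fun i => κ i 0))
      simp only at hN
      exact ⟨N, fun i hi => le_antisymm (hanti' hi) (by rw [hN]; exact Nat.sInf_le ⟨i, rfl⟩)⟩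
    refine ih ⟨fun i => fun j => κ (N + i) j.succ, fun i a b h => hmono (N+i) (by simpa using h), ?_⟩
    intro a b hab
    have hsum : ∀ i, ∑ j : Fin m, (q : ℚ) ^ (-(κ (N+i) j.succ : ℤ)) =
        (∑ j, (q : ℚ) ^ (-(κ (N+i) j : ℤ))) - (q : ℚ) ^ (-(κ N 0 : ℤ)) := by
      intro i
      rw [Fin.sum_univ_succ, hN (N+i) (Nat.le_add_right N i)]
      ring
    simp only [hsum]
    have := hs (show N + a < N + b by omega)
    simpa using this



lemma isWF (hq : 2 ≤ q) (n : ℕ) : (lubinTateExpSet q n).IsWF := by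
  rw [Set.isWF_iff_no_descending_seq]
  intro f hf hmem
  choose κ hmono hpos hx using hmem
  refine no_strictMono_sum hq (n - 1) ⟨κ, hmono, ?_⟩
  intro a b hab
  have h1 : f a = 1 / ((q:ℚ) - 1) - ∑ j, (q : ℚ) ^ (-(κ a j : ℤ)) := hx a
  have h2 : f b = 1 / ((q:ℚ) - 1) - ∑ j, (q : ℚ) ^ (-(κ b j : ℤ)) := hx b
  have h3 : f b < f a := hf hab
  dsimp only
  linarith

lemma mem_one (hq : 2 ≤ q) (x : ℚ) :
    x ∈ lubinTateExpSet q 1 ↔ x = 1 / ((q : ℚ) - 1) := by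
  constructor
  · rintro ⟨κ, -, -, hx⟩
    simpa using hx
  · rintro rfl
    exact ⟨Fin.elim0, fun a => a.elim0, fun a => a.elim0, by simp⟩




lemma mem_iff (n : ℕ) (x : ℚ) : x ∈ lubinTateExpSet q (n + 1) ↔ ∃ κ : Fin n → ℕ,
    StrictMono κ ∧ (∀ j, 0 < κ j) ∧
    x = 1 / ((q : ℚ) - 1) - ∑ j, (q : ℚ) ^ (-(κ j : ℤ)) := Iff.rfl

lemma pos_of_mem (hq : 2 ≤ q) {n : ℕ} {x : ℚ} (hx : x ∈ lubinTateExpSet q n) : 0 < x := by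
  have hq2 : (2 : ℚ) ≤ (q : ℚ) := by exact_mod_cast hq
  obtain ⟨κ, hmono, hpos, rfl⟩ := hx
  have := geom_bound hq κ hmono 0 (fun j => hpos j)
  simp only [zpow_neg, Nat.cast_zero, zpow_zero] at this ⊢
  linarith [this]

lemma le_one_of_mem (hq : 2 ≤ q) {n : ℕ} {x : ℚ} (hx : x ∈ lubinTateExpSet q n) : x ≤ 1 := by
  have hq2 : (2 : ℚ) ≤ (q : ℚ) := by exact_mod_cast hq
  obtain ⟨κ, hmono, hpos, rfl⟩ := hx
  have h1 : (0:ℚ) ≤ ∑ j, (q : ℚ) ^ (-(κ j : ℤ)) :=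
    Finset.sum_nonneg fun j _ => le_of_lt (zpow_pos (by linarith) _)
  have h2 : 1 / ((q:ℚ) - 1) ≤ 1 := by
    rw [div_le_one (by linarith)]
    linarith
  linarith

lemma disj (hq : 2 ≤ q) {n m : ℕ} (g : ℚ) :
    ¬(g - 1 ∈ lubinTateExpSet q n ∧ g ∈ lubinTateExpSet q m) := by
  rintro ⟨h1, h2⟩
  have := pos_of_mem hq h1
  have := le_one_of_mem hq h2
  linarith

lemma key (hq : 2 ≤ q) (m : ℕ) (g : ℚ) :
    g / q ∈ lubinTateExpSet q (m + 2) ↔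
      (g - 1 ∈ lubinTateExpSet q (m + 2) ∨ g ∈ lubinTateExpSet q (m + 1)) := by
  have hq2 : (2 : ℚ) ≤ (q : ℚ) := by exact_mod_cast hq
  have hq0 : (q : ℚ) ≠ 0 := by linarith
  have hqm : ((q : ℚ) - 1) ≠ 0 := by linarith
  have hu : (q : ℚ) * (1 / ((q : ℚ) - 1)) = 1 / ((q : ℚ) - 1) + 1 := by field_simp; ring
  have hpow : ∀ a : ℕ, 1 ≤ a → (q:ℚ) ^ (-((a - 1 : ℕ) : ℤ)) = (q:ℚ) ^ (-(a : ℤ) + 1) := by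
    intro a ha
    congr 1
    push_cast [Nat.cast_sub ha]
    ring
  have hpow' : ∀ a : ℕ, (q:ℚ) ^ (-((a + 1 : ℕ) : ℤ)) * q = (q:ℚ) ^ (-(a : ℤ)) := by
    intro a
    rw [← zpow_add_one₀ hq0]
    congr 1
    push_cast
    ring
  constructor
  · rw [show m + 2 = (m + 1) + 1 from rfl, mem_iff]
    rintro ⟨κ, hmono, hpos, hx⟩
    have hg : g = (1 / ((q:ℚ) - 1) + 1) - ∑ j, (q : ℚ) ^ (-(κ j : ℤ) + 1) := by
      have hgq : g = (g / q) * q := by field_simp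
      rw [hgq, hx, sub_mul, Finset.sum_mul, mul_comm (1 / ((q:ℚ) - 1)) (q:ℚ), hu]
      congr 1
      exact Finset.sum_congr rfl fun j _ => (zpow_add_one₀ hq0 _).symm
    by_cases hκ0 : κ 0 = 1
    · right
      rw [mem_iff]
      refine ⟨fun j => κ j.succ - 1, ?_, ?_, ?_⟩
      · intro a b hab
        dsimp only
        have h1 := hpos a.succ
        have := hmono (show a.succ < b.succ by simpa using hab)
        omega
      · intro j
        dsimp only
        have := hmono (Fin.succ_pos j)
        rw [hκ0] at this
        omega
      · have hc : ∀ j : Fin m, (q:ℚ) ^ (-((κ j.succ - 1 : ℕ) : ℤ)) =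
            (q:ℚ) ^ (-(κ j.succ : ℤ) + 1) := fun j => hpow _ (hpos j.succ)
        dsimp only
        simp only [hc]
        rw [hg, Fin.sum_univ_succ, hκ0]
        have h0 : (q:ℚ) ^ (-((1:ℕ) : ℤ) + 1) = 1 := by norm_num
        rw [h0]
        ring
    · left
      rw [show m + 2 = (m + 1) + 1 from rfl, mem_iff]
      have hκ02 : 2 ≤ κ 0 := by have := hpos 0; omega
      refine ⟨fun j => κ j - 1, ?_, ?_, ?_⟩
      · intro a b hab
        dsimp only
        have h1 := hpos a
        have := hmono hab
        omega
      · intro j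
        dsimp only
        have : κ 0 ≤ κ j := (hmono.monotone (Fin.zero_le j))
        omega
      · have hc : ∀ j : Fin (m+1), (q:ℚ) ^ (-((κ j - 1 : ℕ) : ℤ)) =
            (q:ℚ) ^ (-(κ j : ℤ) + 1) := fun j => hpow _ (hpos j)
        dsimp only
        simp only [hc]
        rw [hg]
        ring
  · rintro (h | h)
    · rw [show m + 2 = (m + 1) + 1 from rfl, mem_iff] at h ⊢
      obtain ⟨κ, hmono, hpos, hx⟩ := h
      refine ⟨fun j => κ j + 1, fun a b hab => by dsimp only; have := hmono hab; omega,
        fun j => by dsimp only; omega, ?_⟩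
      have hx' : g = 1 + (1 / ((q:ℚ) - 1) - ∑ j, (q : ℚ) ^ (-(κ j : ℤ))) := by
        rw [← hx]; ring
      dsimp only
      rw [div_eq_iff hq0, hx', sub_mul, Finset.sum_mul,
        mul_comm (1 / ((q:ℚ) - 1)) (q:ℚ), hu]
      simp only [hpow']
      ring
    · rw [mem_iff] at h
      rw [show m + 2 = (m + 1) + 1 from rfl, mem_iff]
      obtain ⟨κ, hmono, hpos, hx⟩ := h
      refine ⟨Fin.cons 1 (fun j => κ j + 1), ?_, ?_, ?_⟩
      · intro a b hab
        rcases Fin.eq_zero_or_eq_succ a with rfl | ⟨a', rfl⟩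
        · rcases Fin.eq_zero_or_eq_succ b with rfl | ⟨b', rfl⟩
          · exact absurd hab (lt_irrefl _)
          · simp only [Fin.cons_zero, Fin.cons_succ]
            have := hpos b'
            omega
        · rcases Fin.eq_zero_or_eq_succ b with rfl | ⟨b', rfl⟩
          · exact absurd hab (by simp [Fin.lt_def])
          · simp only [Fin.cons_succ]
            have := hmono (show a' < b' by simpa using hab)
            omega
      · intro j
        rcases Fin.eq_zero_or_eq_succ j with rfl | ⟨j', rfl⟩ <;> simp
      · rw [Fin.sum_univ_succ]
        simp only [Fin.cons_zero, Fin.cons_succ]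
        rw [hx, div_eq_iff hq0, sub_mul, add_mul, Finset.sum_mul,
          mul_comm (1 / ((q:ℚ) - 1)) (q:ℚ), hu]
        simp only [hpow']
        norm_num
        ring


open HahnSeries Pointwise

variable {F : Type*} [Field F]

/-- Iterated sumset: `sumIter W k` is the `(k+1)`-fold sumset of `W`. -/
def sumIter (W : Set ℚ) : ℕ → Set ℚ
  | 0 => W
  | (k+1) => W + sumIter W k

lemma sumIter_isPWO {W : Set ℚ} (hW : W.IsPWO) : ∀ k, (sumIter W k).IsPWO
  | 0 => hW
  | (k+1) => hW.add (sumIter_isPWO hW k)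

lemma pow_support_subset {x : HahnSeries ℚ F} {W : Set ℚ} (hx : x.support ⊆ W) :
    ∀ k, (x ^ (k+1)).support ⊆ sumIter W k
  | 0 => by rw [pow_one]; exact hx
  | (k+1) => by
    rw [pow_succ']
    refine subset_trans HahnSeries.support_mul_subset ?_
    exact Set.add_subset_add hx (pow_support_subset hx k)

lemma mem_sumIter_self {W : Set ℚ} {a : ℚ} (ha : a ∈ W) :
    ∀ k, ((k : ℚ) + 1) * a ∈ sumIter W k
  | 0 => by simpa [sumIter] using ha
  | (k+1) => by
    have : ((k + 1 : ℕ) + 1 : ℚ) * a = a + ((k : ℚ) + 1) * a := by push_cast; ring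
    rw [this]
    exact Set.add_mem_add ha (mem_sumIter_self ha k)

/-- Frobenius for Hahn series over `ℚ`: `(x^q).coeff g = (x.coeff (g/q))^q` for `q = p^e`. -/
lemma pow_coeff (p : ℕ) [Fact p.Prime] [CharP F p] (e : ℕ)
    {q : ℕ} (hq : q = p ^ e) (hq2 : 2 ≤ q) (x : HahnSeries ℚ F) (g : ℚ) :
    (x ^ q).coeff g = (x.coeff (g / q)) ^ q := by
  haveI : CharP (HahnSeries ℚ F) p :=
    charP_of_injective_ringHom (f := (HahnSeries.C : F →+* HahnSeries ℚ F))
      HahnSeries.C_injective p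
  classical
  obtain ⟨q2, hq2'⟩ : ∃ k, q = k + 2 := ⟨q - 2, by omega⟩
  have hqQ : (q : ℚ) ≠ 0 := by
    have : 0 < q := by omega
    exact_mod_cast this.ne'
  set W := x.support with hWdef
  have hW : W.IsPWO := x.isPWO_support
  have hS : (sumIter W q2).IsPWO := sumIter_isPWO hW q2
  set t : Finset ℚ := (Finset.addAntidiagonal hW hS g).image Prod.fst with ht
  set xl : HahnSeries ℚ F := ∑ a ∈ t, HahnSeries.single a (x.coeff a) with hxl
  have hxlc : ∀ b, xl.coeff b = if b ∈ t then x.coeff b else 0 := by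
    intro b
    rw [hxl, ← HahnSeries.coeff.addMonoidHom_apply, map_sum]
    simp only [HahnSeries.coeff.addMonoidHom_apply, HahnSeries.coeff_single]
    by_cases hb : b ∈ t
    · rw [if_pos hb]
      exact (Finset.sum_eq_single_of_mem b hb
        (fun c _ hc => if_neg (fun h => hc h.symm))).trans (if_pos rfl)
    · rw [if_neg hb]
      exact Finset.sum_eq_zero fun c hc => if_neg (fun h => hb (by rw [h]; exact hc))
  set xh : HahnSeries ℚ F := x - xl with hxh
  have hxhc : ∀ b, xh.coeff b = if b ∈ t then 0 else x.coeff b := by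
    intro b
    rw [hxh, HahnSeries.coeff_sub, hxlc b]
    by_cases hb : b ∈ t <;> simp [hb]
  have hsplit : x ^ q = xl ^ q + xh ^ q := by
    have hx' : x = xl + xh := by rw [hxh]; ring
    rw [hx', hq, add_pow_char_pow]
  have hsubW : xh.support ⊆ W \ ↑t := by
    intro b hb
    rw [HahnSeries.mem_support, hxhc b] at hb
    by_cases hbt : b ∈ t
    · simp [hbt] at hb
    · simp only [hbt, if_false] at hb
      exact ⟨hb, hbt⟩
  -- the high part does not contribute at `g`
  have hhigh : (xh ^ q).coeff g = 0 := by
    by_contra hne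
    have hgsupp : g ∈ (xh * xh ^ (q2 + 1)).support := by
      rw [show xh * xh ^ (q2 + 1) = xh ^ q by rw [hq2', ← pow_succ']]
      exact hne
    obtain ⟨a, ha, b, hb, hab⟩ := HahnSeries.support_mul_subset hgsupp
    have haWt : a ∈ W \ ↑t := hsubW ha
    have hbS : b ∈ sumIter W q2 :=
      pow_support_subset (fun c hc => (hsubW hc).1) q2 hb
    have : a ∈ t := by
      rw [ht]
      exact Finset.mem_image.2 ⟨(a, b), Finset.mem_addAntidiagonal.2 ⟨haWt.1, hbS, hab⟩, rfl⟩
    exact haWt.2 this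
  -- the low part
  have hlow : (xl ^ q).coeff g = if g / q ∈ t then (x.coeff (g / q)) ^ q else 0 := by
    have h1 : xl ^ q = ∑ a ∈ t, HahnSeries.single ((q : ℕ) • a) ((x.coeff a) ^ q) := by
      rw [hxl, hq, sum_pow_char_pow]
      exact Finset.sum_congr rfl fun a _ => by rw [← hq, HahnSeries.single_pow]
    rw [h1, ← HahnSeries.coeff.addMonoidHom_apply, map_sum]
    simp only [HahnSeries.coeff.addMonoidHom_apply, HahnSeries.coeff_single]
    have hcond : ∀ a : ℚ, (g = (q : ℕ) • a) ↔ (a = g / q) := by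
      intro a
      rw [nsmul_eq_mul, eq_div_iff hqQ, mul_comm, eq_comm]
    simp only [hcond]
    exact Finset.sum_ite_eq' t (g / q) (fun a => (x.coeff a) ^ q)
  rw [hsplit, HahnSeries.coeff_add, hhigh, add_zero, hlow]
  by_cases hgt : g / q ∈ t
  · rw [if_pos hgt]
  · rw [if_neg hgt]
    have hzero : x.coeff (g / q) = 0 := by
      by_contra hne
      have hmem : g / q ∈ W := hne
      have hpair : ((q2 : ℚ) + 1) * (g / q) ∈ sumIter W q2 := mem_sumIter_self hmem q2
      have hsum : g / q + ((q2 : ℚ) + 1) * (g / q) = g := by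
        have hcast : ((q : ℚ)) = (q2 : ℚ) + 2 := by exact_mod_cast hq2'
        have h1 : g / q + ((q2 : ℚ) + 1) * (g / q) = ((q2 : ℚ) + 2) * (g / q) := by ring
        rw [h1, ← hcast, mul_comm, div_mul_cancel₀ g hqQ]
      have : g / q ∈ t := by
        rw [ht]
        exact Finset.mem_image.2 ⟨(g / q, ((q2 : ℚ) + 1) * (g / q)),
          Finset.mem_addAntidiagonal.2 ⟨hmem, hpair, hsum⟩, rfl⟩
      exact hgt this
    rw [hzero, zero_pow (by omega : q ≠ 0)]

end LubinTateAux

open LubinTateAux in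
/-- Let `F` be a field of characteristic `p` and `q = p^e`, `e ≥ 1`. Then (a) each `A_n`
(`n ≥ 1`) is well-ordered, so the Hahn series `y_n` with coefficient `1` exactly on `A_n` is
well defined; (b) `y_1^q = T·y_1`; and (c) for `n ≥ 2`, `y_n^q - T·y_n = y_{n-1}`,
where `T = single 1 1`. -/
theorem lubinTate_hahnSeries_roots (p : ℕ) [Fact p.Prime] (F : Type*) [Field F] [CharP F p]
    (e : ℕ) (he : 1 ≤ e) (q : ℕ) (hq : q = p ^ e) :
    (∀ n : ℕ, 1 ≤ n → (lubinTateExpSet q n).IsWF) ∧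
    ∀ y : ℕ → HahnSeries ℚ F,
      (∀ n : ℕ, (y n).coeff = Set.indicator (lubinTateExpSet q n) fun _ => (1 : F)) →
      (y 1) ^ q = HahnSeries.single (1 : ℚ) 1 * y 1 ∧
      ∀ n : ℕ, 2 ≤ n →
        (y n) ^ q - HahnSeries.single (1 : ℚ) 1 * y n = y (n - 1) := by
  have hp2 : 2 ≤ p := (Fact.out : p.Prime).two_le
  have hq2 : 2 ≤ q := by
    have h1 : 1 < p ^ e := Nat.one_lt_pow (by omega) (by omega)
    omega
  have hqQ : (q : ℚ) ≠ 0 := by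
    have : 0 < q := by omega
    exact_mod_cast this.ne'
  have hq2Q : (2 : ℚ) ≤ (q : ℚ) := by exact_mod_cast hq2
  refine ⟨fun n _ => isWF hq2 n, fun y hy => ?_⟩
  have coeffpow : ∀ n (g : ℚ), ((y n) ^ q).coeff g =
      Set.indicator (lubinTateExpSet q n) (fun _ => (1 : F)) (g / q) := by
    intro n g
    rw [pow_coeff p e hq hq2 (y n) g, hy n]
    by_cases h : g / q ∈ lubinTateExpSet q n
    · rw [Set.indicator_of_mem h]
      exact one_pow q
    · rw [Set.indicator_of_notMem h]
      exact zero_pow (by omega : q ≠ 0)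
  have hsingle : ∀ (z : HahnSeries ℚ F) (g : ℚ),
      (HahnSeries.single (1 : ℚ) (1 : F) * z).coeff g = z.coeff (g - 1) := by
    intro z g
    have hg : g = (g - 1) + 1 := by ring
    conv_lhs => rw [hg]
    rw [HahnSeries.coeff_single_mul_add, one_mul]
  constructor
  · ext g
    rw [coeffpow 1 g, hsingle (y 1) g, hy 1]
    have hiff : g / q ∈ lubinTateExpSet q 1 ↔ g - 1 ∈ lubinTateExpSet q 1 := by
      rw [mem_one hq2, mem_one hq2, div_eq_iff hqQ]
      have hu : 1 / ((q : ℚ) - 1) * q = 1 / ((q : ℚ) - 1) + 1 := by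
        have h0 : (q : ℚ) - 1 ≠ 0 := by linarith
        field_simp
        ring
      constructor
      · intro h
        rw [h, hu]
        ring
      · intro h
        have hg : g = 1 / ((q : ℚ) - 1) + 1 := by linarith
        rw [hg, hu]
    by_cases h : g - 1 ∈ lubinTateExpSet q 1
    · rw [Set.indicator_of_mem (hiff.2 h), Set.indicator_of_mem h]
    · rw [Set.indicator_of_notMem (fun hc => h (hiff.1 hc)), Set.indicator_of_notMem h]
  · intro n hn
    obtain ⟨m, rfl⟩ : ∃ m, n = m + 2 := ⟨n - 2, by omega⟩
    ext g
    rw [HahnSeries.coeff_sub, coeffpow (m + 2) g, hsingle (y (m + 2)) g, hy (m + 2)]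
    have hidx : m + 2 - 1 = m + 1 := rfl
    rw [hidx, hy (m + 1)]
    by_cases h1 : g - 1 ∈ lubinTateExpSet q (m + 2) <;>
      by_cases h2 : g ∈ lubinTateExpSet q (m + 1)
    · exact absurd ⟨h1, h2⟩ (disj hq2 g)
    · rw [Set.indicator_of_mem ((key hq2 m g).2 (Or.inl h1)), Set.indicator_of_mem h1,
        Set.indicator_of_notMem h2]
      ring
    · rw [Set.indicator_of_mem ((key hq2 m g).2 (Or.inr h2)), Set.indicator_of_notMem h1,
        Set.indicator_of_mem h2]
      ring
    · have : g / q ∉ lubinTateExpSet q (m + 2) := fun hc =>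
        ((key hq2 m g).1 hc).elim h1 h2
      rw [Set.indicator_of_notMem this, Set.indicator_of_notMem h1,
        Set.indicator_of_notMem h2]
      ring

end
end
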